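/- arXiv:2103.11992 — 6 statements merged into one kernel-verified Lean document; each statement's English description precedes it below -/
import Mathlib

section
/- Let F be a countable family of countable (infinite) simple graphs. Then the Factorization Problem FP(F, R) for the Rado graph R has a solution if and only if every graph in F has infinite domination number (equivalently, no graph in F has a finite dominating set). -/
/-- The Rado graph on `ℕ`: for `i < j`, `i` and `j` are adjacent iff the `i`-th bit
of the binary representation of `j` is `1`. -/
def Rado : SimpleGraph ℕ :=
  SimpleGraph.fromRel (fun i j => i < j ∧ Nat.testBit j i)

/-- A set `D` of vertices is dominating if every vertex not in `D` is adjacent to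
some vertex of `D`. -/
def IsDominatingSet {V : Type*} (F : SimpleGraph V) (D : Set V) : Prop :=
  ∀ v ∉ D, ∃ d ∈ D, F.Adj v d

/-- An indexed family `G` of graphs is a factorization of `Λ`: each `G a` is a
(spanning) subgraph of `Λ` and the edge sets of the `G a` partition the edge set
of `Λ`. -/
def IsFactorization {A V : Type*} (Λ : SimpleGraph V) (G : A → SimpleGraph V) : Prop :=
  (∀ a, G a ≤ Λ) ∧ ∀ e ∈ Λ.edgeSet, ∃! a, e ∈ (G a).edgeSet

lemma rado_adj_of (a w : ℕ) (h1 : a < w) (h2 : Nat.testBit w a = true) : Rado.Adj w a := by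
  rw [Rado, SimpleGraph.fromRel_adj]
  exact ⟨(Nat.ne_of_lt h1).symm, Or.inr ⟨h1, h2⟩⟩

lemma not_rado_adj (w d : ℕ) (h1 : d < w) (h2 : Nat.testBit w d = false) : ¬ Rado.Adj w d := by
  rw [Rado, SimpleGraph.fromRel_adj]
  rintro ⟨hne, h | h⟩
  · omega
  · rw [h2] at h; exact absurd h.2 (by simp)

instance : Std.Commutative (fun a b : ℕ => a ||| b) := ⟨Nat.lor_comm⟩
instance : Std.Associative (fun a b : ℕ => a ||| b) := ⟨Nat.lor_assoc⟩

noncomputable def orSum (S : Finset ℕ) : ℕ := S.fold (fun a b : ℕ => a ||| b) 0 (2 ^ ·)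

lemma testBit_orSum (S : Finset ℕ) (i : ℕ) : Nat.testBit (orSum S) i = true ↔ i ∈ S := by
  classical
  induction S using Finset.induction with
  | empty => simp [orSum, Nat.zero_testBit]
  | @insert j s hj ih =>
    rw [orSum, Finset.fold_insert hj]
    rw [Nat.testBit_lor]
    simp only [Bool.or_eq_true, Nat.testBit_two_pow]
    rw [Finset.mem_insert]
    constructor
    · rintro (h | h)
      · left; exact (of_decide_eq_true h).symm
      · right; exact (ih).mp h
    · rintro (h | h)
      · left; exact decide_eq_true h.symm
      · right; exact ih.mpr h

lemma le_orSum {S : Finset ℕ} {i : ℕ} (h : i ∈ S) : 2 ^ i ≤ orSum S := by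
  by_contra hlt
  push_neg at hlt
  have := Nat.testBit_eq_false_of_lt hlt
  rw [(testBit_orSum S i).mpr h] at this
  simp at this

/-- Positive extension: fresh vertex adjacent to everything in `A`, avoiding `S`. -/
lemma rado_ext (A S : Finset ℕ) : ∃ w, w ∉ S ∧ ∀ a ∈ A, Rado.Adj w a := by
  classical
  set N := (A ∪ S).sup id + 1 with hN
  refine ⟨orSum (insert N A), ?_, ?_⟩
  · intro hw
    have h1 : 2 ^ N ≤ orSum (insert N A) := le_orSum (Finset.mem_insert_self _ _)
    have h2 : orSum (insert N A) ≤ (A ∪ S).sup id :=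
      Finset.le_sup (f := id) (Finset.mem_union_right _ hw)
    have := Nat.lt_two_pow_self (n := N)
    omega
  · intro a ha
    have haN : a ≤ (A ∪ S).sup id := Finset.le_sup (f := id) (Finset.mem_union_left _ ha)
    have h1 : 2 ^ N ≤ orSum (insert N A) := le_orSum (Finset.mem_insert_self _ _)
    have h2 : a < orSum (insert N A) := by
      have := Nat.lt_two_pow_self (n := N)
      omega
    exact rado_adj_of a _ h2 ((testBit_orSum _ a).mpr (Finset.mem_insert_of_mem ha))

section Construction

variable (F : ℕ → SimpleGraph ℕ)

/-- A finite partial state of the construction: `p n` is the graph of a finite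
partial injection from vertices of `F n` to vertices of the Rado graph. -/
structure PState where
  p : ℕ → Finset (ℕ × ℕ)
  act : Finset ℕ
  hact : ∀ n, p n ≠ ∅ → n ∈ act
  fn : ∀ n x a b, (x, a) ∈ p n → (x, b) ∈ p n → a = b
  inj : ∀ n x y a, (x, a) ∈ p n → (y, a) ∈ p n → x = y
  edge : ∀ n x y a b, (x, a) ∈ p n → (y, b) ∈ p n → (F n).Adj x y → Rado.Adj a b
  cross : ∀ n m x y a b x' y' a' b', (x, a) ∈ p n → (y, b) ∈ p n → (F n).Adj x y →
    (x', a') ∈ p m → (y', b') ∈ p m → (F m).Adj x' y' →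
    s(a, b) = s(a', b') → n = m

variable {F}

/-- The set of Rado-vertices already used as images. -/
noncomputable def PState.used (S : PState F) : Finset ℕ :=
  S.act.biUnion (fun n => (S.p n).image Prod.snd)

lemma PState.mem_used (S : PState F) {n x a : ℕ} (h : (x, a) ∈ S.p n) : a ∈ S.used := by
  refine Finset.mem_biUnion.mpr ⟨n, S.hact n ?_, Finset.mem_image.mpr ⟨(x, a), h, rfl⟩⟩
  intro he; rw [he] at h; exact absurd h (Finset.notMem_empty _)

lemma stepA (S : PState F) (n v : ℕ) :
    ∃ T : PState F, (∀ m, S.p m ⊆ T.p m) ∧ ∃ a, (v, a) ∈ T.p n := by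
  classical
  by_cases h : ∃ a, (v, a) ∈ S.p n
  · exact ⟨S, fun m => Finset.Subset.refl _, h⟩
  push_neg at h
  obtain ⟨w, hwS, hwA⟩ :=
    rado_ext (((S.p n).filter (fun q => (F n).Adj v q.1)).image Prod.snd) S.used
  have hwfresh : ∀ m x, (x, w) ∉ S.p m := fun m x hx => hwS (S.mem_used hx)
  have hwadj : ∀ u b, (u, b) ∈ S.p n → (F n).Adj v u → Rado.Adj w b := by
    intro u b hu hadj
    exact hwA b (Finset.mem_image.mpr ⟨(u, b), Finset.mem_filter.mpr ⟨hu, hadj⟩, rfl⟩)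
  -- the new state
  have hmem : ∀ m (q : ℕ × ℕ),
      q ∈ (fun m => if m = n then insert (v, w) (S.p n) else S.p m) m ↔
        (m = n ∧ q = (v, w)) ∨ q ∈ S.p m := by
    intro m q
    by_cases hm : m = n <;> subst_eqs <;> simp_all [Finset.mem_insert]
  refine ⟨⟨fun m => if m = n then insert (v, w) (S.p n) else S.p m,
      insert n S.act, ?_, ?_, ?_, ?_, ?_⟩, ?_, ?_⟩
  · intro m hne
    by_cases hm : m = n
    · exact hm ▸ Finset.mem_insert_self _ _
    · simp only [if_neg hm] at hne
      exact Finset.mem_insert_of_mem (S.hact m hne)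
  · intro m x a b ha hb
    rw [hmem] at ha hb
    rcases ha with ⟨hm, ha⟩ | ha <;> rcases hb with ⟨hm', hb⟩ | hb
    · cases ha; cases hb; rfl
    · cases ha; cases hm; exact absurd hb (h b)
    · cases hb; cases hm'; exact absurd ha (h a)
    · exact S.fn m x a b ha hb
  · intro m x y a ha hb
    rw [hmem] at ha hb
    rcases ha with ⟨hm, ha⟩ | ha <;> rcases hb with ⟨hm', hb⟩ | hb
    · cases ha; cases hb; rfl
    · cases ha; exact absurd hb (hwfresh m y)
    · cases hb; exact absurd ha (hwfresh m x)
    · exact S.inj m x y a ha hb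
  · intro m x y a b ha hb hadj
    rw [hmem] at ha hb
    rcases ha with ⟨hm, ha⟩ | ha <;> rcases hb with ⟨hm', hb⟩ | hb
    · cases ha; cases hb; exact absurd hadj (F m).irrefl
    · cases ha; cases hm; exact hwadj y b hb hadj
    · cases hb; cases hm'; exact (hwadj x a ha hadj.symm).symm
    · exact S.edge m x y a b ha hb hadj
  · intro m m' x y a b x' y' a' b' ha hb hadj ha' hb' hadj' he
    rw [hmem] at ha hb ha' hb'
    -- if either pair on side m' is new, then m' = n; similarly m.
    have key : ∀ (k : ℕ) (x y a b : ℕ),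
        ((k = n ∧ (x, a) = (v, w)) ∨ (x, a) ∈ S.p k) →
        ((k = n ∧ (y, b) = (v, w)) ∨ (y, b) ∈ S.p k) → (F k).Adj x y →
        ((x, a) ∈ S.p k ∧ (y, b) ∈ S.p k) ∨ (k = n ∧ (a = w ∨ b = w)) := by
      rintro k x y a b (⟨hk, hx⟩ | hx) (⟨hk', hy⟩ | hy) hadj
      · cases hx; cases hy; exact absurd hadj (F k).irrefl
      · cases hx; exact Or.inr ⟨hk, Or.inl rfl⟩
      · cases hy; exact Or.inr ⟨hk', Or.inr rfl⟩
      · exact Or.inl ⟨hx, hy⟩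
    have husede : ∀ (k : ℕ) (x y a b : ℕ), (x, a) ∈ S.p k → (y, b) ∈ S.p k →
        w ∉ s(a, b) := by
      intro k x y a b hx hy hw
      rcases Sym2.mem_iff.mp hw with rfl | rfl
      · exact absurd hx (hwfresh k x)
      · exact absurd hy (hwfresh k y)
    rcases key m x y a b ha hb hadj with ⟨ha, hb⟩ | ⟨hm, hw1⟩ <;>
      rcases key m' x' y' a' b' ha' hb' hadj' with ⟨ha', hb'⟩ | ⟨hm', hw2⟩
    · exact S.cross m m' x y a b x' y' a' b' ha hb hadj ha' hb' hadj' he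
    · exfalso
      apply husede m x y a b ha hb
      rw [he]
      rcases hw2 with rfl | rfl
      · exact Sym2.mem_mk_left _ _
      · exact Sym2.mem_mk_right _ _
    · exfalso
      apply husede m' x' y' a' b' ha' hb'
      rw [← he]
      rcases hw1 with rfl | rfl
      · exact Sym2.mem_mk_left _ _
      · exact Sym2.mem_mk_right _ _
    · rw [hm, hm']
  · intro m q hq
    rw [hmem]
    exact Or.inr hq
  · exact ⟨w, by rw [hmem]; exact Or.inl ⟨rfl, rfl⟩⟩


lemma stepB (S : PState F)
    (hdom : ∀ n (D : Finset ℕ), ∃ v, v ∉ D ∧ ∀ d ∈ D, ¬(F n).Adj v d)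
    (n w : ℕ) :
    ∃ T : PState F, (∀ m, S.p m ⊆ T.p m) ∧ ∃ x, (x, w) ∈ T.p n := by
  classical
  by_cases h : ∃ x, (x, w) ∈ S.p n
  · exact ⟨S, fun m => Finset.Subset.refl _, h⟩
  push_neg at h
  obtain ⟨v, hvD, hvadj⟩ := hdom n ((S.p n).image Prod.fst)
  have hv : ∀ a, (v, a) ∉ S.p n := by
    intro a ha
    exact hvD (Finset.mem_image.mpr ⟨(v, a), ha, rfl⟩)
  have hvnadj : ∀ u b, (u, b) ∈ S.p n → ¬(F n).Adj v u := by
    intro u b hu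
    exact hvadj u (Finset.mem_image.mpr ⟨(u, b), hu, rfl⟩)
  have hmem : ∀ m (q : ℕ × ℕ),
      q ∈ (fun m => if m = n then insert (v, w) (S.p n) else S.p m) m ↔
        (m = n ∧ q = (v, w)) ∨ q ∈ S.p m := by
    intro m q
    by_cases hm : m = n <;> subst_eqs <;> simp_all [Finset.mem_insert]
  -- in the new state, no new "assigned" pairs appear at all
  have key : ∀ (k : ℕ) (x y a b : ℕ),
      ((k = n ∧ (x, a) = (v, w)) ∨ (x, a) ∈ S.p k) →
      ((k = n ∧ (y, b) = (v, w)) ∨ (y, b) ∈ S.p k) → (F k).Adj x y →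
      (x, a) ∈ S.p k ∧ (y, b) ∈ S.p k := by
    rintro k x y a b (⟨hk, hx⟩ | hx) (⟨hk', hy⟩ | hy) hadj
    · cases hx; cases hy; exact absurd hadj (F k).irrefl
    · cases hx; cases hk; exact absurd hadj (hvnadj y b hy)
    · cases hy; cases hk'; exact absurd hadj.symm (hvnadj x a hx)
    · exact ⟨hx, hy⟩
  refine ⟨⟨fun m => if m = n then insert (v, w) (S.p n) else S.p m,
      insert n S.act, ?_, ?_, ?_, ?_, ?_⟩, ?_, ?_⟩
  · intro m hne
    by_cases hm : m = n
    · exact hm ▸ Finset.mem_insert_self _ _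
    · simp only [if_neg hm] at hne
      exact Finset.mem_insert_of_mem (S.hact m hne)
  · intro m x a b ha hb
    rw [hmem] at ha hb
    rcases ha with ⟨hm, ha⟩ | ha <;> rcases hb with ⟨hm', hb⟩ | hb
    · cases ha; cases hb; rfl
    · cases ha; cases hm; exact absurd hb (hv b)
    · cases hb; cases hm'; exact absurd ha (hv a)
    · exact S.fn m x a b ha hb
  · intro m x y a ha hb
    rw [hmem] at ha hb
    rcases ha with ⟨hm, ha⟩ | ha <;> rcases hb with ⟨hm', hb⟩ | hb
    · cases ha; cases hb; rfl
    · cases ha; cases hm; exact absurd hb (h y)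
    · cases hb; cases hm'; exact absurd ha (h x)
    · exact S.inj m x y a ha hb
  · intro m x y a b ha hb hadj
    rw [hmem] at ha hb
    obtain ⟨ha, hb⟩ := key m x y a b ha hb hadj
    exact S.edge m x y a b ha hb hadj
  · intro m m' x y a b x' y' a' b' ha hb hadj ha' hb' hadj' he
    rw [hmem] at ha hb ha' hb'
    obtain ⟨ha, hb⟩ := key m x y a b ha hb hadj
    obtain ⟨ha', hb'⟩ := key m' x' y' a' b' ha' hb' hadj'
    exact S.cross m m' x y a b x' y' a' b' ha hb hadj ha' hb' hadj' he
  · intro m q hq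
    rw [hmem]
    exact Or.inr hq
  · exact ⟨v, by rw [hmem]; exact Or.inl ⟨rfl, rfl⟩⟩

lemma stepC (S : PState F)
    (hne : ∀ n, ∃ x y, (F n).Adj x y)
    (a b : ℕ) (hab : Rado.Adj a b) :
    ∃ T : PState F, (∀ m, S.p m ⊆ T.p m) ∧
      ∃ n x y, (F n).Adj x y ∧ (x, a) ∈ T.p n ∧ (y, b) ∈ T.p n := by
  classical
  by_cases h : ∃ n x y c d, (x, c) ∈ S.p n ∧ (y, d) ∈ S.p n ∧ (F n).Adj x y ∧
      s(a, b) = s(c, d)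
  · obtain ⟨n, x, y, c, d, hx, hy, hadj, he⟩ := h
    rcases Sym2.eq_iff.mp he with ⟨rfl, rfl⟩ | ⟨rfl, rfl⟩
    · exact ⟨S, fun m => Finset.Subset.refl _, n, x, y, hadj, hx, hy⟩
    · exact ⟨S, fun m => Finset.Subset.refl _, n, y, x, hadj.symm, hy, hx⟩
  push_neg at h
  obtain ⟨n, hn⟩ := Infinite.exists_notMem_finset S.act
  have hpn : S.p n = ∅ := by
    by_contra hne'
    exact hn (S.hact n hne')
  obtain ⟨x, y, hxy⟩ := hne n
  have hxyne : x ≠ y := hxy.ne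
  have habne : a ≠ b := hab.ne
  have hmem : ∀ m (q : ℕ × ℕ),
      q ∈ (fun m => if m = n then {(x, a), (y, b)} else S.p m) m ↔
        (m = n ∧ (q = (x, a) ∨ q = (y, b))) ∨ q ∈ S.p m := by
    intro m q
    by_cases hm : m = n <;> subst_eqs <;> simp_all [Finset.mem_insert]
  refine ⟨⟨fun m => if m = n then {(x, a), (y, b)} else S.p m,
      insert n S.act, ?_, ?_, ?_, ?_, ?_⟩, ?_, ?_⟩
  · intro m hne'
    by_cases hm : m = n
    · exact hm ▸ Finset.mem_insert_self _ _
    · simp only [if_neg hm] at hne'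
      exact Finset.mem_insert_of_mem (S.hact m hne')
  · intro m z c d hc hd
    rw [hmem] at hc hd
    have hSn : ∀ (q : ℕ × ℕ), q ∈ S.p n → False := by
      intro q hq; rw [hpn] at hq; exact Finset.notMem_empty _ hq
    rcases hc with ⟨hm, hc | hc⟩ | hc <;> rcases hd with ⟨hm', hd | hd⟩ | hd <;>
      subst_eqs <;> first
        | rfl
        | (exfalso; first | exact hSn _ hc | exact hSn _ hd | exact hxyne rfl)
        | exact S.fn m z c d hc hd
  · intro m z z' c hc hd
    rw [hmem] at hc hd
    have hSn : ∀ (q : ℕ × ℕ), q ∈ S.p n → False := by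
      intro q hq; rw [hpn] at hq; exact Finset.notMem_empty _ hq
    rcases hc with ⟨hm, hc | hc⟩ | hc <;> rcases hd with ⟨hm', hd | hd⟩ | hd <;>
      subst_eqs <;> first
        | rfl
        | (exfalso; first | exact hSn _ hc | exact hSn _ hd | exact habne rfl)
        | exact S.inj m z z' c hc hd
  · intro m z z' c d hc hd hadj
    rw [hmem] at hc hd
    have hSn : ∀ (q : ℕ × ℕ), q ∈ S.p n → False := by
      intro q hq; rw [hpn] at hq; exact Finset.notMem_empty _ hq
    rcases hc with ⟨hm, hc | hc⟩ | hc <;> rcases hd with ⟨hm', hd | hd⟩ | hd <;>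
      subst_eqs <;> first
        | exact absurd hadj (F _).irrefl
        | exact hab
        | exact hab.symm
        | (exfalso; first | exact hSn _ hc | exact hSn _ hd)
        | exact S.edge m z z' c d hc hd hadj
  · intro m m' z y' c d z' y'' c' d' hc hd hadj hc' hd' hadj' he
    rw [hmem] at hc hd hc' hd'
    have hSn : ∀ (q : ℕ × ℕ), q ∈ S.p n → False := by
      intro q hq; rw [hpn] at hq; exact Finset.notMem_empty _ hq
    have key : ∀ (k : ℕ) (z u c d : ℕ),
        ((k = n ∧ ((z, c) = (x, a) ∨ (z, c) = (y, b))) ∨ (z, c) ∈ S.p k) →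
        ((k = n ∧ ((u, d) = (x, a) ∨ (u, d) = (y, b))) ∨ (u, d) ∈ S.p k) →
        (F k).Adj z u →
        ((z, c) ∈ S.p k ∧ (u, d) ∈ S.p k) ∨ (k = n ∧ s(c, d) = s(a, b)) := by
      rintro k z u c d (⟨hk, hc | hc⟩ | hc) (⟨hk', hd | hd⟩ | hd) hadj <;>
        subst_eqs <;> first
          | exact absurd hadj (F _).irrefl
          | exact Or.inr ⟨rfl, rfl⟩
          | exact Or.inr ⟨rfl, Sym2.eq_swap⟩
          | (exfalso; first | exact hSn _ hc | exact hSn _ hd)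
          | exact Or.inl ⟨hc, hd⟩
    rcases key m z y' c d hc hd hadj with ⟨hc, hd⟩ | ⟨hm, hse⟩ <;>
      rcases key m' z' y'' c' d' hc' hd' hadj' with ⟨hc', hd'⟩ | ⟨hm', hse'⟩
    · exact S.cross m m' z y' c d z' y'' c' d' hc hd hadj hc' hd' hadj' he
    · exfalso
      exact h m z y' c d hc hd hadj (by rw [← hse', ← he])
    · exfalso
      exact h m' z' y'' c' d' hc' hd' hadj' (by rw [← hse, he])
    · rw [hm, hm']
  · intro m q hq
    rw [hmem]
    exact Or.inr hq
  · refine ⟨n, x, y, hxy, ?_, ?_⟩ <;> rw [hmem]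
    · exact Or.inl ⟨rfl, Or.inl rfl⟩
    · exact Or.inl ⟨rfl, Or.inr rfl⟩


lemma stepC' (S : PState F)
    (hne : ∀ n, ∃ x y, (F n).Adj x y) (a b : ℕ) :
    ∃ T : PState F, (∀ m, S.p m ⊆ T.p m) ∧ (Rado.Adj a b →
      ∃ n x y, (F n).Adj x y ∧ (x, a) ∈ T.p n ∧ (y, b) ∈ T.p n) := by
  by_cases hab : Rado.Adj a b
  · obtain ⟨T, h1, h2⟩ := stepC S hne a b hab
    exact ⟨T, h1, fun _ => h2⟩
  · exact ⟨S, fun m => Finset.Subset.refl _, fun h => absurd h hab⟩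


variable (F) in
noncomputable def initState : PState F where
  p := fun _ => ∅
  act := ∅
  hact := by intro n h; exact absurd rfl h
  fn := by intro n x a b h; exact absurd h (Finset.notMem_empty _)
  inj := by intro n x y a h; exact absurd h (Finset.notMem_empty _)
  edge := by intro n x y a b h; exact absurd h (Finset.notMem_empty _)
  cross := by intro n m x y a b x' y' a' b' h; exact absurd h (Finset.notMem_empty _)

variable (hdom : ∀ n (D : Finset ℕ), ∃ v, v ∉ D ∧ ∀ d ∈ D, ¬(F n).Adj v d)
variable (hne : ∀ n, ∃ x y, (F n).Adj x y)

noncomputable def stepFun (k : ℕ) (S : PState F) : PState F :=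
  let i := (Nat.unpair (k / 3)).1
  let j := (Nat.unpair (k / 3)).2
  if k % 3 = 0 then (stepA S i j).choose
  else if k % 3 = 1 then (stepB S hdom i j).choose
  else (stepC' S hne i j).choose

noncomputable def states : ℕ → PState F :=
  fun k => Nat.rec (initState F) (fun k S => stepFun hdom hne k S) k

lemma states_succ (k : ℕ) :
    states hdom hne (k + 1) = stepFun hdom hne k (states hdom hne k) := rfl

lemma states_mono_succ (k : ℕ) (m : ℕ) :
    (states hdom hne k).p m ⊆ (states hdom hne (k + 1)).p m := by
  rw [states_succ, stepFun]
  set S := states hdom hne k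
  by_cases h0 : k % 3 = 0
  · simp only [h0, if_pos rfl]
    exact (stepA S _ _).choose_spec.1 m
  · by_cases h1 : k % 3 = 1
    · simp only [h0, h1, if_neg, if_pos rfl, ite_false]
      exact (stepB S hdom _ _).choose_spec.1 m
    · simp only [h0, h1, ite_false]
      exact (stepC' S hne _ _).choose_spec.1 m

lemma states_mono {k l : ℕ} (h : k ≤ l) (m : ℕ) :
    (states hdom hne k).p m ⊆ (states hdom hne l).p m := by
  induction l with
  | zero => cases Nat.le_zero.mp h; exact Finset.Subset.refl _
  | succ l ih =>
    rcases Nat.lt_or_ge k (l + 1) with hl | hl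
    · exact (ih (Nat.lt_succ_iff.mp hl)).trans (states_mono_succ hdom hne l m)
    · cases Nat.le_antisymm h hl; exact Finset.Subset.refl _

/-- The limit partial map. -/
def Pinf (n v a : ℕ) : Prop := ∃ k, (v, a) ∈ (states hdom hne k).p n

lemma achA (n v : ℕ) : ∃ a, Pinf hdom hne n v a := by
  set k := 3 * Nat.pair n v with hk
  have h0 : k % 3 = 0 := by omega
  have h3 : k / 3 = Nat.pair n v := by omega
  have := states_succ hdom hne k
  rw [stepFun] at this
  simp only [h0, if_pos rfl, h3, Nat.unpair_pair] at this
  obtain ⟨a, ha⟩ := (stepA (states hdom hne k) n v).choose_spec.2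
  exact ⟨a, k + 1, by rw [this]; exact ha⟩

lemma achB (n w : ℕ) : ∃ x, Pinf hdom hne n x w := by
  set k := 3 * Nat.pair n w + 1 with hk
  have h0 : k % 3 = 1 := by omega
  have h0' : ¬ k % 3 = 0 := by omega
  have h3 : k / 3 = Nat.pair n w := by omega
  have := states_succ hdom hne k
  rw [stepFun] at this
  simp only [h0, h0', if_pos rfl, if_neg, ite_false, h3, Nat.unpair_pair] at this
  obtain ⟨x, hx⟩ := (stepB (states hdom hne k) hdom n w).choose_spec.2
  exact ⟨x, k + 1, by rw [this]; exact hx⟩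

lemma achC (a b : ℕ) (hab : Rado.Adj a b) :
    ∃ n x y, (F n).Adj x y ∧ Pinf hdom hne n x a ∧ Pinf hdom hne n y b := by
  set k := 3 * Nat.pair a b + 2 with hk
  have h0 : k % 3 = 2 := by omega
  have h0' : ¬ k % 3 = 0 := by omega
  have h1' : ¬ k % 3 = 1 := by omega
  have h3 : k / 3 = Nat.pair a b := by omega
  have := states_succ hdom hne k
  rw [stepFun] at this
  simp only [h0', h1', ite_false] at this
  rw [h3, Nat.unpair_pair] at this
  obtain ⟨n, x, y, hadj, hx, hy⟩ :=
    (stepC' (states hdom hne k) hne a b).choose_spec.2 hab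
  exact ⟨n, x, y, hadj, ⟨k + 1, by rw [this]; exact hx⟩, ⟨k + 1, by rw [this]; exact hy⟩⟩

lemma pinf_fn {n v a b : ℕ} (ha : Pinf hdom hne n v a) (hb : Pinf hdom hne n v b) : a = b := by
  obtain ⟨k, hk⟩ := ha
  obtain ⟨l, hl⟩ := hb
  exact (states hdom hne (max k l)).fn n v a b
    (states_mono hdom hne (le_max_left k l) n hk)
    (states_mono hdom hne (le_max_right k l) n hl)

lemma pinf_inj {n x y a : ℕ} (ha : Pinf hdom hne n x a) (hb : Pinf hdom hne n y a) : x = y := by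
  obtain ⟨k, hk⟩ := ha
  obtain ⟨l, hl⟩ := hb
  exact (states hdom hne (max k l)).inj n x y a
    (states_mono hdom hne (le_max_left k l) n hk)
    (states_mono hdom hne (le_max_right k l) n hl)

lemma pinf_edge {n x y a b : ℕ} (ha : Pinf hdom hne n x a) (hb : Pinf hdom hne n y b)
    (hadj : (F n).Adj x y) : Rado.Adj a b := by
  obtain ⟨k, hk⟩ := ha
  obtain ⟨l, hl⟩ := hb
  exact (states hdom hne (max k l)).edge n x y a b
    (states_mono hdom hne (le_max_left k l) n hk)
    (states_mono hdom hne (le_max_right k l) n hl) hadj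

lemma pinf_cross {n m x y a b x' y' a' b' : ℕ}
    (ha : Pinf hdom hne n x a) (hb : Pinf hdom hne n y b) (hadj : (F n).Adj x y)
    (ha' : Pinf hdom hne m x' a') (hb' : Pinf hdom hne m y' b') (hadj' : (F m).Adj x' y')
    (he : s(a, b) = s(a', b')) : n = m := by
  obtain ⟨k1, h1⟩ := ha
  obtain ⟨k2, h2⟩ := hb
  obtain ⟨k3, h3⟩ := ha'
  obtain ⟨k4, h4⟩ := hb'
  set K := max (max k1 k2) (max k3 k4) with hK
  have e1 : k1 ≤ K := by omega
  have e2 : k2 ≤ K := by omega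
  have e3 : k3 ≤ K := by omega
  have e4 : k4 ≤ K := by omega
  exact (states hdom hne K).cross n m x y a b x' y' a' b'
    (states_mono hdom hne e1 n h1) (states_mono hdom hne e2 n h2) hadj
    (states_mono hdom hne e3 m h3) (states_mono hdom hne e4 m h4) hadj' he

include hdom hne in
/-- The heart of the construction: a family of bijections realizing a factorization. -/
lemma core : ∃ σ : ℕ → (ℕ ≃ ℕ),
    (∀ n v w, (F n).Adj v w → Rado.Adj (σ n v) (σ n w)) ∧
    (∀ a b, Rado.Adj a b → ∃ n v w, (F n).Adj v w ∧ σ n v = a ∧ σ n w = b) ∧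
    (∀ n m v w x y, (F n).Adj v w → (F m).Adj x y →
      s(σ n v, σ n w) = s(σ m x, σ m y) → n = m) := by
  classical
  set f : ℕ → ℕ → ℕ := fun n v => (achA hdom hne n v).choose with hfdef
  have hf : ∀ n v, Pinf hdom hne n v (f n v) := fun n v => (achA hdom hne n v).choose_spec
  have hfeq : ∀ {n v a}, Pinf hdom hne n v a → f n v = a :=
    fun {n v a} h => pinf_fn hdom hne (hf n v) h
  have hinj : ∀ n, Function.Injective (f n) :=
    fun n x y h => pinf_inj hdom hne (hf n x) (h ▸ hf n y)
  have hsurj : ∀ n, Function.Surjective (f n) := by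
    intro n w
    obtain ⟨x, hx⟩ := achB hdom hne n w
    exact ⟨x, hfeq hx⟩
  refine ⟨fun n => Equiv.ofBijective (f n) ⟨hinj n, hsurj n⟩, ?_, ?_, ?_⟩
  · intro n v w hadj
    exact pinf_edge hdom hne (hf n v) (hf n w) hadj
  · intro a b hab
    obtain ⟨n, x, y, hadj, hx, hy⟩ := achC hdom hne a b hab
    exact ⟨n, x, y, hadj, hfeq hx, hfeq hy⟩
  · intro n m v w x y hadj hadj' he
    exact pinf_cross hdom hne (hf n v) (hf n w) hadj (hf m x) (hf m y) hadj' he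


end Construction

/-- for a countable family of countable (non-empty) graphs, the
factorization problem `FP(𝓕, R)` for the Rado graph has a solution iff every
graph of the family has infinite domination number (no finite dominating set). -/
theorem stmt_0 (V : ℕ → Type) [∀ n, Countable (V n)]
    (F : ∀ n, SimpleGraph (V n)) (hne : ∀ n, (F n).edgeSet.Nonempty) :
    (∃ G : ℕ → SimpleGraph ℕ, IsFactorization Rado G ∧ ∀ n, Nonempty (F n ≃g G n)) ↔
      ∀ n (D : Set (V n)), IsDominatingSet (F n) D → D.Infinite := by
  classical
  constructor
  · rintro ⟨G, ⟨hle, hpart⟩, hiso⟩ n D hD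
    by_contra hfin
    rw [Set.not_infinite] at hfin
    obtain ⟨φ⟩ := hiso n
    set D' : Finset ℕ := hfin.toFinset.image (fun v => φ v) with hD'
    set N := D'.sup id + 1 with hN
    have hp : N < 2 ^ N := Nat.lt_two_pow_self (n := N)
    have hlt : ∀ d ∈ D', d < 2 ^ N := by
      intro d hd
      have := Finset.le_sup (f := id) hd
      simp only [id] at this
      omega
    have hnadj : ∀ d ∈ D', ¬ Rado.Adj (2 ^ N) d := by
      intro d hd
      refine not_rado_adj _ d (hlt d hd) ?_
      rw [Nat.testBit_two_pow]
      have := Finset.le_sup (f := id) hd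
      simp only [id] at this
      simp only [decide_eq_false_iff_not]
      omega
    set v := φ.symm (2 ^ N) with hv
    have hvD : v ∉ D := by
      intro hvD
      have : (2 : ℕ) ^ N ∈ D' := by
        rw [hD']
        refine Finset.mem_image.mpr ⟨v, hfin.mem_toFinset.mpr hvD, ?_⟩
        rw [hv]; exact φ.apply_symm_apply _
      exact absurd (hlt _ this) (lt_irrefl _)
    obtain ⟨d, hdD, hadj⟩ := hD v hvD
    have h1 : (G n).Adj (φ v) (φ d) := φ.map_rel_iff.mpr hadj
    rw [hv, φ.apply_symm_apply] at h1
    refine hnadj (φ d) ?_ (hle n h1)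
    exact Finset.mem_image.mpr ⟨d, hfin.mem_toFinset.mpr hdD, rfl⟩
  · intro h
    have hinf : ∀ n, Infinite (V n) := by
      intro n
      rw [← Set.infinite_univ_iff]
      exact h n Set.univ (fun v hv => absurd (Set.mem_univ v) hv)
    have heq : ∀ n, V n ≃ ℕ := fun n => by
      haveI := hinf n
      exact (nonempty_equiv_of_countable (α := V n) (β := ℕ)).some
    set F' : ℕ → SimpleGraph ℕ := fun n => (F n).comap ((heq n).symm : ℕ → V n) with hF'
    have hadj' : ∀ n a b, (F' n).Adj a b ↔ (F n).Adj ((heq n).symm a) ((heq n).symm b) := by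
      intro n a b
      rw [hF']
      simp [SimpleGraph.comap_adj]
    have hne' : ∀ n, ∃ x y, (F' n).Adj x y := by
      intro n
      obtain ⟨ed, hed⟩ := hne n
      induction ed using Sym2.ind with
      | _ x y =>
        rw [SimpleGraph.mem_edgeSet] at hed
        refine ⟨heq n x, heq n y, ?_⟩
        rw [hadj']
        simpa using hed
    have hdom' : ∀ n (Df : Finset ℕ), ∃ v, v ∉ Df ∧ ∀ d ∈ Df, ¬(F' n).Adj v d := by
      intro n Df
      by_contra hcon
      push_neg at hcon
      have hDdom : IsDominatingSet (F n) ((fun a => (heq n).symm a) '' ↑Df) := by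
        intro u hu
        have huD : heq n u ∉ Df := by
          intro hmem
          exact hu ⟨heq n u, hmem, (heq n).symm_apply_apply u⟩
        obtain ⟨d, hd, hadj⟩ := hcon (heq n u) huD
        refine ⟨(heq n).symm d, ⟨d, hd, rfl⟩, ?_⟩
        rw [hadj'] at hadj
        rwa [(heq n).symm_apply_apply] at hadj
      have := h n _ hDdom
      exact this (Set.Finite.image _ (Df.finite_toSet))
    obtain ⟨σ, hE, hC, hX⟩ := core hdom' hne'
    refine ⟨fun n => (F' n).comap ((σ n).symm : ℕ → ℕ), ⟨?_, ?_⟩, ?_⟩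
    · intro n a b hab
      rw [SimpleGraph.comap_adj] at hab
      have := hE n _ _ hab
      rwa [(σ n).apply_symm_apply, (σ n).apply_symm_apply] at this
    · intro ed hed
      induction ed using Sym2.ind with
      | _ a b =>
        rw [SimpleGraph.mem_edgeSet] at hed
        obtain ⟨n, x, y, hadj, hx, hy⟩ := hC a b hed
        have hxa : (σ n).symm a = x := by rw [← hx, (σ n).symm_apply_apply]
        have hyb : (σ n).symm b = y := by rw [← hy, (σ n).symm_apply_apply]
        refine ⟨n, ?_, ?_⟩
        · show s(a, b) ∈ ((F' n).comap ((σ n).symm : ℕ → ℕ)).edgeSet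
          rw [SimpleGraph.mem_edgeSet, SimpleGraph.comap_adj, hxa, hyb]
          exact hadj
        · intro m hm
          rw [SimpleGraph.mem_edgeSet, SimpleGraph.comap_adj] at hm
          refine hX m n _ _ x y hm hadj ?_
          rw [(σ m).apply_symm_apply, (σ m).apply_symm_apply, hx, hy]
    · intro n
      have iso1 : F n ≃g F' n := by
        refine ⟨heq n, ?_⟩
        intro a b
        rw [hadj']
        simp only [Equiv.coe_fn_mk, (heq n).symm_apply_apply]
      have iso2 : F' n ≃g (F' n).comap ((σ n).symm : ℕ → ℕ) := by
        refine ⟨σ n, ?_⟩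
        intro a b
        rw [SimpleGraph.comap_adj]
        simp only [Equiv.coe_fn_mk, (σ n).symm_apply_apply]
      exact ⟨iso1.trans iso2⟩
end

section
/- Let ℵ be an infinite cardinal and let F = {F_α : α ∈ A} be a family of simple graphs, each of order ℵ, such that |A| = ℵ and the domination number of each graph in F equals ℵ (i.e., no graph in F has a dominating set of cardinality less than ℵ). Then there exists a factorization {Γ_α : α ∈ A} of the complete graph K_ℵ on ℵ vertices such that Γ_α is isomorphic to F_α for every α ∈ A; that is, FP(F) has a solution. -/
universe u

namespace FPaux

open Cardinal Set Classical

variable {A : Type u} {V : A → Type u} {X : Type u}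

/-- Partial states: a relation for each index `a` between vertices of `V a` and `X`. -/
abbrev St (V : A → Type u) (X : Type u) : Type u := ∀ a : A, V a → X → Prop

variable (F : ∀ a, SimpleGraph (V a))

/-- The pair `(x, y)` is covered by the (partial) embedding of `F a`. -/
def Cov (s : St V X) (a : A) (x y : X) : Prop :=
  ∃ u v, (F a).Adj u v ∧ s a u x ∧ s a v y

/-- Support of a state. -/
def supp (s : St V X) : Set ((a : A) × V a × X) := {p | s p.1 p.2.1 p.2.2}

/-- Extension order on states. -/
def SLe (s t : St V X) : Prop := ∀ a v x, s a v x → t a v x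

/-- Invariants: functional, injective, and the covered edge sets are pairwise disjoint. -/
def Good (s : St V X) : Prop :=
  (∀ a v x x', s a v x → s a v x' → x = x') ∧
  (∀ a u v x, s a u x → s a v x → u = v) ∧
  (∀ a b x y, a ≠ b → Cov F s a x y → Cov F s b x y → False)

theorem SLe.rfl {s : St V X} : SLe s s := fun _ _ _ h => h

theorem SLe.trans {s t u : St V X} (h1 : SLe s t) (h2 : SLe t u) : SLe s u :=
  fun a v x h => h2 a v x (h1 a v x h)

theorem Cov.mono {s t : St V X} (h : SLe s t) {a x y} (hc : Cov F s a x y) :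
    Cov F t a x y := by
  obtain ⟨u, v, hadj, h1, h2⟩ := hc
  exact ⟨u, v, hadj, h _ _ _ h1, h _ _ _ h2⟩

theorem Cov.symm {s : St V X} {a x y} (hc : Cov F s a x y) : Cov F s a y x := by
  obtain ⟨u, v, hadj, h1, h2⟩ := hc
  exact ⟨v, u, hadj.symm, h2, h1⟩

theorem Cov.left_used {s : St V X} {a x y} (hc : Cov F s a x y) :
    ∃ b w, s b w x := by
  obtain ⟨u, v, hadj, h1, h2⟩ := hc
  exact ⟨a, u, h1⟩

/-- The tasks to perform: cover a pair, put a vertex in the domain of the `a`-th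
embedding, put a point of `X` in its range. -/
def Task (A : Type u) (V : A → Type u) (X : Type u) : Type u :=
  (X × X) ⊕ ((Σ a : A, V a) ⊕ (A × X))

def Achieves (s : St V X) : Task A V X → Prop
  | Sum.inl p => p.1 = p.2 ∨ ∃ a, Cov F s a p.1 p.2
  | Sum.inr (Sum.inl q) => ∃ x, s q.1 q.2 x
  | Sum.inr (Sum.inr r) => ∃ v, s r.1 v r.2

theorem Achieves.mono {s t : St V X} (h : SLe s t) {tk : Task A V X}
    (ha : Achieves F s tk) : Achieves F t tk := by
  rcases tk with p | q | r
  · rcases ha with h' | ⟨a, hc⟩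
    · exact Or.inl h'
    · exact Or.inr ⟨a, hc.mono F h⟩
  · obtain ⟨x, hx⟩ := ha; exact ⟨x, h _ _ _ hx⟩
  · obtain ⟨v, hv⟩ := ha; exact ⟨v, h _ _ _ hv⟩


theorem exists_not_mem_of_mk_lt {α : Type u} {S : Set α} (h : #S < #α) : ∃ x, x ∉ S := by
  by_contra hc
  push_neg at hc
  have hu : S = Set.univ := eq_univ_of_forall hc
  rw [hu, mk_univ] at h
  exact lt_irrefl _ h

theorem mk_active_le (s : St V X) : #({a | ∃ v x, s a v x} : Set A) ≤ #(supp s) := by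
  have h : ∀ a : ({a | ∃ v x, s a v x} : Set A), ∃ p : supp s, p.1.1 = a.1 := by
    rintro ⟨a, v, x, h⟩
    exact ⟨⟨⟨a, v, x⟩, h⟩, rfl⟩
  choose f hf using h
  exact mk_le_of_injective (f := f) fun a b hab => Subtype.ext (by rw [← hf a, ← hf b, hab])

theorem mk_used_le (s : St V X) : #({x | ∃ b w, s b w x} : Set X) ≤ #(supp s) := by
  have h : ∀ x : ({x | ∃ b w, s b w x} : Set X), ∃ p : supp s, p.1.2.2 = x.1 := by
    rintro ⟨x, b, w, hb⟩
    exact ⟨⟨⟨b, w, x⟩, hb⟩, rfl⟩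
  choose f hf using h
  exact mk_le_of_injective (f := f) fun a b hab => Subtype.ext (by rw [← hf a, ← hf b, hab])

theorem mk_dom_le (s : St V X) (a : A) : #({w : V a | ∃ z, s a w z}) ≤ #(supp s) := by
  choose z hz using fun w : ({w : V a | ∃ z, s a w z} : Set (V a)) => w.2
  have inj : Function.Injective (fun w : ({w : V a | ∃ z, s a w z} : Set (V a)) =>
      (⟨⟨a, w.1, z w⟩, hz w⟩ : supp s)) := by
    intro w w' h
    apply Subtype.ext
    have h2 := congrArg Subtype.val h
    simp only at h2
    rw [Sigma.mk.inj_iff] at h2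
    have h3 := h2.2
    rw [heq_eq_eq, Prod.mk.injEq] at h3
    exact h3.1
  exact mk_le_of_injective inj


theorem extend {ℵ : Cardinal.{u}} (hℵ : Cardinal.aleph0 ≤ ℵ)
    (hA : #A = ℵ) (hX : #X = ℵ)
    (hne : ∀ a, (F a).edgeSet.Nonempty)
    (hdom : ∀ a (D : Set (V a)), IsDominatingSet (F a) D → ℵ ≤ #D)
    (s : St V X) (hg : Good F s) (hsupp : #(supp s) < ℵ) (t : Task A V X) :
    ∃ s' : St V X, SLe s s' ∧ Good F s' ∧
      (∃ E : Set ((a : A) × V a × X), #E ≤ 2 ∧ supp s' ⊆ supp s ∪ E) ∧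
      Achieves F s' t := by
  classical
  obtain ⟨hfun, hinj, hdisj⟩ := hg
  rcases t with ⟨x, y⟩ | ⟨a, v⟩ | ⟨a, x⟩
  · -- cover the pair (x, y)
    by_cases hxy : x = y
    · exact ⟨s, SLe.rfl, ⟨hfun, hinj, hdisj⟩, ⟨∅, by simp, by simp⟩, Or.inl hxy⟩
    by_cases hcov : ∃ a, Cov F s a x y
    · exact ⟨s, SLe.rfl, ⟨hfun, hinj, hdisj⟩, ⟨∅, by simp, by simp⟩, Or.inr hcov⟩
    have hfresh : ∃ a : A, ∀ v x, ¬ s a v x := by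
      by_contra hc
      push_neg at hc
      have hle : #A ≤ #(supp s) := by
        have h1 := mk_active_le (V := V) (X := X) s
        have hu : ({a | ∃ v x, s a v x} : Set A) = Set.univ :=
          eq_univ_of_forall fun a => hc a
        rwa [hu, mk_univ] at h1
      rw [hA] at hle
      exact absurd hsupp (not_lt.2 hle)
    obtain ⟨a, ha⟩ := hfresh
    obtain ⟨u, w, hadj⟩ : ∃ u w, (F a).Adj u w := by
      obtain ⟨e, he⟩ := hne a
      induction e using Sym2.ind with
      | _ u w => exact ⟨u, w, he⟩
    set s' : St V X :=
      Function.update s a (fun p z => (p = u ∧ z = x) ∨ (p = w ∧ z = y)) with hs'def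
    have hs'a : ∀ p z, s' a p z ↔ ((p = u ∧ z = x) ∨ (p = w ∧ z = y)) := by
      intro p z
      rw [hs'def, Function.update_self]
    have hs'b : ∀ b, b ≠ a → s' b = s b := fun b hb => Function.update_of_ne hb _ _
    have hle : SLe s s' := by
      intro b p z h
      by_cases hb : b = a
      · subst hb; exact absurd h (ha p z)
      · rw [hs'b b hb]; exact h
    have hcova : ∀ x1 y1, Cov F s' a x1 y1 → (x1 = x ∧ y1 = y) ∨ (x1 = y ∧ y1 = x) := by
      rintro x1 y1 ⟨u1, v1, hadj1, h1, h2⟩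
      rw [hs'a] at h1 h2
      rcases h1 with ⟨rfl, rfl⟩ | ⟨rfl, rfl⟩ <;> rcases h2 with ⟨rfl, rfl⟩ | ⟨rfl, rfl⟩
      · exact absurd hadj1 ((F a).loopless.irrefl _)
      · exact Or.inl ⟨rfl, rfl⟩
      · exact Or.inr ⟨rfl, rfl⟩
      · exact absurd hadj1 ((F a).loopless.irrefl _)
    have hcovb : ∀ b x1 y1, b ≠ a → (Cov F s' b x1 y1 ↔ Cov F s b x1 y1) := by
      intro b x1 y1 hb
      unfold Cov
      rw [hs'b b hb]
    refine ⟨s', hle, ⟨?_, ?_, ?_⟩, ⟨{⟨a, u, x⟩, ⟨a, w, y⟩}, ?_, ?_⟩,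
      Or.inr ⟨a, u, w, hadj, (hs'a u x).2 (Or.inl ⟨rfl, rfl⟩),
        (hs'a w y).2 (Or.inr ⟨rfl, rfl⟩)⟩⟩
    · intro b p z z' h1 h2
      by_cases hb : b = a
      · subst hb
        rw [hs'a] at h1 h2
        rcases h1 with ⟨rfl, rfl⟩ | ⟨rfl, rfl⟩ <;> rcases h2 with ⟨h, rfl⟩ | ⟨h, rfl⟩
        · rfl
        · exact absurd h hadj.ne
        · exact absurd h hadj.ne'
        · rfl
      · rw [hs'b b hb] at h1 h2
        exact hfun b p z z' h1 h2
    · intro b p q z h1 h2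
      by_cases hb : b = a
      · subst hb
        rw [hs'a] at h1 h2
        rcases h1 with ⟨rfl, rfl⟩ | ⟨rfl, rfl⟩ <;> rcases h2 with ⟨rfl, h⟩ | ⟨rfl, h⟩
        · rfl
        · exact absurd h hxy
        · exact absurd h.symm hxy
        · rfl
      · rw [hs'b b hb] at h1 h2
        exact hinj b p q z h1 h2
    · intro b c x1 y1 hbc hb hc
      by_cases hba : b = a
      · subst hba
        have hca : c ≠ b := fun h => hbc h.symm
        rcases hcova _ _ hb with ⟨rfl, rfl⟩ | ⟨rfl, rfl⟩
        · exact hcov ⟨c, (hcovb c _ _ (fun h => hbc h.symm)).1 hc⟩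
        · exact hcov ⟨c, Cov.symm F ((hcovb c _ _ (fun h => hbc h.symm)).1 hc)⟩
      · by_cases hca : c = a
        · subst hca
          rcases hcova _ _ hc with ⟨rfl, rfl⟩ | ⟨rfl, rfl⟩
          · exact hcov ⟨b, (hcovb b _ _ hba).1 hb⟩
          · exact hcov ⟨b, Cov.symm F ((hcovb b _ _ hba).1 hb)⟩
        · exact hdisj b c x1 y1 hbc ((hcovb b _ _ hba).1 hb) ((hcovb c _ _ hca).1 hc)
    · refine le_trans (mk_insert_le) ?_
      rw [mk_singleton]
      norm_num
    · rintro ⟨b, p, z⟩ hp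
      by_cases hb : b = a
      · subst hb
        have hp' : s' b p z := hp
        rw [hs'a] at hp'
        rcases hp' with ⟨rfl, rfl⟩ | ⟨rfl, rfl⟩
        · exact Or.inr (Or.inl rfl)
        · exact Or.inr (Or.inr rfl)
      · left
        have hp' : s' b p z := hp
        rw [hs'b b hb] at hp'
        exact hp'
  · -- put `v` in the domain of the `a`-th embedding
    by_cases hv : ∃ x, s a v x
    · exact ⟨s, SLe.rfl, ⟨hfun, hinj, hdisj⟩, ⟨∅, by simp, by simp⟩, hv⟩
    have hfresh : ∃ x : X, x ∉ ({x | ∃ b w, s b w x} : Set X) := by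
      apply exists_not_mem_of_mk_lt
      rw [hX]
      exact lt_of_le_of_lt (mk_used_le s) hsupp
    obtain ⟨x, hx⟩ := hfresh
    have hxused : ∀ b w, ¬ s b w x := by
      intro b w hbw
      exact hx ⟨b, w, hbw⟩
    set s' : St V X :=
      Function.update s a (fun p z => s a p z ∨ (p = v ∧ z = x)) with hs'def
    have hs'a : ∀ p z, s' a p z ↔ (s a p z ∨ (p = v ∧ z = x)) := by
      intro p z
      rw [hs'def, Function.update_self]
    have hs'b : ∀ b, b ≠ a → s' b = s b := fun b hb => Function.update_of_ne hb _ _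
    have hle : SLe s s' := by
      intro b p z h
      by_cases hb : b = a
      · subst hb; exact (hs'a p z).2 (Or.inl h)
      · rw [hs'b b hb]; exact h
    have hcovb : ∀ b x1 y1, b ≠ a → (Cov F s' b x1 y1 ↔ Cov F s b x1 y1) := by
      intro b x1 y1 hb
      unfold Cov
      rw [hs'b b hb]
    have hcova : ∀ x1 y1, Cov F s' a x1 y1 → Cov F s a x1 y1 ∨ x1 = x ∨ y1 = x := by
      rintro x1 y1 ⟨u1, v1, hadj1, h1, h2⟩
      rw [hs'a] at h1 h2
      rcases h1 with h1 | ⟨rfl, rfl⟩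
      · rcases h2 with h2 | ⟨rfl, rfl⟩
        · exact Or.inl ⟨u1, v1, hadj1, h1, h2⟩
        · exact Or.inr (Or.inr rfl)
      · exact Or.inr (Or.inl rfl)
    refine ⟨s', hle, ⟨?_, ?_, ?_⟩, ⟨{⟨a, v, x⟩}, ?_, ?_⟩,
      ⟨x, (hs'a v x).2 (Or.inr ⟨rfl, rfl⟩)⟩⟩
    · intro b p z z' h1 h2
      by_cases hb : b = a
      · subst hb
        rw [hs'a] at h1 h2
        rcases h1 with h1 | ⟨rfl, rfl⟩
        · rcases h2 with h2 | ⟨rfl, rfl⟩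
          · exact hfun b p z z' h1 h2
          · exact absurd ⟨z, h1⟩ hv
        · rcases h2 with h2 | ⟨h2, rfl⟩
          · exact absurd ⟨z', h2⟩ hv
          · rfl
      · rw [hs'b b hb] at h1 h2
        exact hfun b p z z' h1 h2
    · intro b p q z h1 h2
      by_cases hb : b = a
      · subst hb
        rw [hs'a] at h1 h2
        rcases h1 with h1 | ⟨rfl, rfl⟩
        · rcases h2 with h2 | ⟨rfl, rfl⟩
          · exact hinj b p q z h1 h2
          · exact absurd h1 (hxused b p)
        · rcases h2 with h2 | ⟨rfl, h2⟩
          · exact absurd h2 (hxused b q)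
          · rfl
      · rw [hs'b b hb] at h1 h2
        exact hinj b p q z h1 h2
    · intro b c x1 y1 hbc hb hc
      by_cases hba : b = a
      · subst hba
        have hc' : Cov F s c x1 y1 := (hcovb c _ _ (fun h => hbc h.symm)).1 hc
        rcases hcova _ _ hb with hb' | rfl | rfl
        · exact hdisj b c x1 y1 hbc hb' hc'
        · obtain ⟨b', w', hw'⟩ := Cov.left_used F hc'
          exact hxused b' w' hw'
        · obtain ⟨b', w', hw'⟩ := Cov.left_used F (Cov.symm F hc')
          exact hxused b' w' hw'
      · by_cases hca : c = a
        · subst hca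
          have hb' : Cov F s b x1 y1 := (hcovb b _ _ hba).1 hb
          rcases hcova _ _ hc with hc' | rfl | rfl
          · exact hdisj b c x1 y1 hbc hb' hc'
          · obtain ⟨b', w', hw'⟩ := Cov.left_used F hb'
            exact hxused b' w' hw'
          · obtain ⟨b', w', hw'⟩ := Cov.left_used F (Cov.symm F hb')
            exact hxused b' w' hw'
        · exact hdisj b c x1 y1 hbc ((hcovb b _ _ hba).1 hb) ((hcovb c _ _ hca).1 hc)
    · rw [mk_singleton]
      norm_num
    · rintro ⟨b, p, z⟩ hp
      by_cases hb : b = a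
      · subst hb
        have hp' : s' b p z := hp
        rw [hs'a] at hp'
        rcases hp' with hp' | ⟨rfl, rfl⟩
        · exact Or.inl hp'
        · exact Or.inr rfl
      · left
        have hp' : s' b p z := hp
        rw [hs'b b hb] at hp'
        exact hp'
  · -- put `x` in the range of the `a`-th embedding
    by_cases hx : ∃ w, s a w x
    · exact ⟨s, SLe.rfl, ⟨hfun, hinj, hdisj⟩, ⟨∅, by simp, by simp⟩, hx⟩
    have hnd : ¬ IsDominatingSet (F a) {w | ∃ z, s a w z} := by
      intro hD
      have h1 := hdom a _ hD
      have h2 := mk_dom_le s a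
      exact absurd hsupp (not_lt.2 (le_trans h1 h2))
    rw [IsDominatingSet] at hnd
    push_neg at hnd
    obtain ⟨v, hvD, hvN⟩ := hnd
    have hvD' : ∀ z, ¬ s a v z := fun z hz => hvD ⟨z, hz⟩
    set s' : St V X :=
      Function.update s a (fun p z => s a p z ∨ (p = v ∧ z = x)) with hs'def
    have hs'a : ∀ p z, s' a p z ↔ (s a p z ∨ (p = v ∧ z = x)) := by
      intro p z
      rw [hs'def, Function.update_self]
    have hs'b : ∀ b, b ≠ a → s' b = s b := fun b hb => Function.update_of_ne hb _ _
    have hle : SLe s s' := by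
      intro b p z h
      by_cases hb : b = a
      · subst hb; exact (hs'a p z).2 (Or.inl h)
      · rw [hs'b b hb]; exact h
    have hcovb : ∀ b x1 y1, b ≠ a → (Cov F s' b x1 y1 ↔ Cov F s b x1 y1) := by
      intro b x1 y1 hb
      unfold Cov
      rw [hs'b b hb]
    have hcova : ∀ x1 y1, Cov F s' a x1 y1 → Cov F s a x1 y1 := by
      rintro x1 y1 ⟨u1, v1, hadj1, h1, h2⟩
      rw [hs'a] at h1 h2
      rcases h1 with h1 | ⟨rfl, rfl⟩
      · rcases h2 with h2 | ⟨rfl, rfl⟩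
        · exact ⟨u1, v1, hadj1, h1, h2⟩
        · exact absurd hadj1.symm (hvN u1 ⟨x1, h1⟩)
      · rcases h2 with h2 | ⟨rfl, rfl⟩
        · exact absurd hadj1 (hvN v1 ⟨y1, h2⟩)
        · exact absurd hadj1 ((F a).loopless.irrefl _)
    refine ⟨s', hle, ⟨?_, ?_, ?_⟩, ⟨{⟨a, v, x⟩}, ?_, ?_⟩,
      ⟨v, (hs'a v x).2 (Or.inr ⟨rfl, rfl⟩)⟩⟩
    · intro b p z z' h1 h2
      by_cases hb : b = a
      · subst hb
        rw [hs'a] at h1 h2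
        rcases h1 with h1 | ⟨rfl, rfl⟩
        · rcases h2 with h2 | ⟨rfl, rfl⟩
          · exact hfun b p z z' h1 h2
          · exact absurd h1 (hvD' z)
        · rcases h2 with h2 | ⟨h2, rfl⟩
          · exact absurd h2 (hvD' z')
          · rfl
      · rw [hs'b b hb] at h1 h2
        exact hfun b p z z' h1 h2
    · intro b p q z h1 h2
      by_cases hb : b = a
      · subst hb
        rw [hs'a] at h1 h2
        rcases h1 with h1 | ⟨rfl, rfl⟩
        · rcases h2 with h2 | ⟨rfl, rfl⟩
          · exact hinj b p q z h1 h2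
          · exact absurd ⟨p, h1⟩ hx
        · rcases h2 with h2 | ⟨rfl, h2⟩
          · exact absurd ⟨q, h2⟩ hx
          · rfl
      · rw [hs'b b hb] at h1 h2
        exact hinj b p q z h1 h2
    · intro b c x1 y1 hbc hb hc
      by_cases hba : b = a
      · subst hba
        exact hdisj b c x1 y1 hbc (hcova _ _ hb) ((hcovb c _ _ (fun h => hbc h.symm)).1 hc)
      · by_cases hca : c = a
        · subst hca
          exact hdisj b c x1 y1 hbc ((hcovb b _ _ hba).1 hb) (hcova _ _ hc)
        · exact hdisj b c x1 y1 hbc ((hcovb b _ _ hba).1 hb) ((hcovb c _ _ hca).1 hc)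
    · rw [mk_singleton]
      norm_num
    · rintro ⟨b, p, z⟩ hp
      by_cases hb : b = a
      · subst hb
        have hp' : s' b p z := hp
        rw [hs'a] at hp'
        rcases hp' with hp' | ⟨rfl, rfl⟩
        · exact Or.inl hp'
        · exact Or.inr rfl
      · left
        have hp' : s' b p z := hp
        rw [hs'b b hb] at hp'
        exact hp'

section Recursion

variable {ℵ : Cardinal.{u}} (hℵ : Cardinal.aleph0 ≤ ℵ)
    (hA : #A = ℵ) (hX : #X = ℵ)
    (hne : ∀ a, (F a).edgeSet.Nonempty)
    (hdom : ∀ a (D : Set (V a)), IsDominatingSet (F a) D → ℵ ≤ #D)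
    (τ : (Cardinal.ord ℵ).ToType → Task A V X)

/-- One step of the construction. -/
noncomputable def step (s : St V X) (t : Task A V X) : St V X :=
  if h : Good F s ∧ #(supp s) < ℵ then
    Classical.choose (extend F hℵ hA hX hne hdom s h.1 h.2 t)
  else s

theorem step_le (s : St V X) (t : Task A V X) :
    SLe s (step F hℵ hA hX hne hdom s t) := by
  unfold step
  split_ifs with h
  · exact (Classical.choose_spec (extend F hℵ hA hX hne hdom s h.1 h.2 t)).1
  · exact SLe.rfl

theorem step_spec (s : St V X) (t : Task A V X) (h1 : Good F s) (h2 : #(supp s) < ℵ) :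
    Good F (step F hℵ hA hX hne hdom s t) ∧ Achieves F (step F hℵ hA hX hne hdom s t) t := by
  unfold step
  rw [dif_pos ⟨h1, h2⟩]
  obtain ⟨_, hg, _, hach⟩ := Classical.choose_spec (extend F hℵ hA hX hne hdom s h1 h2 t)
  exact ⟨hg, hach⟩

theorem step_supp (s : St V X) (t : Task A V X) :
    ∃ E : Set ((a : A) × V a × X), #E ≤ 2 ∧
      supp (step F hℵ hA hX hne hdom s t) ⊆ supp s ∪ E := by
  unfold step
  split_ifs with h
  · exact (Classical.choose_spec (extend F hℵ hA hX hne hdom s h.1 h.2 t)).2.2.1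
  · exact ⟨∅, by simp, by simp⟩

/-- The transfinite construction. -/
noncomputable def g : (Cardinal.ord ℵ).ToType → St V X :=
  WellFoundedLT.fix fun o ih =>
    step F hℵ hA hX hne hdom (fun a v x => ∃ p, ∃ h : p < o, ih p h a v x) (τ o)

/-- The union of all earlier states. -/
def prevSt (o : (Cardinal.ord ℵ).ToType) : St V X :=
  fun a v x => ∃ p, ∃ _ : p < o, g F hℵ hA hX hne hdom τ p a v x

theorem g_eq (o : (Cardinal.ord ℵ).ToType) :
    g F hℵ hA hX hne hdom τ o =
      step F hℵ hA hX hne hdom (prevSt F hℵ hA hX hne hdom τ o) (τ o) := by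
  unfold g prevSt
  rw [WellFoundedLT.fix_eq]
  rfl

theorem suppE (o : (Cardinal.ord ℵ).ToType) :
    ∃ E : Set ((a : A) × V a × X), #E ≤ 2 ∧
      supp (g F hℵ hA hX hne hdom τ o) ⊆ supp (prevSt F hℵ hA hX hne hdom τ o) ∪ E := by
  rw [g_eq]
  exact step_supp F hℵ hA hX hne hdom _ _

/-- The (at most two) new support elements added at stage `o`. -/
noncomputable def Efun (o : (Cardinal.ord ℵ).ToType) : Set ((a : A) × V a × X) :=
  Classical.choose (suppE F hℵ hA hX hne hdom τ o)

theorem supp_g_sub (o : (Cardinal.ord ℵ).ToType) :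
    supp (g F hℵ hA hX hne hdom τ o) ⊆ ⋃ p ∈ Iic o, Efun F hℵ hA hX hne hdom τ p := by
  induction o using WellFoundedLT.induction with
  | _ o IH =>
    intro q hq
    obtain ⟨hE2, hEsub⟩ := Classical.choose_spec (suppE F hℵ hA hX hne hdom τ o)
    rcases hEsub hq with hq' | hq'
    · obtain ⟨p, hp, hqp⟩ := hq'
      have h2 := IH p hp (show q ∈ supp (g F hℵ hA hX hne hdom τ p) from hqp)
      simp only [mem_iUnion, mem_Iic] at h2 ⊢
      obtain ⟨r, hr, hqr⟩ := h2
      exact ⟨r, le_of_lt (lt_of_le_of_lt hr hp), hqr⟩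
    · simp only [mem_iUnion, mem_Iic]
      exact ⟨o, le_rfl, hq'⟩

theorem mk_supp_prev_lt (o : (Cardinal.ord ℵ).ToType) :
    #(supp (prevSt F hℵ hA hX hne hdom τ o)) < ℵ := by
  have hsub : supp (prevSt F hℵ hA hX hne hdom τ o) ⊆
      ⋃ p ∈ Iio o, Efun F hℵ hA hX hne hdom τ p := by
    intro q hq
    obtain ⟨p, hp, hqp⟩ := hq
    have h2 := supp_g_sub F hℵ hA hX hne hdom τ p
      (show q ∈ supp (g F hℵ hA hX hne hdom τ p) from hqp)
    simp only [mem_iUnion, mem_Iic] at h2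
    obtain ⟨r, hr, hqr⟩ := h2
    simp only [mem_iUnion, mem_Iio]
    exact ⟨r, lt_of_le_of_lt hr hp, hqr⟩
  have h2lt : (2 : Cardinal) < ℵ := lt_of_lt_of_le (by exact_mod_cast nat_lt_aleph0 2) hℵ
  have hb : #(⋃ p ∈ Iio o, Efun F hℵ hA hX hne hdom τ p) < ℵ := by
    rw [biUnion_eq_iUnion]
    refine lt_of_le_of_lt (mk_iUnion_le _) ?_
    refine mul_lt_of_lt hℵ (mk_Iio_ord_toType o) ?_
    refine lt_of_le_of_lt (ciSup_le' fun p => ?_) h2lt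
    exact (Classical.choose_spec (suppE F hℵ hA hX hne hdom τ p.1)).1
  exact lt_of_le_of_lt (mk_le_mk_of_subset hsub) hb

theorem main (o : (Cardinal.ord ℵ).ToType) :
    Good F (g F hℵ hA hX hne hdom τ o) ∧
      (∀ p, p < o → SLe (g F hℵ hA hX hne hdom τ p) (g F hℵ hA hX hne hdom τ o)) ∧
      Achieves F (g F hℵ hA hX hne hdom τ o) (τ o) := by
  induction o using WellFoundedLT.induction with
  | _ o IH =>
    have hchain : ∀ p q, p < o → q < o → p ≤ q →
        SLe (g F hℵ hA hX hne hdom τ p) (g F hℵ hA hX hne hdom τ q) := by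
      intro p q hp hq hpq
      rcases eq_or_lt_of_le hpq with rfl | h
      · exact SLe.rfl
      · exact (IH q hq).2.1 p h
    have hgood : Good F (prevSt F hℵ hA hX hne hdom τ o) := by
      refine ⟨?_, ?_, ?_⟩
      · rintro a v x x' ⟨p, hp, h1⟩ ⟨q, hq, h2⟩
        rcases le_total p q with h | h
        · exact (IH q hq).1.1 a v x x' (hchain p q hp hq h a v x h1) h2
        · exact (IH p hp).1.1 a v x x' h1 (hchain q p hq hp h a v x' h2)
      · rintro a u v x ⟨p, hp, h1⟩ ⟨q, hq, h2⟩
        rcases le_total p q with h | h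
        · exact (IH q hq).1.2.1 a u v x (hchain p q hp hq h a u x h1) h2
        · exact (IH p hp).1.2.1 a u v x h1 (hchain q p hq hp h a v x h2)
      · rintro a b x y hab hca hcb
        have hc1 : ∃ p, ∃ _ : p < o, Cov F (g F hℵ hA hX hne hdom τ p) a x y := by
          obtain ⟨u, w, hadj, ⟨p, hp, h1⟩, ⟨q, hq, h2⟩⟩ := hca
          rcases le_total p q with h | h
          · exact ⟨q, hq, u, w, hadj, hchain p q hp hq h _ _ _ h1, h2⟩
          · exact ⟨p, hp, u, w, hadj, h1, hchain q p hq hp h _ _ _ h2⟩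
        have hc2 : ∃ p, ∃ _ : p < o, Cov F (g F hℵ hA hX hne hdom τ p) b x y := by
          obtain ⟨u, w, hadj, ⟨p, hp, h1⟩, ⟨q, hq, h2⟩⟩ := hcb
          rcases le_total p q with h | h
          · exact ⟨q, hq, u, w, hadj, hchain p q hp hq h _ _ _ h1, h2⟩
          · exact ⟨p, hp, u, w, hadj, h1, hchain q p hq hp h _ _ _ h2⟩
        obtain ⟨p, hp, h1⟩ := hc1
        obtain ⟨q, hq, h2⟩ := hc2
        rcases le_total p q with h | h
        · exact (IH q hq).1.2.2 a b x y hab (Cov.mono F (hchain p q hp hq h) h1) h2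
        · exact (IH p hp).1.2.2 a b x y hab h1 (Cov.mono F (hchain q p hq hp h) h2)
    have hsmall := mk_supp_prev_lt F hℵ hA hX hne hdom τ o
    have hstep := step_spec F hℵ hA hX hne hdom (prevSt F hℵ hA hX hne hdom τ o) (τ o)
      hgood hsmall
    have hle : SLe (prevSt F hℵ hA hX hne hdom τ o) (g F hℵ hA hX hne hdom τ o) := by
      rw [g_eq]
      exact step_le F hℵ hA hX hne hdom _ _
    refine ⟨by rw [g_eq]; exact hstep.1, ?_, by rw [g_eq]; exact hstep.2⟩
    intro p hp
    exact SLe.trans (fun a v x h => ⟨p, hp, h⟩) hle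

end Recursion

end FPaux

/-- if `𝓕 = {F a : a ∈ A}` is a family of (non-empty) graphs of order `ℵ`
with `|A| = ℵ` and each `F a` has domination number `ℵ` (no dominating set of
cardinality `< ℵ`), then `FP(𝓕)` has a solution: there is a factorization of the
complete graph `K_ℵ` into graphs `G a` with `G a ≅ F a`. -/
theorem stmt_1 {A : Type u} (ℵ : Cardinal.{u}) (hℵ : Cardinal.aleph0 ≤ ℵ)
    (hA : Cardinal.mk A = ℵ)
    (V : A → Type u) (hV : ∀ a, Cardinal.mk (V a) = ℵ)
    (F : ∀ a, SimpleGraph (V a)) (hne : ∀ a, (F a).edgeSet.Nonempty)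
    (hdom : ∀ a (D : Set (V a)), IsDominatingSet (F a) D → ℵ ≤ Cardinal.mk ↥D)
    (X : Type u) (hX : Cardinal.mk X = ℵ) :
    ∃ G : A → SimpleGraph X, IsFactorization (⊤ : SimpleGraph X) G ∧
      ∀ a, Nonempty (F a ≃g G a) := by
  classical
  have h1 : Cardinal.mk (X × X) = ℵ := by
    rw [Cardinal.mk_prod, hX]
    simp [Cardinal.mul_eq_self hℵ]
  have h2 : Cardinal.mk (Σ a : A, V a) = ℵ := by
    rw [Cardinal.mk_sigma]
    have hsum : (Cardinal.sum fun a => Cardinal.mk (V a)) = Cardinal.sum fun _ : A => ℵ := by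
      congr 1
      funext a
      exact hV a
    rw [hsum, Cardinal.sum_const', hA, Cardinal.mul_eq_self hℵ]
  have h3 : Cardinal.mk (A × X) = ℵ := by
    rw [Cardinal.mk_prod, hA, hX]
    simp [Cardinal.mul_eq_self hℵ]
  have hTask : Cardinal.mk (FPaux.Task A V X) = ℵ := by
    show Cardinal.mk ((X × X) ⊕ ((Σ a : A, V a) ⊕ (A × X))) = ℵ
    rw [Cardinal.mk_sum, Cardinal.mk_sum, h1, h2, h3]
    simp [Cardinal.add_eq_self hℵ]
  have hW : Cardinal.mk ((Cardinal.ord ℵ).ToType) = ℵ := Cardinal.mk_ord_toType ℵ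
  obtain ⟨e⟩ : Nonempty (FPaux.Task A V X ≃ (Cardinal.ord ℵ).ToType) :=
    Cardinal.eq.1 (hTask.trans hW.symm)
  set τ : (Cardinal.ord ℵ).ToType → FPaux.Task A V X := fun o => e.symm o with hτ
  set sW : FPaux.St V X :=
    fun a v x => ∃ o, FPaux.g F hℵ hA hX hne hdom τ o a v x with hsi
  have hmono : ∀ o p, o ≤ p →
      FPaux.SLe (FPaux.g F hℵ hA hX hne hdom τ o) (FPaux.g F hℵ hA hX hne hdom τ p) := by
    intro o p h
    rcases eq_or_lt_of_le h with rfl | h'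
    · exact FPaux.SLe.rfl
    · exact (FPaux.main F hℵ hA hX hne hdom τ p).2.1 o h'
  have hup : ∀ o, FPaux.SLe (FPaux.g F hℵ hA hX hne hdom τ o) sW :=
    fun o a v x h => ⟨o, h⟩
  have hach : ∀ t : FPaux.Task A V X, FPaux.Achieves F sW t := by
    intro t
    have h := (FPaux.main F hℵ hA hX hne hdom τ (e t)).2.2
    have ht : τ (e t) = t := e.symm_apply_apply t
    rw [ht] at h
    exact FPaux.Achieves.mono F (hup (e t)) h
  have hfun : ∀ a v x x', sW a v x → sW a v x' → x = x' := by
    rintro a v x x' ⟨o, hh1⟩ ⟨p, hh2⟩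
    rcases le_total o p with h | h
    · exact (FPaux.main F hℵ hA hX hne hdom τ p).1.1 a v x x' (hmono o p h a v x hh1) hh2
    · exact (FPaux.main F hℵ hA hX hne hdom τ o).1.1 a v x x' hh1 (hmono p o h a v x' hh2)
  have hinj : ∀ a u v x, sW a u x → sW a v x → u = v := by
    rintro a u v x ⟨o, hh1⟩ ⟨p, hh2⟩
    rcases le_total o p with h | h
    · exact (FPaux.main F hℵ hA hX hne hdom τ p).1.2.1 a u v x (hmono o p h a u x hh1) hh2
    · exact (FPaux.main F hℵ hA hX hne hdom τ o).1.2.1 a u v x hh1 (hmono p o h a v x hh2)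
  have hcovle : ∀ a x y, FPaux.Cov F sW a x y →
      ∃ o, FPaux.Cov F (FPaux.g F hℵ hA hX hne hdom τ o) a x y := by
    rintro a x y ⟨u, w, hadj, ⟨o, hh1⟩, ⟨p, hh2⟩⟩
    rcases le_total o p with h | h
    · exact ⟨p, u, w, hadj, hmono o p h _ _ _ hh1, hh2⟩
    · exact ⟨o, u, w, hadj, hh1, hmono p o h _ _ _ hh2⟩
  have hdisj : ∀ a b x y, a ≠ b → FPaux.Cov F sW a x y → FPaux.Cov F sW b x y → False := by
    intro a b x y hab hca hcb
    obtain ⟨o, hh1⟩ := hcovle a x y hca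
    obtain ⟨p, hh2⟩ := hcovle b x y hcb
    rcases le_total o p with h | h
    · exact (FPaux.main F hℵ hA hX hne hdom τ p).1.2.2 a b x y hab
        (FPaux.Cov.mono F (hmono o p h) hh1) hh2
    · exact (FPaux.main F hℵ hA hX hne hdom τ o).1.2.2 a b x y hab hh1
        (FPaux.Cov.mono F (hmono p o h) hh2)
  have htot : ∀ a (v : V a), ∃ x, sW a v x := by
    intro a v
    exact hach (Sum.inr (Sum.inl ⟨a, v⟩))
  have hsur : ∀ a (x : X), ∃ v, sW a v x := by
    intro a x
    exact hach (Sum.inr (Sum.inr (a, x)))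
  have hcov : ∀ x y : X, x ≠ y → ∃ a, FPaux.Cov F sW a x y := by
    intro x y hxy
    rcases hach (Sum.inl (x, y)) with h | h
    · exact absurd h hxy
    · exact h
  choose φ hφ using htot
  have hbij : ∀ a, Function.Bijective (φ a) := by
    intro a
    constructor
    · intro u v h
      exact hinj a u v (φ a v) (h ▸ hφ a u) (hφ a v)
    · intro x
      obtain ⟨v, hv⟩ := hsur a x
      exact ⟨v, hfun a v (φ a v) x (hφ a v) hv⟩
  refine ⟨fun a =>
    { Adj := fun x y => FPaux.Cov F sW a x y
      symm := ⟨fun x y h => FPaux.Cov.symm F h⟩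
      loopless := ⟨fun x h => by
        obtain ⟨u, w, hadj, hh1, hh2⟩ := h
        exact hadj.ne (hinj a u w x hh1 hh2)⟩ }, ⟨fun a => le_top, ?_⟩, ?_⟩
  · intro ed hed
    induction ed using Sym2.ind with
    | _ x y =>
      rw [SimpleGraph.mem_edgeSet, SimpleGraph.top_adj] at hed
      obtain ⟨a, ha⟩ := hcov x y hed
      refine ⟨a, (SimpleGraph.mem_edgeSet _).2 ha, ?_⟩
      intro b hb
      by_contra hba
      exact hdisj b a x y hba ((SimpleGraph.mem_edgeSet _).1 hb) ha
  · intro a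
    refine ⟨⟨Equiv.ofBijective (φ a) (hbij a), ?_⟩⟩
    intro u v
    show FPaux.Cov F sW a (φ a u) (φ a v) ↔ (F a).Adj u v
    constructor
    · rintro ⟨u1, v1, hadj, hh1, hh2⟩
      rwa [hinj a u1 u (φ a u) hh1 (hφ a u), hinj a v1 v (φ a v) hh2 (hφ a v)] at hadj
    · intro h
      exact ⟨u, v, h, hφ a u, hφ a v⟩
end

section
/- A countably infinite simple graph is isomorphic to the Rado graph R if and only if it satisfies property ⋆: for every two disjoint finite sets of vertices U and W, there exists a vertex z adjacent to every vertex of U and to no vertex of W. -/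
open FirstOrder FirstOrder.Language

instance : Std.Commutative (α := ℕ) Nat.lor := ⟨Nat.lor_comm⟩
instance : Std.Associative (α := ℕ) Nat.lor := ⟨Nat.lor_assoc⟩

lemma testBit_lor' (m n k : ℕ) : ((m.lor n).testBit k) = (m.testBit k || n.testBit k) :=
  Nat.testBit_lor m n k

lemma testBit_fold (S : Finset ℕ) (k : ℕ) :
    (S.fold Nat.lor 0 (2 ^ ·)).testBit k = true ↔ k ∈ S := by
  classical
  induction S using Finset.induction with
  | empty => simp
  | insert _ _ ha ih =>
    rw [Finset.fold_insert ha, testBit_lor']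
    simp only [Bool.or_eq_true, ih, Finset.mem_insert, Nat.testBit_two_pow]
    constructor
    · rintro (h | h)
      · exact Or.inl (of_decide_eq_true h).symm
      · exact Or.inr h
    · rintro (rfl | h)
      · exact Or.inl (by simp)
      · exact Or.inr h

lemma rado_star (U W : Finset ℕ) (h : Disjoint U W) :
    ∃ z, (∀ u ∈ U, Rado.Adj z u) ∧ ∀ w ∈ W, ¬ Rado.Adj z w := by
  classical
  set N := (U ∪ W).sup id + 1 with hN
  have hNgt : ∀ x ∈ U ∪ W, x < N := by
    intro x hx
    have := Finset.le_sup (f := id) hx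
    simp only [id] at this
    omega
  set z := (insert N U).fold Nat.lor 0 (2 ^ ·) with hz
  have hbit : ∀ k, z.testBit k = true ↔ k ∈ insert N U := fun k => testBit_fold _ k
  have hzge : 2 ^ N ≤ z := by
    by_contra hlt
    have := Nat.testBit_eq_false_of_lt (by omega : z < 2 ^ N)
    rw [(hbit N).2 (Finset.mem_insert_self _ _)] at this
    simp at this
  have hgt : ∀ x ∈ U ∪ W, x < z := by
    intro x hx
    calc x < N := hNgt x hx
    _ < 2 ^ N := Nat.lt_two_pow_self
    _ ≤ z := hzge
  refine ⟨z, ?_, ?_⟩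
  · intro u hu
    have hu' : u < z := hgt u (Finset.mem_union_left _ hu)
    rw [Rado, SimpleGraph.fromRel_adj]
    exact ⟨by omega, Or.inr ⟨by omega, (hbit u).2 (Finset.mem_insert_of_mem hu)⟩⟩
  · intro w hw hadj
    have hw' : w < z := hgt w (Finset.mem_union_right _ hw)
    rw [Rado, SimpleGraph.fromRel_adj] at hadj
    rcases hadj.2 with ⟨h1, _⟩ | ⟨_, h2⟩
    · omega
    · have := (hbit w).1 h2
      rcases Finset.mem_insert.1 this with h' | hwU
      · have := hNgt w (Finset.mem_union_right _ hw); omega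
      · exact (Finset.disjoint_left.1 h) hwU hw


lemma star_strong {V : Type*} [Infinite V] {G : SimpleGraph V}
    (h : ∀ U W : Finset V, Disjoint U W → ∃ z, (∀ u ∈ U, G.Adj z u) ∧ ∀ w ∈ W, ¬ G.Adj z w)
    (U W F : Finset V) (hUW : Disjoint U W) :
    ∃ z, z ∉ F ∧ (∀ u ∈ U, G.Adj z u) ∧ ∀ w ∈ W, ¬ G.Adj z w := by
  classical
  obtain ⟨Y0, hY0sub, hY0fin, hY0card⟩ :=
    ((↑(U ∪ W) : Set V).toFinite.infinite_compl).exists_subset_ncard_eq (F.card + 1)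
  set Y := hY0fin.toFinset with hYdef
  have hYsub : ∀ y ∈ Y, y ∉ U ∧ y ∉ W := by
    intro y hy
    have := hY0sub (hY0fin.mem_toFinset.1 hy)
    simp only [Set.mem_compl_iff, Finset.coe_union, Set.mem_union, Finset.mem_coe] at this
    push_neg at this
    exact this
  have hYcard : Y.card = F.card + 1 := by
    rw [← hY0card, hYdef, Set.ncard_eq_toFinset_card _ hY0fin]
  have key : ∀ S ∈ Y.powerset, Disjoint (U ∪ S) (W ∪ (Y \ S)) := by
    intro S hS
    have hSY : S ⊆ Y := Finset.mem_powerset.1 hS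
    rw [Finset.disjoint_union_left, Finset.disjoint_union_right, Finset.disjoint_union_right]
    refine ⟨⟨hUW, ?_⟩, ?_, Finset.disjoint_sdiff⟩
    · exact Finset.disjoint_left.2 fun a ha ha' => (hYsub a (Finset.mem_sdiff.1 ha').1).1 ha
    · exact Finset.disjoint_left.2 fun a ha ha' => (hYsub a (hSY ha)).2 ha'
  choose! zf hz1 hz2 using fun S (hS : S ∈ Y.powerset) => h (U ∪ S) (W ∪ (Y \ S)) (key S hS)
  have hinj : Set.InjOn zf Y.powerset := by
    intro S hS S' hS' hEq
    by_contra hne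
    have hSY : S ⊆ Y := Finset.mem_powerset.1 hS
    have hSY' : S' ⊆ Y := Finset.mem_powerset.1 hS'
    have : ∃ y, (y ∈ S ∧ y ∉ S') ∨ (y ∈ S' ∧ y ∉ S) := by
      by_contra hc
      push_neg at hc
      exact hne (Finset.ext fun a => ⟨fun ha => (hc a).1 ha, fun ha => (hc a).2 ha⟩)
    obtain ⟨y, ⟨hy1, hy2⟩ | ⟨hy1, hy2⟩⟩ := this
    · have h1 : G.Adj (zf S) y := hz1 S hS y (Finset.mem_union_right _ hy1)
      have h2 : ¬ G.Adj (zf S') y := hz2 S' hS' y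
        (Finset.mem_union_right _ (Finset.mem_sdiff.2 ⟨hSY hy1, hy2⟩))
      rw [hEq] at h1; exact h2 h1
    · have h1 : G.Adj (zf S') y := hz1 S' hS' y (Finset.mem_union_right _ hy1)
      have h2 : ¬ G.Adj (zf S) y := hz2 S hS y
        (Finset.mem_union_right _ (Finset.mem_sdiff.2 ⟨hSY' hy1, hy2⟩))
      rw [hEq] at h2; exact h2 h1
  have hcard : (Y.powerset.image zf).card = 2 ^ (F.card + 1) := by
    rw [Finset.card_image_of_injOn hinj, Finset.card_powerset, hYcard]
  have hnots : ¬ (Y.powerset.image zf ⊆ F) := by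
    intro hsub
    have h1 := Finset.card_le_card hsub
    rw [hcard] at h1
    have := Nat.lt_two_pow_self (n := F.card + 1)
    omega
  obtain ⟨z, hzmem, hzF⟩ := Finset.not_subset.1 hnots
  obtain ⟨S, hS, rfl⟩ := Finset.mem_image.1 hzmem
  exact ⟨zf S, hzF, fun u hu => hz1 S hS u (Finset.mem_union_left _ hu),
    fun w hw => hz2 S hS w (Finset.mem_union_left _ hw)⟩


lemma star_isExtensionPair {V V' : Type*} [Infinite V'] (G : SimpleGraph V) (H : SimpleGraph V')
    (hH : ∀ U W : Finset V', Disjoint U W → ∃ z, (∀ u ∈ U, H.Adj z u) ∧ ∀ w ∈ W, ¬ H.Adj z w) :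
    @Language.IsExtensionPair Language.graph V V' G.structure H.structure := by
  classical
  letI := G.structure
  letI := H.structure
  rw [isExtensionPair_iff_exists_embedding_closure_singleton_sup]
  intro S hS f m
  -- S is finite
  haveI : Finite S := hS.finite
  have hSfin : (S : Set V).Finite := Set.toFinite _
  set D : Finset V := hSfin.toFinset with hD
  have hDmem : ∀ x, x ∈ D ↔ x ∈ S := by
    intro x; rw [hD, Set.Finite.mem_toFinset]; rfl
  -- translate f's relation preservation into adjacency form
  have hf2 : ∀ a b : S, H.Adj (f a) (f b) ↔ G.Adj a b := by
    intro a b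
    have := f.map_rel' (n := 2) .adj ![a, b]
    exact this
  -- the three finsets in V'
  set U : Finset V' := (D.attach.filter (fun d => G.Adj m d.1)).image
    (fun d => f ⟨d.1, (hDmem d.1).1 d.2⟩) with hU
  set W : Finset V' := (D.attach.filter (fun d => ¬ G.Adj m d.1)).image
    (fun d => f ⟨d.1, (hDmem d.1).1 d.2⟩) with hW
  set Fc : Finset V' := D.attach.image (fun d => f ⟨d.1, (hDmem d.1).1 d.2⟩) with hFc
  have hdisj : Disjoint U W := by
    rw [Finset.disjoint_left]
    rintro a ha ha'
    obtain ⟨d, hd, rfl⟩ := Finset.mem_image.1 ha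
    obtain ⟨d', hd', he⟩ := Finset.mem_image.1 ha'
    have : (⟨d'.1, (hDmem d'.1).1 d'.2⟩ : S) = ⟨d.1, (hDmem d.1).1 d.2⟩ := f.injective he
    have hdd : d'.1 = d.1 := Subtype.mk_eq_mk.1 this
    have h1 := (Finset.mem_filter.1 hd).2
    have h2 := (Finset.mem_filter.1 hd').2
    rw [hdd] at h2
    exact h2 h1
  obtain ⟨z, hzF, hzU, hzW⟩ := star_strong hH U W Fc hdisj
  have hzadj : ∀ (d : V) (hd : d ∈ S), H.Adj z (f ⟨d, hd⟩) ↔ G.Adj m d := by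
    intro d hd
    by_cases hadj : G.Adj m d
    · refine ⟨fun _ => hadj, fun _ => ?_⟩
      exact hzU _ (Finset.mem_image.2 ⟨⟨d, (hDmem d).2 hd⟩,
        Finset.mem_filter.2 ⟨Finset.mem_attach _ _, hadj⟩, rfl⟩)
    · refine ⟨fun hz => absurd hz ?_, fun h' => absurd h' hadj⟩
      exact hzW _ (Finset.mem_image.2 ⟨⟨d, (hDmem d).2 hd⟩,
        Finset.mem_filter.2 ⟨Finset.mem_attach _ _, hadj⟩, rfl⟩)
  have hzne : ∀ (d : V) (hd : d ∈ S), z ≠ f ⟨d, hd⟩ := by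
    intro d hd he
    exact hzF (he ▸ Finset.mem_image.2 ⟨⟨d, (hDmem d).2 hd⟩, Finset.mem_attach _ _, rfl⟩)
  -- membership in the extended substructure
  set T : Language.graph.Substructure V := Substructure.closure Language.graph {m} ⊔ S with hT
  have hTmem : ∀ x : V, x ∈ T ↔ x = m ∨ x ∈ S := by
    intro x
    have hTeq : T = Substructure.closure Language.graph ({m} ∪ (S : Set V)) := by
      rw [Substructure.closure_union, Substructure.closure_eq]
    rw [hTeq, Substructure.mem_closure_iff_of_isRelational]
    simp
  -- define the embedding
  have memS : ∀ (x : T), (x : V) ≠ m → (x : V) ∈ S := by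
    rintro ⟨x, hx⟩ hne
    rcases (hTmem x).1 hx with rfl | h
    · exact absurd rfl hne
    · exact h
  refine ⟨{ toFun := fun x => if hx : (x : V) ∈ S then f ⟨x, hx⟩ else z
            inj' := ?_
            map_fun' := fun {n} F _ => isEmptyElim F
            map_rel' := ?_ }, ?_⟩
  · rintro ⟨x, hx⟩ ⟨y, hy⟩ hxy
    simp only at hxy
    by_cases h1 : x ∈ S <;> by_cases h2 : y ∈ S
    · rw [dif_pos h1, dif_pos h2] at hxy
      have := f.injective hxy
      exact Subtype.ext (Subtype.mk_eq_mk.1 this)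
    · rw [dif_pos h1, dif_neg h2] at hxy
      exact absurd hxy.symm (hzne x h1)
    · rw [dif_neg h1, dif_pos h2] at hxy
      exact absurd hxy (hzne y h2)
    · have hx' : x = m := by rcases (hTmem x).1 hx with h | h; exact h; exact absurd h h1
      have hy' : y = m := by rcases (hTmem y).1 hy with h | h; exact h; exact absurd h h2
      exact Subtype.ext (hx'.trans hy'.symm)
  · intro n r x
    match n, r with
    | 2, .adj =>
      show H.Adj _ _ ↔ G.Adj _ _
      by_cases h1 : ((x 0 : T) : V) ∈ S <;> by_cases h2 : ((x 1 : T) : V) ∈ S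
      · simp only [Function.comp, dif_pos h1, dif_pos h2]
        exact hf2 ⟨x 0, h1⟩ ⟨x 1, h2⟩
      · have hy : ((x 1 : T) : V) = m := by
          rcases (hTmem _).1 (x 1).2 with h | h; exact h; exact absurd h h2
        simp only [Function.comp, dif_pos h1, dif_neg h2]
        rw [hy]
        constructor
        · intro h'; exact ((hzadj _ h1).1 h'.symm).symm
        · intro h'; exact ((hzadj _ h1).2 h'.symm).symm
      · have hy : ((x 0 : T) : V) = m := by
          rcases (hTmem _).1 (x 0).2 with h | h; exact h; exact absurd h h1
        simp only [Function.comp, dif_neg h1, dif_pos h2]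
        rw [hy]
        exact hzadj _ h2
      · have hy0 : ((x 0 : T) : V) = m := by
          rcases (hTmem _).1 (x 0).2 with h | h; exact h; exact absurd h h1
        have hy1 : ((x 1 : T) : V) = m := by
          rcases (hTmem _).1 (x 1).2 with h | h; exact h; exact absurd h h2
        simp only [Function.comp, dif_neg h1, dif_neg h2]
        rw [hy0, hy1]
        simp [H.loopless, G.loopless]
  · ext ⟨x, hx⟩
    show f ⟨x, hx⟩ = if h : ((((Substructure.inclusion (le_sup_right :
        S ≤ T)) ⟨x, hx⟩ : T)) : V) ∈ S then f ⟨_, h⟩ else z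
    have hmem : (((Substructure.inclusion (le_sup_right : S ≤ T)) ⟨x, hx⟩ : T) : V) ∈ S := hx
    rw [dif_pos hmem]
    congr 1


instance : IsEmpty (Language.graph.Constants) := ⟨fun c => c.elim⟩

instance : IsEmpty (Language.graph.Relations 0) := ⟨fun r => nomatch r⟩

lemma iso_of_star {V V' : Type*} [Countable V] [Infinite V] [Countable V'] [Infinite V']
    (G : SimpleGraph V) (H : SimpleGraph V')
    (hG : ∀ U W : Finset V, Disjoint U W → ∃ z, (∀ u ∈ U, G.Adj z u) ∧ ∀ w ∈ W, ¬ G.Adj z w)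
    (hH : ∀ U W : Finset V', Disjoint U W → ∃ z, (∀ u ∈ U, H.Adj z u) ∧ ∀ w ∈ W, ¬ H.Adj z w) :
    Nonempty (G ≃g H) := by
  letI := G.structure
  letI := H.structure
  obtain ⟨e, -⟩ := equiv_between_cg (Structure.cg_of_countable) (Structure.cg_of_countable)
    (default : Language.graph.FGEquiv V V')
    (star_isExtensionPair G H hH) (star_isExtensionPair H G hG)
  refine ⟨⟨e.toEquiv, ?_⟩⟩
  intro a b
  have := e.map_rel' (n := 2) .adj ![a, b]
  exact this

/-- a countably infinite simple graph is isomorphic to the Rado graph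
iff it satisfies property ⋆: for every two disjoint finite sets of vertices `U` and
`W` there is a vertex `z` adjacent to every vertex of `U` and to no vertex of `W`. -/
theorem stmt_2 {V : Type*} [Countable V] [Infinite V] (G : SimpleGraph V) :
    Nonempty (G ≃g Rado) ↔
      ∀ U W : Finset V, Disjoint U W →
        ∃ z : V, (∀ u ∈ U, G.Adj z u) ∧ ∀ w ∈ W, ¬ G.Adj z w := by
  constructor
  · rintro ⟨φ⟩ U W hUW
    obtain ⟨z, hz1, hz2⟩ := rado_star (U.image φ) (W.image φ)
      ((Finset.disjoint_image φ.injective).2 hUW)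
    refine ⟨φ.symm z, fun u hu => ?_, fun w hw hadj => ?_⟩
    · have := hz1 (φ u) (Finset.mem_image_of_mem _ hu)
      rw [← φ.apply_symm_apply z] at this
      exact φ.map_adj_iff.1 this
    · have := hz2 (φ w) (Finset.mem_image_of_mem _ hw)
      rw [← φ.apply_symm_apply z] at this
      exact this (φ.map_adj_iff.2 hadj)
  · intro hstar
    exact iso_of_star G Rado hstar rado_star
end

section
/- For every positive integer n, the Rado graph R admits a factorization into n factors each isomorphic to R, and the complete graph K_ℕ on vertex set ℕ admits a factorization into n + 1 factors each isomorphic to R. -/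
namespace Stmt4Aux


lemma sum_two_pow_lt {S : Finset ℕ} {a : ℕ} (h : ∀ x ∈ S, x < a) :
    (∑ i ∈ S, 2 ^ i) < 2 ^ a := by
  calc (∑ i ∈ S, 2 ^ i) ≤ ∑ i ∈ Finset.range a, 2 ^ i := by
        apply Finset.sum_le_sum_of_subset
        intro x hx; exact Finset.mem_range.2 (h x hx)
    _ < 2 ^ a := by
        have h1 := Nat.geomSum_eq (le_refl 2) a
        have h2 : 1 ≤ 2 ^ a := Nat.one_le_two_pow
        omega
        
lemma testBit_sum_two_pow (S : Finset ℕ) (k : ℕ) :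
    (∑ i ∈ S, 2 ^ i).testBit k = decide (k ∈ S) := by
  induction S using Finset.induction_on_max generalizing k with
  | empty => simp [Nat.zero_testBit]
  | insert a S ha ih =>
    have hnotmem : a ∉ S := fun h => lt_irrefl a (ha a h)
    rw [Finset.sum_insert hnotmem]
    have hs : (∑ i ∈ S, 2 ^ i) < 2 ^ a := sum_two_pow_lt ha
    rcases lt_trichotomy k a with h | h | h
    · rw [Nat.testBit_two_pow_add_gt h, ih]
      simp [Finset.mem_insert]
      omega
    · subst h
      rw [Nat.testBit_two_pow_add_eq, ih]
      simp [hnotmem]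
    · have hlt : 2 ^ a + (∑ i ∈ S, 2 ^ i) < 2 ^ k := by
        have : 2 ^ (a+1) ≤ 2 ^ k := Nat.pow_le_pow_right (by norm_num) h
        have : 2 ^ a + 2 ^ a ≤ 2 ^ k := by rw [← two_mul, ← pow_succ']; omega
        omega
      rw [Nat.testBit_lt_two_pow hlt]
      have : k ∉ insert a S := by
        simp [Finset.mem_insert]
        constructor
        · omega
        · intro hk; exact absurd (ha k hk) (by omega)
      simp [this]



/-- Extension property: strong form where the witness dominates `U ∪ V`. -/
def ExtProp (G : SimpleGraph ℕ) : Prop :=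
  ∀ U V : Finset ℕ, Disjoint U V → ∃ z : ℕ, (∀ x ∈ U ∪ V, x < z) ∧
    (∀ u ∈ U, G.Adj z u) ∧ (∀ v ∈ V, ¬ G.Adj z v)

structure PIso (G H : SimpleGraph ℕ) where
  s : Finset ℕ
  t : Finset ℕ
  f : ℕ → ℕ
  g : ℕ → ℕ
  mapsF : ∀ x ∈ s, f x ∈ t
  mapsG : ∀ y ∈ t, g y ∈ s
  gf : ∀ x ∈ s, g (f x) = x
  fg : ∀ y ∈ t, f (g y) = y
  adj : ∀ x ∈ s, ∀ x' ∈ s, G.Adj x x' ↔ H.Adj (f x) (f x')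

variable {G H : SimpleGraph ℕ}

def PIso.flip (p : PIso G H) : PIso H G where
  s := p.t
  t := p.s
  f := p.g
  g := p.f
  mapsF := p.mapsG
  mapsG := p.mapsF
  gf := p.fg
  fg := p.gf
  adj := by
    intro y hy y' hy'
    rw [p.adj (p.g y) (p.mapsG y hy) (p.g y') (p.mapsG y' hy'), p.fg y hy, p.fg y' hy']

def PIso.le (p q : PIso G H) : Prop :=
  p.s ⊆ q.s ∧ p.t ⊆ q.t ∧ (∀ x ∈ p.s, q.f x = p.f x) ∧ (∀ y ∈ p.t, q.g y = p.g y)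

lemma PIso.le_refl (p : PIso G H) : p.le p := ⟨subset_rfl, subset_rfl, fun _ _ => rfl, fun _ _ => rfl⟩

lemma PIso.le_trans {p q r : PIso G H} (h1 : p.le q) (h2 : q.le r) : p.le r := by
  obtain ⟨a1, b1, c1, d1⟩ := h1
  obtain ⟨a2, b2, c2, d2⟩ := h2
  exact ⟨a1.trans a2, b1.trans b2,
    fun x hx => (c2 x (a1 hx)).trans (c1 x hx),
    fun y hy => (d2 y (b1 hy)).trans (d1 y hy)⟩

lemma PIso.le_flip {p q : PIso G H} (h : p.le q) : p.flip.le q.flip :=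
  ⟨h.2.1, h.1, h.2.2.2, h.2.2.1⟩

lemma PIso.injOn (p : PIso G H) {x x' : ℕ} (hx : x ∈ p.s) (hx' : x' ∈ p.s)
    (h : p.f x = p.f x') : x = x' := by
  rw [← p.gf x hx, ← p.gf x' hx', h]

/-- Extend the domain of a partial isomorphism to contain `x`. -/
lemma PIso.extend (eH : ExtProp H) (p : PIso G H) (x : ℕ) :
    ∃ q : PIso G H, p.le q ∧ x ∈ q.s := by
  classical
  by_cases hx : x ∈ p.s
  · exact ⟨p, p.le_refl, hx⟩
  set U : Finset ℕ := (p.s.filter (G.Adj x)).image p.f with hU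
  set V : Finset ℕ := p.t \ U with hV
  have hUt : U ⊆ p.t := by
    intro y hy
    simp only [hU, Finset.mem_image, Finset.mem_filter] at hy
    obtain ⟨x', ⟨hx', _⟩, rfl⟩ := hy
    exact p.mapsF x' hx'
  have hUV : U ∪ V = p.t := Finset.union_sdiff_of_subset hUt
  obtain ⟨z, hzlt, hzU, hzV⟩ := eH U V (Finset.disjoint_sdiff)
  have hzt : z ∉ p.t := by
    rw [← hUV]; intro hz
    exact lt_irrefl z (hzlt z hz)
  -- key adjacency fact
  have key : ∀ x' ∈ p.s, (G.Adj x x' ↔ H.Adj z (p.f x')) := by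
    intro x' hx'
    constructor
    · intro h
      exact hzU _ (Finset.mem_image_of_mem _ (Finset.mem_filter.2 ⟨hx', h⟩))
    · intro h
      by_contra hc
      apply hzV (p.f x')
      · rw [hV, Finset.mem_sdiff]
        refine ⟨p.mapsF x' hx', ?_⟩
        intro hmem
        simp only [hU, Finset.mem_image, Finset.mem_filter] at hmem
        obtain ⟨x'', ⟨hx'', hadj⟩, heq⟩ := hmem
        rw [p.injOn hx'' hx' heq] at hadj
        exact hc hadj
      · exact h
  have hfne : ∀ x' ∈ p.s, p.f x' ≠ z := fun x' hx' h => hzt (h ▸ p.mapsF x' hx')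
  refine ⟨⟨insert x p.s, insert z p.t, Function.update p.f x z, Function.update p.g z x,
    ?_, ?_, ?_, ?_, ?_⟩, ⟨Finset.subset_insert _ _, Finset.subset_insert _ _, ?_, ?_⟩,
    Finset.mem_insert_self _ _⟩
  · intro x' hx'
    rcases Finset.mem_insert.1 hx' with rfl | hx'
    · rw [Function.update_self]; exact Finset.mem_insert_self _ _
    · have hne : x' ≠ x := fun h => hx (h ▸ hx')
      rw [Function.update_of_ne hne]
      exact Finset.mem_insert_of_mem (p.mapsF x' hx')
  · intro y hy
    rcases Finset.mem_insert.1 hy with rfl | hy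
    · rw [Function.update_self]; exact Finset.mem_insert_self _ _
    · have hne : y ≠ z := fun h => hzt (h ▸ hy)
      rw [Function.update_of_ne hne]
      exact Finset.mem_insert_of_mem (p.mapsG y hy)
  · intro x' hx'
    rcases Finset.mem_insert.1 hx' with rfl | hx'
    · rw [Function.update_self, Function.update_self]
    · have hne : x' ≠ x := fun h => hx (h ▸ hx')
      rw [Function.update_of_ne hne, Function.update_of_ne (hfne x' hx'), p.gf x' hx']
  · intro y hy
    rcases Finset.mem_insert.1 hy with rfl | hy
    · rw [Function.update_self, Function.update_self]
    · have hne : y ≠ z := fun h => hzt (h ▸ hy)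
      have hgs : p.g y ∈ p.s := p.mapsG y hy
      have hne2 : p.g y ≠ x := fun h => hx (h ▸ hgs)
      rw [Function.update_of_ne hne, Function.update_of_ne hne2, p.fg y hy]
  · intro x1 hx1 x2 hx2
    rcases Finset.mem_insert.1 hx1 with h1 | h1 <;> rcases Finset.mem_insert.1 hx2 with h2 | h2
    · rw [h1, h2]; simp
    · have hne : x2 ≠ x := fun h => hx (h ▸ h2)
      rw [h1, Function.update_self, Function.update_of_ne hne]
      exact key x2 h2
    · have hne : x1 ≠ x := fun h => hx (h ▸ h1)
      rw [h2, Function.update_self, Function.update_of_ne hne]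
      rw [G.adj_comm, H.adj_comm]
      exact key x1 h1
    · have hne1 : x1 ≠ x := fun h => hx (h ▸ h1)
      have hne2 : x2 ≠ x := fun h => hx (h ▸ h2)
      rw [Function.update_of_ne hne1, Function.update_of_ne hne2]
      exact p.adj x1 h1 x2 h2
  · intro x' hx'
    have hne : x' ≠ x := fun h => hx (h ▸ hx')
    exact Function.update_of_ne hne _ _
  · intro y hy
    have hne : y ≠ z := fun h => hzt (h ▸ hy)
    exact Function.update_of_ne hne _ _

lemma PIso.extend2 (eG : ExtProp G) (eH : ExtProp H) (p : PIso G H) (k : ℕ) :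
    ∃ q : PIso G H, p.le q ∧ k ∈ q.s ∧ k ∈ q.t := by
  obtain ⟨q1, hq1, hk1⟩ := p.extend eH k
  obtain ⟨q2, hq2, hk2⟩ := q1.flip.extend eG k
  exact ⟨q2.flip, PIso.le_trans hq1 (PIso.le_flip hq2), hq2.2.1 hk1, hk2⟩

noncomputable def empty (G H : SimpleGraph ℕ) : PIso G H :=
  ⟨∅, ∅, id, id, by simp, by simp, by simp, by simp, by simp⟩

noncomputable def chain (eG : ExtProp G) (eH : ExtProp H) : ℕ → PIso G H
  | 0 => empty G H
  | k + 1 => ((chain eG eH k).extend2 eG eH k).choose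

lemma chain_le (eG : ExtProp G) (eH : ExtProp H) (k : ℕ) :
    (chain eG eH k).le (chain eG eH (k + 1)) :=
  ((chain eG eH k).extend2 eG eH k).choose_spec.1

lemma chain_mem (eG : ExtProp G) (eH : ExtProp H) (k : ℕ) :
    k ∈ (chain eG eH (k + 1)).s ∧ k ∈ (chain eG eH (k + 1)).t :=
  ((chain eG eH k).extend2 eG eH k).choose_spec.2

lemma chain_mono (eG : ExtProp G) (eH : ExtProp H) {k m : ℕ} (h : k ≤ m) :
    (chain eG eH k).le (chain eG eH m) := by
  induction m with
  | zero => rw [Nat.le_zero.1 h]; exact PIso.le_refl _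
  | succ m ih =>
    rcases Nat.lt_or_ge k (m + 1) with h' | h'
    · exact PIso.le_trans (ih (Nat.lt_succ_iff.1 h')) (chain_le eG eH m)
    · rw [Nat.le_antisymm h h']; exact PIso.le_refl _

theorem iso_of_ext (eG : ExtProp G) (eH : ExtProp H) : Nonempty (G ≃g H) := by
  set c := chain eG eH with hc
  set F : ℕ → ℕ := fun x => (c (x + 1)).f x with hF
  set F' : ℕ → ℕ := fun y => (c (y + 1)).g y with hF'
  have hmemS : ∀ x, x ∈ (c (x + 1)).s := fun x => (chain_mem eG eH x).1
  have hmemT : ∀ y, y ∈ (c (y + 1)).t := fun y => (chain_mem eG eH y).2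
  have hfeq : ∀ {k} x, x ∈ (c k).s → (c k).f x = F x := by
    intro k x hx
    have h1 := (chain_mono eG eH (le_max_left k (x + 1))).2.2.1 x hx
    have h2 := (chain_mono eG eH (le_max_right k (x + 1))).2.2.1 x (hmemS x)
    rw [← h1, h2]
  have hgeq : ∀ {k} y, y ∈ (c k).t → (c k).g y = F' y := by
    intro k y hy
    have h1 := (chain_mono eG eH (le_max_left k (y + 1))).2.2.2 y hy
    have h2 := (chain_mono eG eH (le_max_right k (y + 1))).2.2.2 y (hmemT y)
    rw [← h1, h2]
  have hleft : ∀ x, F' (F x) = x := by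
    intro x
    have h1 : (c (x + 1)).f x ∈ (c (x + 1)).t := (c (x + 1)).mapsF x (hmemS x)
    rw [hF, ← hgeq _ h1]
    exact (c (x + 1)).gf x (hmemS x)
  have hright : ∀ y, F (F' y) = y := by
    intro y
    have h1 : (c (y + 1)).g y ∈ (c (y + 1)).s := (c (y + 1)).mapsG y (hmemT y)
    rw [hF', ← hfeq _ h1]
    exact (c (y + 1)).fg y (hmemT y)
  have hadj : ∀ x y, G.Adj x y ↔ H.Adj (F x) (F y) := by
    intro x y
    set m := max (x + 1) (y + 1) with hm
    have hxm : x ∈ (c m).s := (chain_mono eG eH (le_max_left _ _)).1 (hmemS x)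
    have hym : y ∈ (c m).s := (chain_mono eG eH (le_max_right _ _)).1 (hmemS y)
    rw [← hfeq x hxm, ← hfeq y hym]
    exact (c m).adj x hxm y hym
  exact ⟨⟨⟨F, F', hleft, hright⟩, fun {a b} => (hadj a b).symm⟩⟩




/-- `a`-th factor of the Rado graph: edges `{i,j}` with `i<j`, bit `i` of `j` set,
and `log₂ j ≡ a mod n`. -/
def Pt (n a : ℕ) : SimpleGraph ℕ :=
  SimpleGraph.fromRel (fun i j => i < j ∧ (Nat.testBit j i ∧ Nat.log 2 j % n = a))

/-- The "complement of Rado" graph. -/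
def Cp : SimpleGraph ℕ :=
  SimpleGraph.fromRel (fun i j => i < j ∧ ¬ Nat.testBit j i)

lemma adj_fromRel_of_lt {c : ℕ → ℕ → Prop} {u z : ℕ} (h : u < z) :
    (SimpleGraph.fromRel fun i j => i < j ∧ c i j).Adj z u ↔ c u z := by
  rw [SimpleGraph.fromRel_adj]
  constructor
  · rintro ⟨-, ⟨h1, -⟩ | ⟨-, h2⟩⟩
    · omega
    · exact h2
  · intro hc
    exact ⟨by omega, Or.inr ⟨h, hc⟩⟩

/-- Generic witness construction: `z = ∑_{i ∈ insert N S} 2^i`. -/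
lemma witness_spec (S : Finset ℕ) (N : ℕ) (hN : ∀ x ∈ S, x < N) :
    let z := ∑ i ∈ insert N S, 2 ^ i
    (∀ k, z.testBit k = decide (k ∈ S ∨ k = N)) ∧ 2 ^ N ≤ z ∧ z < 2 ^ (N + 1) ∧
      ∀ x, x < N → x < z := by
  intro z
  have hNS : N ∉ S := fun h => lt_irrefl N (hN N h)
  have hsum : z = 2 ^ N + ∑ i ∈ S, 2 ^ i := Finset.sum_insert hNS
  have hlt : (∑ i ∈ S, 2 ^ i) < 2 ^ N := sum_two_pow_lt hN
  refine ⟨?_, ?_, ?_, ?_⟩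
  · intro k
    rw [show z = ∑ i ∈ insert N S, 2 ^ i from rfl, testBit_sum_two_pow]
    simp [Finset.mem_insert, Bool.or_comm]
  · omega
  · rw [pow_succ]; omega
  · intro x hx
    have : N < 2 ^ N := Nat.lt_two_pow_self
    omega

lemma extProp_Rado : ExtProp Rado := by
  intro U V hUV
  set N := (U ∪ V).sup id + 1 with hN
  have hmax : ∀ x ∈ U ∪ V, x < N := fun x hx =>
    Nat.lt_succ_of_le (Finset.le_sup (f := id) hx)
  have hU : ∀ x ∈ U, x < N := fun x hx => hmax x (Finset.mem_union_left _ hx)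
  obtain ⟨hbit, hle, hlt, hdom⟩ := witness_spec U N hU
  set z := ∑ i ∈ insert N U, 2 ^ i with hz
  refine ⟨z, fun x hx => hdom x (hmax x hx), ?_, ?_⟩
  · intro u hu
    rw [show Rado = SimpleGraph.fromRel (fun i j => i < j ∧ Nat.testBit j i) from rfl,
      adj_fromRel_of_lt (hdom u (hU u hu))]
    rw [hbit u]; simp; exact Or.inl hu
  · intro v hv
    have hvN : v < N := hmax v (Finset.mem_union_right _ hv)
    rw [show Rado = SimpleGraph.fromRel (fun i j => i < j ∧ Nat.testBit j i) from rfl,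
      adj_fromRel_of_lt (hdom v hvN)]
    rw [hbit v]
    simp
    constructor
    · exact fun h => Finset.disjoint_right.1 hUV hv h
    · omega

lemma extProp_Pt {n a : ℕ} (hn : 0 < n) (ha : a < n) : ExtProp (Pt n a) := by
  intro U V hUV
  set M := (U ∪ V).sup id with hM
  have hmax : ∀ x ∈ U ∪ V, x ≤ M := fun x hx => Finset.le_sup (f := id) hx
  set N := n * (M + 1) + a with hNdef
  have hMN : M < N := by
    have : M + 1 ≤ n * (M + 1) := Nat.le_mul_of_pos_left _ hn
    omega
  have hU : ∀ x ∈ U, x < N := fun x hx =>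
    lt_of_le_of_lt (hmax x (Finset.mem_union_left _ hx)) hMN
  obtain ⟨hbit, hle, hlt, hdom⟩ := witness_spec U N hU
  set z := ∑ i ∈ insert N U, 2 ^ i with hz
  have hlog : Nat.log 2 z = N := Nat.log_eq_of_pow_le_of_lt_pow hle hlt
  have hmod : Nat.log 2 z % n = a := by
    rw [hlog, hNdef, Nat.mul_add_mod, Nat.mod_eq_of_lt ha]
  refine ⟨z, fun x hx => hdom x (lt_of_le_of_lt (hmax x hx) hMN), ?_, ?_⟩
  · intro u hu
    rw [show Pt n a = SimpleGraph.fromRel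
      (fun i j => i < j ∧ (Nat.testBit j i ∧ Nat.log 2 j % n = a)) from rfl,
      adj_fromRel_of_lt (hdom u (hU u hu))]
    refine ⟨?_, hmod⟩
    rw [hbit u]; simp; exact Or.inl hu
  · intro v hv
    have hvN : v < N := lt_of_le_of_lt (hmax v (Finset.mem_union_right _ hv)) hMN
    rw [show Pt n a = SimpleGraph.fromRel
      (fun i j => i < j ∧ (Nat.testBit j i ∧ Nat.log 2 j % n = a)) from rfl,
      adj_fromRel_of_lt (hdom v hvN)]
    rintro ⟨hb, -⟩
    rw [hbit v] at hb
    simp at hb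
    rcases hb with h | h
    · exact Finset.disjoint_right.1 hUV hv h
    · omega

lemma extProp_Cp : ExtProp Cp := by
  intro U V hUV
  set N := (U ∪ V).sup id + 1 with hN
  have hmax : ∀ x ∈ U ∪ V, x < N := fun x hx =>
    Nat.lt_succ_of_le (Finset.le_sup (f := id) hx)
  have hV : ∀ x ∈ V, x < N := fun x hx => hmax x (Finset.mem_union_right _ hx)
  obtain ⟨hbit, hle, hlt, hdom⟩ := witness_spec V N hV
  set z := ∑ i ∈ insert N V, 2 ^ i with hz
  refine ⟨z, fun x hx => hdom x (hmax x hx), ?_, ?_⟩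
  · intro u hu
    have huN : u < N := hmax u (Finset.mem_union_left _ hu)
    rw [show Cp = SimpleGraph.fromRel (fun i j => i < j ∧ ¬ Nat.testBit j i) from rfl,
      adj_fromRel_of_lt (hdom u huN)]
    rw [hbit u]
    simp
    constructor
    · exact fun h => Finset.disjoint_left.1 hUV hu h
    · omega
  · intro v hv
    have hvN : v < N := hV v hv
    rw [show Cp = SimpleGraph.fromRel (fun i j => i < j ∧ ¬ Nat.testBit j i) from rfl,
      adj_fromRel_of_lt (hdom v hvN)]
    intro hb
    apply hb
    rw [hbit v]; simp; exact Or.inl hv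


lemma pt_le_rado (n a : ℕ) : Pt n a ≤ Rado := by
  intro i j h
  simp only [Pt, SimpleGraph.fromRel_adj] at h
  simp only [Rado, SimpleGraph.fromRel_adj]
  obtain ⟨hne, h⟩ := h
  exact ⟨hne, by tauto⟩

lemma key1 (n : ℕ) (hn : 0 < n) {i j : ℕ} (hij : i < j) (hb : Nat.testBit j i) :
    ∃! a : Fin n, s(i, j) ∈ (Pt n a.val).edgeSet := by
  refine ⟨⟨Nat.log 2 j % n, Nat.mod_lt _ hn⟩, ?_, ?_⟩
  · beta_reduce
    rw [SimpleGraph.mem_edgeSet]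
    simp only [Pt, SimpleGraph.fromRel_adj]
    exact ⟨by omega, Or.inl ⟨hij, hb, by trivial⟩⟩
  · intro a hA
    rw [SimpleGraph.mem_edgeSet] at hA
    simp only [Pt, SimpleGraph.fromRel_adj] at hA
    obtain ⟨-, h | h⟩ := hA
    · exact Fin.ext h.2.2.symm
    · omega

lemma key2 (n : ℕ) (hn : 0 < n) {i j : ℕ} (hij : i < j) :
    ∃! a : Fin (n + 1),
      s(i, j) ∈ (if a.val = n then Cp else Pt n a.val).edgeSet := by
  by_cases hb : Nat.testBit j i
  · refine ⟨⟨Nat.log 2 j % n, lt_trans (Nat.mod_lt _ hn) (Nat.lt_succ_self n)⟩, ?_, ?_⟩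
    · have hne : (Nat.log 2 j % n) ≠ n := Nat.ne_of_lt (Nat.mod_lt _ hn)
      beta_reduce
      rw [if_neg hne, SimpleGraph.mem_edgeSet]
      simp only [Pt, SimpleGraph.fromRel_adj]
      exact ⟨by omega, Or.inl ⟨hij, hb, by trivial⟩⟩
    · intro a hA
      by_cases hv : a.val = n
      · rw [if_pos hv, SimpleGraph.mem_edgeSet] at hA
        simp only [Cp, SimpleGraph.fromRel_adj] at hA
        obtain ⟨-, h | h⟩ := hA
        · exact absurd hb h.2
        · omega
      · rw [if_neg hv, SimpleGraph.mem_edgeSet] at hA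
        simp only [Pt, SimpleGraph.fromRel_adj] at hA
        obtain ⟨-, h | h⟩ := hA
        · exact Fin.ext h.2.2.symm
        · omega
  · refine ⟨⟨n, Nat.lt_succ_self n⟩, ?_, ?_⟩
    · beta_reduce
      rw [if_pos rfl, SimpleGraph.mem_edgeSet]
      simp only [Cp, SimpleGraph.fromRel_adj]
      exact ⟨by omega, Or.inl ⟨hij, hb⟩⟩
    · intro a hA
      by_cases hv : a.val = n
      · exact Fin.ext hv
      · rw [if_neg hv, SimpleGraph.mem_edgeSet] at hA
        simp only [Pt, SimpleGraph.fromRel_adj] at hA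
        obtain ⟨-, h | h⟩ := hA
        · exact absurd h.2.1 hb
        · omega

end Stmt4Aux

/-- for every `n ≥ 1`, the Rado graph can be factorized into `n`
copies of itself, and the complete graph `K_ℕ` can be factorized into `n + 1`
copies of the Rado graph. -/
theorem stmt_4 (n : ℕ) (hn : 1 ≤ n) :
    (∃ G : Fin n → SimpleGraph ℕ, IsFactorization Rado G ∧
        ∀ i, Nonempty (Rado ≃g G i)) ∧
      ∃ G : Fin (n + 1) → SimpleGraph ℕ, IsFactorization (⊤ : SimpleGraph ℕ) G ∧
        ∀ i, Nonempty (Rado ≃g G i) := by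
  open Stmt4Aux in
  have hn0 : 0 < n := hn
  constructor
  · refine ⟨fun a => Stmt4Aux.Pt n a.val, ⟨fun a => Stmt4Aux.pt_le_rado n a.val, ?_⟩, ?_⟩
    · intro e
      induction e using Sym2.ind with
      | _ i j =>
        intro he
        rw [SimpleGraph.mem_edgeSet] at he
        simp only [Rado, SimpleGraph.fromRel_adj] at he
        obtain ⟨hne, ⟨hij, hb⟩ | ⟨hji, hb⟩⟩ := he
        · exact Stmt4Aux.key1 n hn0 hij hb
        · rw [Sym2.eq_swap]
          exact Stmt4Aux.key1 n hn0 hji hb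
    · intro a
      exact Stmt4Aux.iso_of_ext Stmt4Aux.extProp_Rado (Stmt4Aux.extProp_Pt hn0 a.isLt)
  · refine ⟨fun a => if a.val = n then Stmt4Aux.Cp else Stmt4Aux.Pt n a.val,
      ⟨fun a => le_top, ?_⟩, ?_⟩
    · intro e
      induction e using Sym2.ind with
      | _ i j =>
        intro he
        rw [SimpleGraph.mem_edgeSet, SimpleGraph.top_adj] at he
        rcases lt_or_gt_of_ne he with hij | hji
        · exact Stmt4Aux.key2 n hn0 hij
        · rw [Sym2.eq_swap]
          exact Stmt4Aux.key2 n hn0 hji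
    · intro a
      by_cases hv : a.val = n
      · beta_reduce
        rw [if_pos hv]
        exact Stmt4Aux.iso_of_ext Stmt4Aux.extProp_Rado Stmt4Aux.extProp_Cp
      · beta_reduce
        rw [if_neg hv]
        have : a.val < n := lt_of_le_of_ne (Nat.lt_succ_iff.1 a.isLt) hv
        exact Stmt4Aux.iso_of_ext Stmt4Aux.extProp_Rado (Stmt4Aux.extProp_Pt hn0 this)
end

section
/- Let F be a countable graph with no finite dominating set. Then for every edge e of the Rado graph R there exists a graph embedding σ_e of F into R (an isomorphism of F onto the subgraph σ_e(F) of R) such that: (1) σ_e(F) is a spanning subgraph of R containing the edge e; and (2) the graph R \ σ_e(F), obtained from R by deleting the edges of σ_e(F), is isomorphic to R. -/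
namespace Stmt5

open scoped Classical

/-- Extension property -/
def EP (G : SimpleGraph ℕ) : Prop :=
  ∀ A B : Finset ℕ, Disjoint A B →
    ∃ v, v ∉ A ∧ v ∉ B ∧ (∀ a ∈ A, G.Adj v a) ∧ (∀ b ∈ B, ¬ G.Adj v b)

instance : Std.Commutative (fun x y : ℕ => x ||| y) := ⟨Nat.lor_comm⟩
instance : Std.Associative (fun x y : ℕ => x ||| y) := ⟨Nat.lor_assoc⟩

lemma testBit_fold (S : Finset ℕ) (i : ℕ) :
    Nat.testBit (S.fold (fun x y : ℕ => x ||| y) 0 (fun a => 2 ^ a)) i = true ↔ i ∈ S := by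
  classical
  induction S using Finset.induction_on with
  | empty => simp [Nat.zero_testBit]
  | insert _ _ hnotin ih =>
    rename_i a S
    rw [Finset.fold_insert hnotin]
    rw [Nat.testBit_lor]
    simp only [Bool.or_eq_true, ih, Finset.mem_insert]
    constructor
    · rintro (h | h)
      · left
        by_contra hne
        rw [Nat.testBit_two_pow_of_ne (fun he => hne he.symm)] at h
        exact Bool.false_ne_true h
      · exact Or.inr h
    · rintro (rfl | h)
      · exact Or.inl Nat.testBit_two_pow_self
      · exact Or.inr h

lemma rado_EP : EP Rado := by
  intro A B hAB
  set N := (A ∪ B).sup id + 1 with hNdef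
  have hN : ∀ x ∈ A ∪ B, x < N := fun x hx =>
    Nat.lt_succ_of_le (Finset.le_sup (f := id) hx)
  set v := (insert N A).fold (fun x y : ℕ => x ||| y) 0 (fun a => 2 ^ a) with hvdef
  have hbit : ∀ i, Nat.testBit v i = true ↔ i ∈ insert N A := fun i => testBit_fold _ i
  have hvN : 2 ^ N ≤ v := by
    by_contra h
    push_neg at h
    have h1 := Nat.testBit_eq_false_of_lt h
    have h2 : Nat.testBit v N = true := (hbit N).2 (Finset.mem_insert_self _ _)
    rw [h1] at h2
    exact Bool.false_ne_true h2
  have hlt : ∀ x ∈ A ∪ B, x < v := fun x hx =>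
    lt_of_lt_of_le (lt_of_lt_of_le (hN x hx) (le_of_lt (Nat.lt_two_pow_self (n := N)))) hvN
  refine ⟨v, ?_, ?_, ?_, ?_⟩
  · intro hv
    exact lt_irrefl v (hlt v (Finset.mem_union_left _ hv))
  · intro hv
    exact lt_irrefl v (hlt v (Finset.mem_union_right _ hv))
  · intro a ha
    have hav : a < v := hlt a (Finset.mem_union_left _ ha)
    rw [Rado, SimpleGraph.fromRel_adj]
    exact ⟨(Nat.ne_of_lt hav).symm,
      Or.inr ⟨hav, (hbit a).2 (Finset.mem_insert_of_mem ha)⟩⟩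
  · intro b hb
    have hbv : b < v := hlt b (Finset.mem_union_right _ hb)
    rw [Rado, SimpleGraph.fromRel_adj]
    rintro ⟨hne, ⟨hvb, -⟩ | ⟨-, htb⟩⟩
    · exact absurd hvb (not_lt.2 (le_of_lt hbv))
    · rcases Finset.mem_insert.1 ((hbit b).1 htb) with hbN | hbA
      · exact lt_irrefl N (hbN ▸ hN b (Finset.mem_union_right _ hb))
      · exact Finset.disjoint_left.1 hAB hbA hb

section Chain

variable {γ : Type*}

lemma exists_chain (P : List γ → Prop) (Q : List γ → γ → Prop) (init : List γ)
    (h0 : P init) (hstep : ∀ l, P l → ∃ p, P (l ++ [p]) ∧ Q l p) :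
    ∃ c : ℕ → List γ, c 0 = init ∧ (∀ n, P (c n)) ∧
      (∀ n, ∃ p, c (n + 1) = c n ++ [p] ∧ Q (c n) p) := by
  choose f hf hq using hstep
  let step : {l : List γ // P l} → {l : List γ // P l} :=
    fun s => ⟨s.1 ++ [f s.1 s.2], hf s.1 s.2⟩
  refine ⟨fun n => (step^[n] ⟨init, h0⟩).1, rfl, fun n => (step^[n] ⟨init, h0⟩).2, fun n => ?_⟩
  refine ⟨f (step^[n] ⟨init, h0⟩).1 (step^[n] ⟨init, h0⟩).2, ?_, hq _ _⟩
  show (step^[n+1] ⟨init, h0⟩).1 = _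
  rw [Function.iterate_succ_apply']

lemma chain_prefix {c : ℕ → List γ} (hc : ∀ n, ∃ p, c (n + 1) = c n ++ [p]) :
    ∀ {m n}, m ≤ n → c m <+: c n := by
  intro m n h
  induction n with
  | zero => rw [Nat.le_zero.1 h]
  | succ n ih =>
    rcases Nat.lt_or_ge m (n+1) with h' | h'
    · obtain ⟨p, hp⟩ := hc n
      rw [hp]
      exact (ih (Nat.lt_succ_iff.1 h')).trans (List.prefix_append _ _)
    · rw [Nat.le_antisymm h h']

lemma chain_mem_mono {c : ℕ → List γ} (hc : ∀ n, ∃ p, c (n + 1) = c n ++ [p])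
    {m n : ℕ} (h : m ≤ n) {x : γ} (hx : x ∈ c m) : x ∈ c n :=
  (chain_prefix hc h).subset hx

lemma chain_length {c : ℕ → List γ} (hc : ∀ n, ∃ p, c (n + 1) = c n ++ [p]) (n : ℕ) :
    (c n).length = (c 0).length + n := by
  induction n with
  | zero => rfl
  | succ n ih =>
    obtain ⟨p, hp⟩ := hc n
    rw [hp, List.length_append, ih, List.length_singleton, Nat.add_assoc]

lemma chain_getElem? {c : ℕ → List γ} (hc : ∀ n, ∃ p, c (n + 1) = c n ++ [p])
    {m n i : ℕ} (h : m ≤ n) {x : γ} (hx : (c m)[i]? = some x) : (c n)[i]? = some x := by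
  obtain ⟨t, ht⟩ := chain_prefix hc h
  rw [← ht, List.getElem?_append, if_pos (by
    rcases List.getElem?_eq_some_iff.1 hx with ⟨hlt, -⟩
    exact hlt)]
  exact hx

end Chain

lemma equiv_of_rel {α β : Type*} (S : α → β → Prop)
    (tot1 : ∀ a, ∃ b, S a b) (tot2 : ∀ b, ∃ a, S a b)
    (fun1 : ∀ a b b', S a b → S a b' → b = b')
    (fun2 : ∀ a a' b, S a b → S a' b → a = a') :
    ∃ e : α ≃ β, ∀ a b, S a b ↔ e a = b := by
  choose f hf using tot1
  choose g hg using tot2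
  refine ⟨⟨f, g, fun a => fun2 _ _ _ (hg (f a)) (hf a), fun b => fun1 _ _ _ (hf (g b)) (hg b)⟩,
    fun a b => ⟨fun h => fun1 _ _ _ (hf a) h, fun h => h ▸ hf a⟩⟩

/-- least natural number not occurring in `L` -/
noncomputable def mex (L : List ℕ) : ℕ :=
  Nat.find (p := fun m => m ∉ L) (by
    obtain ⟨x, hx⟩ := Infinite.exists_notMem_finset L.toFinset
    exact ⟨x, fun h => hx (List.mem_toFinset.2 h)⟩)

lemma mex_not_mem (L : List ℕ) : mex L ∉ L := by
  have := Nat.find_spec (p := fun m => m ∉ L) (by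
    obtain ⟨x, hx⟩ := Infinite.exists_notMem_finset L.toFinset
    exact ⟨x, fun h => hx (List.mem_toFinset.2 h)⟩)
  exact this

lemma mex_eq_of (L : List ℕ) {m : ℕ} (h1 : m ∉ L) (h2 : ∀ k < m, k ∈ L) : mex L = m := by
  refine le_antisymm (Nat.find_le h1) ?_
  by_contra h
  push_neg at h
  exact mex_not_mem L (h2 _ h)

lemma coverage {c : ℕ → List ℕ}
    (mono : ∀ {m n : ℕ}, m ≤ n → ∀ {x}, x ∈ c m → x ∈ c n)
    (hstep : ∀ n, ∃ n' ≥ n, ∀ m, m ∉ c n' → (∀ k < m, k ∈ c n') → m ∈ c (n' + 1)) :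
    ∀ m, ∃ n, m ∈ c n := by
  have aux : ∀ m, ∃ n, ∀ k < m, k ∈ c n := by
    intro m
    induction m with
    | zero => exact ⟨0, by omega⟩
    | succ m ih =>
      obtain ⟨n1, hn1⟩ := ih
      -- get m itself
      obtain ⟨n', hn', hins⟩ := hstep n1
      by_cases hm : m ∈ c n'
      · exact ⟨n', fun k hk => by
          rcases Nat.lt_succ_iff_lt_or_eq.1 hk with hk | rfl
          · exact mono hn' (hn1 k hk)
          · exact hm⟩
      · refine ⟨n' + 1, fun k hk => ?_⟩
        rcases Nat.lt_succ_iff_lt_or_eq.1 hk with hk | rfl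
        · exact mono (Nat.le_succ_of_le hn') (hn1 k hk)
        · exact hins k hm (fun j hj => mono hn' (hn1 j hj))
  intro m
  obtain ⟨n, hn⟩ := aux (m + 1)
  exact ⟨n, hn m (Nat.lt_succ_self m)⟩


section BackForth

variable (G H : SimpleGraph ℕ)

def BFInv (l : List (ℕ × ℕ)) : Prop :=
  (l.map Prod.fst).Nodup ∧ (l.map Prod.snd).Nodup ∧
    ∀ p ∈ l, ∀ q ∈ l, (G.Adj p.1 q.1 ↔ H.Adj p.2 q.2)

variable {G H}

lemma BFInv_swap {l : List (ℕ × ℕ)} (h : BFInv G H l) : BFInv H G (l.map Prod.swap) := by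
  obtain ⟨h1, h2, h3⟩ := h
  have e1 : (l.map Prod.swap).map Prod.fst = l.map Prod.snd := by
    rw [List.map_map]; rfl
  have e2 : (l.map Prod.swap).map Prod.snd = l.map Prod.fst := by
    rw [List.map_map]; rfl
  refine ⟨e1 ▸ h2, e2 ▸ h1, ?_⟩
  intro p hp q hq
  obtain ⟨p', hp', rfl⟩ := List.mem_map.1 hp
  obtain ⟨q', hq', rfl⟩ := List.mem_map.1 hq
  exact (h3 p' hp' q' hq').symm

lemma bf_step_right (hH : EP H) {l : List (ℕ × ℕ)} (hinv : BFInv G H l)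
    {a : ℕ} (ha : a ∉ l.map Prod.fst) : ∃ b, BFInv G H (l ++ [(a, b)]) := by
  classical
  obtain ⟨h1, h2, h3⟩ := hinv
  set A' : Finset ℕ := ((l.filter (fun p => G.Adj a p.1)).map Prod.snd).toFinset with hA'
  set B' : Finset ℕ := (l.map Prod.snd).toFinset \ A' with hB'
  obtain ⟨b, hbA, hbB, hadj, hnadj⟩ := hH A' B' Finset.disjoint_sdiff
  have hbl : b ∉ l.map Prod.snd := by
    intro hb
    by_cases hbA2 : b ∈ A'
    · exact hbA hbA2
    · exact hbB (Finset.mem_sdiff.2 ⟨List.mem_toFinset.2 hb, hbA2⟩)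
  have key : ∀ q ∈ l, (G.Adj a q.1 ↔ H.Adj b q.2) := by
    intro q hq
    constructor
    · intro hG1
      refine hadj _ ?_
      exact List.mem_toFinset.2 (List.mem_map.2 ⟨q, List.mem_filter.2 ⟨hq, by simpa using hG1⟩, rfl⟩)
    · intro hH1
      by_contra hG1
      refine hnadj q.2 ?_ hH1
      refine Finset.mem_sdiff.2 ⟨List.mem_toFinset.2 (List.mem_map.2 ⟨q, hq, rfl⟩), ?_⟩
      intro hq2
      obtain ⟨p', hp', hps⟩ := List.mem_map.1 (List.mem_toFinset.1 hq2)
      have hp'l := (List.mem_filter.1 hp').1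
      have hadj' : G.Adj a p'.1 := by simpa using (List.mem_filter.1 hp').2
      have : p' = q := List.inj_on_of_nodup_map h2 hp'l hq hps
      exact hG1 (this ▸ hadj')
  refine ⟨b, ?_, ?_, ?_⟩
  · rw [List.map_append, List.nodup_append]
    exact ⟨h1, List.nodup_singleton _, fun x hx y hy hxy => ha (by rw [List.map_cons, List.map_nil, List.mem_singleton] at hy; rw [hxy, hy] at hx; exact hx)⟩
  · rw [List.map_append, List.nodup_append]
    exact ⟨h2, List.nodup_singleton _, fun x hx y hy hxy => hbl (by rw [List.map_cons, List.map_nil, List.mem_singleton] at hy; rw [hxy, hy] at hx; exact hx)⟩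
  · intro p hp q hq
    rcases List.mem_append.1 hp with hp | hp <;> rcases List.mem_append.1 hq with hq | hq
    · exact h3 p hp q hq
    · rw [List.mem_singleton.1 hq]
      rw [G.adj_comm, H.adj_comm]
      exact key p hp
    · rw [List.mem_singleton.1 hp]
      exact key q hq
    · rw [List.mem_singleton.1 hp, List.mem_singleton.1 hq]
      simp

lemma bf_step_left (hG : EP G) {l : List (ℕ × ℕ)} (hinv : BFInv G H l)
    {b : ℕ} (hb : b ∉ l.map Prod.snd) : ∃ a, BFInv G H (l ++ [(a, b)]) := by
  have hb' : b ∉ (l.map Prod.swap).map Prod.fst := by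
    rw [List.map_map]; exact hb
  obtain ⟨a, ha⟩ := bf_step_right hG (BFInv_swap hinv) hb'
  refine ⟨a, ?_⟩
  have : (l.map Prod.swap ++ [(b, a)]).map Prod.swap = l ++ [(a, b)] := by
    rw [List.map_append, List.map_map]
    simp [Prod.swap_swap_eq]
  exact this ▸ BFInv_swap ha

lemma iso_of_EP (hG : EP G) (hH : EP H) : Nonempty (G ≃g H) := by
  classical
  obtain ⟨c, hc0, hcP, hcS⟩ := exists_chain (BFInv G H)
    (fun l p => (l.length % 2 = 0 → p.1 = mex (l.map Prod.fst)) ∧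
      (l.length % 2 = 1 → p.2 = mex (l.map Prod.snd))) []
    (⟨List.nodup_nil, List.nodup_nil, by simp⟩)
    (by
      intro l hl
      rcases Nat.even_or_odd l.length with he | ho
      · obtain ⟨b, hb⟩ := bf_step_right hH hl (mex_not_mem (l.map Prod.fst))
        exact ⟨(mex (l.map Prod.fst), b), hb, fun _ => rfl,
          fun h => absurd h (by rw [Nat.even_iff] at he; omega)⟩
      · obtain ⟨a, ha⟩ := bf_step_left hG hl (mex_not_mem (l.map Prod.snd))
        exact ⟨(a, mex (l.map Prod.snd)), ha,
          fun h => absurd h (by rw [Nat.odd_iff] at ho; omega), fun _ => rfl⟩)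
  have hcS' : ∀ n, ∃ p, c (n + 1) = c n ++ [p] := fun n => (hcS n).imp (fun p h => h.1)
  have hlen : ∀ n, (c n).length = n := by
    intro n
    have := chain_length hcS' n
    rw [hc0] at this
    simpa using this
  -- totality on the left
  have tot1 : ∀ a, ∃ n, a ∈ (c n).map Prod.fst := by
    refine coverage (c := fun n => (c n).map Prod.fst) ?_ ?_
    · intro m n hmn x hx
      obtain ⟨p, hp, rfl⟩ := List.mem_map.1 hx
      exact List.mem_map.2 ⟨p, chain_mem_mono hcS' hmn hp, rfl⟩
    · intro n
      refine ⟨2 * n, by omega, ?_⟩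
      intro m hm hmin
      obtain ⟨p, hp, hq⟩ := hcS (2 * n)
      have hpar : (c (2 * n)).length % 2 = 0 := by rw [hlen]; omega
      have hp1 : p.1 = mex ((c (2 * n)).map Prod.fst) := hq.1 hpar
      have : mex ((c (2 * n)).map Prod.fst) = m := mex_eq_of _ hm hmin
      show m ∈ (c (2 * n + 1)).map Prod.fst
      rw [hp, List.map_append]
      exact List.mem_append.2 (Or.inr (by simp [hp1, this]))
  have tot2 : ∀ b, ∃ n, b ∈ (c n).map Prod.snd := by
    refine coverage (c := fun n => (c n).map Prod.snd) ?_ ?_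
    · intro m n hmn x hx
      obtain ⟨p, hp, rfl⟩ := List.mem_map.1 hx
      exact List.mem_map.2 ⟨p, chain_mem_mono hcS' hmn hp, rfl⟩
    · intro n
      refine ⟨2 * n + 1, by omega, ?_⟩
      intro m hm hmin
      obtain ⟨p, hp, hq⟩ := hcS (2 * n + 1)
      have hpar : (c (2 * n + 1)).length % 2 = 1 := by rw [hlen]; omega
      have hp2 : p.2 = mex ((c (2 * n + 1)).map Prod.snd) := hq.2 hpar
      have : mex ((c (2 * n + 1)).map Prod.snd) = m := mex_eq_of _ hm hmin
      show m ∈ (c (2 * n + 1 + 1)).map Prod.snd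
      rw [hp, List.map_append]
      exact List.mem_append.2 (Or.inr (by simp [hp2, this]))
  set S : ℕ → ℕ → Prop := fun x y => ∃ n, (x, y) ∈ c n with hS
  have hboth : ∀ {x y x' y'}, S x y → S x' y' → ∃ n, (x, y) ∈ c n ∧ (x', y') ∈ c n := by
    rintro x y x' y' ⟨n1, h1⟩ ⟨n2, h2⟩
    exact ⟨max n1 n2, chain_mem_mono hcS' (le_max_left _ _) h1,
      chain_mem_mono hcS' (le_max_right _ _) h2⟩
  obtain ⟨e, he⟩ := equiv_of_rel S
    (fun a => by
      obtain ⟨n, hn⟩ := tot1 a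
      obtain ⟨⟨x, y⟩, hp, rfl⟩ := List.mem_map.1 hn
      exact ⟨y, n, hp⟩)
    (fun b => by
      obtain ⟨n, hn⟩ := tot2 b
      obtain ⟨⟨x, y⟩, hp, rfl⟩ := List.mem_map.1 hn
      exact ⟨x, n, hp⟩)
    (by
      rintro a b b' h1 h2
      obtain ⟨n, hn1, hn2⟩ := hboth h1 h2
      have := List.inj_on_of_nodup_map (hcP n).1 hn1 hn2 rfl
      exact congrArg Prod.snd this)
    (by
      rintro a a' b h1 h2
      obtain ⟨n, hn1, hn2⟩ := hboth h1 h2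
      have := List.inj_on_of_nodup_map (hcP n).2.1 hn1 hn2 rfl
      exact congrArg Prod.fst this)
  refine ⟨⟨e, ?_⟩⟩
  intro a b
  have h1 : S a (e a) := (he a (e a)).2 rfl
  have h2 : S b (e b) := (he b (e b)).2 rfl
  obtain ⟨n, hn1, hn2⟩ := hboth h1 h2
  exact ((hcP n).2.2 (a, e a) hn1 (b, e b) hn2).symm

end BackForth


lemma mem_of_getElem?' {α : Type*} {l : List α} {i : ℕ} {x : α} (h : l[i]? = some x) :
    x ∈ l := by
  obtain ⟨hlt, rfl⟩ := List.getElem?_eq_some_iff.1 h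
  exact List.getElem_mem _

section Main

variable {V : Type*} (F : SimpleGraph V) (u₀ w₀ : V) (x y : ℕ)

/-- enumeration of requirements -/
noncomputable def reqq (n : ℕ) : Finset ℕ × Finset ℕ := Denumerable.ofNat _ n

/-- naturals reserved so far -/
noncomputable def resAB (l : List (V × ℕ)) : Finset ℕ :=
  (Finset.range l.length).biUnion
    (fun q => if 3 * q + 4 < l.length then (reqq q).1 ∪ (reqq q).2 else ∅)

lemma mem_resAB {l : List (V × ℕ)} {k : ℕ} (hk : 3 * k + 4 < l.length)
    {a : ℕ} (ha : a ∈ (reqq k).1 ∪ (reqq k).2) : a ∈ resAB l := by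
  refine Finset.mem_biUnion.2 ⟨k, Finset.mem_range.2 (by omega), ?_⟩
  rw [if_pos hk]
  exact ha

/-- The master invariant for the main construction. -/
def MInv (l : List (V × ℕ)) : Prop :=
  2 ≤ l.length ∧
  ((u₀, x) ∈ l) ∧ ((w₀, y) ∈ l) ∧
  (l.map Prod.fst).Nodup ∧ (l.map Prod.snd).Nodup ∧
  (∀ p ∈ l, ∀ q ∈ l, F.Adj p.1 q.1 → Rado.Adj p.2 q.2) ∧
  (∀ k, 3 * k + 4 < l.length → Disjoint (reqq k).1 (reqq k).2 →
     ∃ p : V × ℕ, l[3 * k + 4]? = some p ∧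
       (∀ a ∈ (reqq k).1, Rado.Adj p.2 a) ∧ (∀ b ∈ (reqq k).2, ¬ Rado.Adj p.2 b) ∧
       p.2 ∉ (reqq k).1 ∧ p.2 ∉ (reqq k).2 ∧
       (∀ q ∈ l, q.2 ∈ (reqq k).1 → ¬ F.Adj q.1 p.1))

variable {F u₀ w₀ x y}

lemma MInv_extend {l : List (V × ℕ)} (hl : MInv F u₀ w₀ x y l) (p₀ : V × ℕ)
    (hu : p₀.1 ∉ l.map Prod.fst) (hm : p₀.2 ∉ l.map Prod.snd)
    (hC : ∀ q ∈ l, F.Adj p₀.1 q.1 → Rado.Adj p₀.2 q.2)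
    (hD3 : ∀ k, 3 * k + 4 < l.length → Disjoint (reqq k).1 (reqq k).2 →
      ∀ p : V × ℕ, l[3 * k + 4]? = some p → p₀.2 ∈ (reqq k).1 → ¬ F.Adj p₀.1 p.1)
    (hnew : ∀ k, 3 * k + 4 = l.length → Disjoint (reqq k).1 (reqq k).2 →
      (∀ a ∈ (reqq k).1, Rado.Adj p₀.2 a) ∧ (∀ b ∈ (reqq k).2, ¬ Rado.Adj p₀.2 b) ∧
      p₀.2 ∉ (reqq k).1 ∧ p₀.2 ∉ (reqq k).2 ∧
      (∀ q ∈ l, q.2 ∈ (reqq k).1 → ¬ F.Adj q.1 p₀.1)) :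
    MInv F u₀ w₀ x y (l ++ [p₀]) := by
  obtain ⟨hlen, hux, hwy, h1, h2, hCold, hDold⟩ := hl
  refine ⟨by rw [List.length_append]; omega,
    List.mem_append.2 (Or.inl hux), List.mem_append.2 (Or.inl hwy), ?_, ?_, ?_, ?_⟩
  · rw [List.map_append, List.nodup_append]
    exact ⟨h1, List.nodup_singleton _, fun x hx y hy hxy => hu (by rw [List.map_cons, List.map_nil, List.mem_singleton] at hy; rw [← hy, ← hxy]; exact hx)⟩
  · rw [List.map_append, List.nodup_append]
    exact ⟨h2, List.nodup_singleton _, fun x hx y hy hxy => hm (by rw [List.map_cons, List.map_nil, List.mem_singleton] at hy; rw [← hy, ← hxy]; exact hx)⟩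
  · intro p hp q hq
    rcases List.mem_append.1 hp with hp | hp <;> rcases List.mem_append.1 hq with hq | hq
    · exact hCold p hp q hq
    · rw [List.mem_singleton.1 hq]
      intro h
      exact (hC p hp h.symm).symm
    · rw [List.mem_singleton.1 hp]
      exact hC q hq
    · rw [List.mem_singleton.1 hp, List.mem_singleton.1 hq]
      intro h
      exact absurd h (F.irrefl)
  · intro k hk hdisj
    rw [List.length_append, List.length_singleton] at hk
    rcases Nat.lt_or_ge (3 * k + 4) l.length with hk' | hk'
    · obtain ⟨p, hp, hr1, hr2, hr3, hr4, hr5⟩ := hDold k hk' hdisj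
      refine ⟨p, ?_, hr1, hr2, hr3, hr4, ?_⟩
      · rw [List.getElem?_append, if_pos (by
          rcases List.getElem?_eq_some_iff.1 hp with ⟨hlt, -⟩
          exact hlt)]
        exact hp
      · intro q hq hq2
        rcases List.mem_append.1 hq with hq | hq
        · exact hr5 q hq hq2
        · rw [List.mem_singleton.1 hq] at hq2 ⊢
          exact hD3 k hk' hdisj p hp hq2
    · have heq : 3 * k + 4 = l.length := by omega
      obtain ⟨hn1, hn2, hn3, hn4, hn5⟩ := hnew k heq hdisj
      refine ⟨p₀, by rw [heq]; exact List.getElem?_concat_length, hn1, hn2, hn3, hn4, ?_⟩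
      intro q hq hq2
      rcases List.mem_append.1 hq with hq | hq
      · exact hn5 q hq hq2
      · rw [List.mem_singleton.1 hq] at hq2 ⊢
        intro h
        exact hn3 hq2

lemma exists_isolated (hdom : ∀ D : Set V, IsDominatingSet F D → D.Infinite)
    (l : List (V × ℕ)) :
    ∃ w : V, w ∉ l.map Prod.fst ∧ ∀ p ∈ l, ¬ F.Adj w p.1 := by
  classical
  set D : Set V := ↑((l.map Prod.fst).toFinset) with hD
  have hfin : ¬ D.Infinite := Set.not_infinite.2 ((l.map Prod.fst).toFinset.finite_toSet)
  have hnd : ¬ IsDominatingSet F D := fun h => hfin (hdom D h)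
  rw [IsDominatingSet] at hnd
  push_neg at hnd
  obtain ⟨w, hw1, hw2⟩ := hnd
  refine ⟨w, fun h => hw1 (by simpa [hD] using h), ?_⟩
  intro p hp hadj
  exact hw2 p.1 (by simp [hD]; exact ⟨p.2, hp⟩) hadj

lemma forward_step {l : List (V × ℕ)} (hl : MInv F u₀ w₀ x y l)
    (hnr : ∀ k, 3 * k + 4 ≠ l.length) {u : V} (hu : u ∉ l.map Prod.fst) :
    ∃ m, MInv F u₀ w₀ x y (l ++ [(u, m)]) := by
  classical
  set A' : Finset ℕ := ((l.filter (fun p => F.Adj u p.1)).map Prod.snd).toFinset with hA'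
  set B' : Finset ℕ := ((l.map Prod.snd).toFinset ∪ resAB l) \ A' with hB'
  obtain ⟨m, hmA, hmB, hadj, hnadj⟩ := rado_EP A' B' Finset.disjoint_sdiff
  have hmres : m ∉ resAB l := by
    intro h
    by_cases h2 : m ∈ A'
    · exact hmA h2
    · exact hmB (Finset.mem_sdiff.2 ⟨Finset.mem_union_right _ h, h2⟩)
  have hmfresh : m ∉ l.map Prod.snd := by
    intro h
    by_cases h2 : m ∈ A'
    · exact hmA h2
    · exact hmB (Finset.mem_sdiff.2 ⟨Finset.mem_union_left _ (List.mem_toFinset.2 h), h2⟩)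
  refine ⟨m, MInv_extend hl (u, m) hu hmfresh ?_ ?_ ?_⟩
  · intro q hq hadj2
    exact hadj q.2 (List.mem_toFinset.2
      (List.mem_map.2 ⟨q, List.mem_filter.2 ⟨hq, by simpa using hadj2⟩, rfl⟩))
  · intro k hk hdisj p hp hq2
    exact absurd (mem_resAB hk (Finset.mem_union_left _ hq2)) hmres
  · intro k hk
    exact absurd hk (hnr k)

lemma isolated_step (hdom : ∀ D : Set V, IsDominatingSet F D → D.Infinite)
    {l : List (V × ℕ)} (hl : MInv F u₀ w₀ x y l)
    (hnr : ∀ k, 3 * k + 4 = l.length → ¬ Disjoint (reqq k).1 (reqq k).2)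
    {m : ℕ} (hm : m ∉ l.map Prod.snd) :
    ∃ w, MInv F u₀ w₀ x y (l ++ [(w, m)]) := by
  obtain ⟨w, hw1, hw2⟩ := exists_isolated hdom l
  refine ⟨w, MInv_extend hl (w, m) hw1 hm ?_ ?_ ?_⟩
  · intro q hq hadj
    exact absurd hadj (hw2 q hq)
  · intro k hk hdisj p hp hq2
    exact hw2 p (mem_of_getElem?' hp)
  · intro k hk hdisj
    exact absurd hdisj (hnr k hk)

lemma req_step (hdom : ∀ D : Set V, IsDominatingSet F D → D.Infinite)
    {l : List (V × ℕ)} (hl : MInv F u₀ w₀ x y l) {k : ℕ}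
    (hlen : 3 * k + 4 = l.length) (hdisj : Disjoint (reqq k).1 (reqq k).2) :
    ∃ p, MInv F u₀ w₀ x y (l ++ [p]) := by
  classical
  obtain ⟨w, hw1, hw2⟩ := exists_isolated hdom l
  set A : Finset ℕ := (reqq k).1 with hA
  set B : Finset ℕ := (reqq k).2 with hB
  set B'' : Finset ℕ := ((l.map Prod.snd).toFinset ∪ resAB l ∪ B) \ A with hB''
  obtain ⟨v, hvA, hvB'', hadj, hnadj⟩ := rado_EP A B'' Finset.disjoint_sdiff
  have hBsub : B ⊆ B'' := by
    intro b hb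
    refine Finset.mem_sdiff.2 ⟨Finset.mem_union_right _ hb, ?_⟩
    exact fun hbA => Finset.disjoint_left.1 hdisj hbA hb
  have hvfresh : v ∉ l.map Prod.snd := by
    intro h
    by_cases h2 : v ∈ A
    · exact hvA h2
    · exact hvB'' (Finset.mem_sdiff.2
        ⟨Finset.mem_union_left _ (Finset.mem_union_left _ (List.mem_toFinset.2 h)), h2⟩)
  refine ⟨(w, v), MInv_extend hl (w, v) hw1 hvfresh ?_ ?_ ?_⟩
  · intro q hq hadj2
    exact absurd hadj2 (hw2 q hq)
  · intro k' hk' hdisj' p hp hq2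
    exact hw2 p (mem_of_getElem?' hp)
  · intro k' hk' hdisj'
    have hkk : k' = k := by omega
    subst hkk
    refine ⟨hadj, fun b hb => hnadj b (hBsub hb), hvA, fun hv => hvB'' (hBsub hv), ?_⟩
    intro q hq hq2 hadjq
    exact hw2 q hq hadjq.symm

lemma main_construct [Countable V]
    (hdom : ∀ D : Set V, IsDominatingSet F D → D.Infinite)
    (huw : F.Adj u₀ w₀) (hxy : Rado.Adj x y) :
    ∃ Γ : SimpleGraph ℕ, Γ ≤ Rado ∧ Nonempty (F ≃g Γ) ∧ Γ.Adj x y ∧ EP (Rado \ Γ) := by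
  classical
  have hVinf : Infinite V := by
    rw [← Set.infinite_univ_iff]
    exact hdom Set.univ (fun v hv => absurd (Set.mem_univ v) hv)
  obtain ⟨eV⟩ : Nonempty (V ≃ ℕ) := nonempty_equiv_of_countable
  have hinit : MInv F u₀ w₀ x y [(u₀, x), (w₀, y)] := by
    refine ⟨by simp, by simp, by simp, by simp [huw.ne], by simp [hxy.ne], ?_, ?_⟩
    · intro p hp q hq h
      simp only [List.mem_cons, List.mem_singleton, List.not_mem_nil, or_false] at hp hq
      rcases hp with rfl | rfl <;> rcases hq with rfl | rfl
      · exact absurd h (F.irrefl)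
      · exact hxy
      · exact hxy.symm
      · exact absurd h (F.irrefl)
    · intro k hk
      simp only [List.length_cons, List.length_nil] at hk
      omega
  obtain ⟨c, hc0, hcP, hcS⟩ := exists_chain (MInv F u₀ w₀ x y)
    (fun l p =>
      ((l.length - 2) % 3 = 0 →
        eV.symm ((l.length - 2) / 3) ∈ (l ++ [p]).map Prod.fst) ∧
      ((l.length - 2) % 3 = 1 → p.2 = mex (l.map Prod.snd)))
    [(u₀, x), (w₀, y)] hinit (by
      intro l hl
      have hlen2 : 2 ≤ l.length := hl.1
      have h3 : (l.length - 2) % 3 = 0 ∨ (l.length - 2) % 3 = 1 ∨ (l.length - 2) % 3 = 2 := by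
        omega
      rcases h3 with h3 | h3 | h3
      · have hnr : ∀ j, 3 * j + 4 ≠ l.length := fun j hj => by omega
        by_cases hu : eV.symm ((l.length - 2) / 3) ∈ l.map Prod.fst
        · obtain ⟨w, hw⟩ := isolated_step hdom hl
            (fun j hj => absurd hj (hnr j)) (mex_not_mem (l.map Prod.snd))
          refine ⟨(w, mex (l.map Prod.snd)), hw, fun _ => ?_, fun h1 => absurd h1 (by omega)⟩
          rw [List.map_append]
          exact List.mem_append.2 (Or.inl hu)
        · obtain ⟨m, hm⟩ := forward_step hl hnr hu
          refine ⟨(eV.symm ((l.length - 2) / 3), m), hm, fun _ => ?_,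
            fun h1 => absurd h1 (by omega)⟩
          rw [List.map_append]
          exact List.mem_append.2 (Or.inr (by simp))
      · obtain ⟨w, hw⟩ := isolated_step hdom hl
          (fun j hj => absurd hj (fun hj2 => by omega)) (mex_not_mem (l.map Prod.snd))
        exact ⟨(w, mex (l.map Prod.snd)), hw, fun h0 => absurd h0 (by omega), fun _ => rfl⟩
      · have hlen3 : 3 * ((l.length - 2) / 3) + 4 = l.length := by omega
        by_cases hdisj : Disjoint (reqq ((l.length - 2) / 3)).1 (reqq ((l.length - 2) / 3)).2
        · obtain ⟨p, hp⟩ := req_step hdom hl hlen3 hdisj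
          exact ⟨p, hp, fun h0 => absurd h0 (by omega), fun h1 => absurd h1 (by omega)⟩
        · obtain ⟨w, hw⟩ := isolated_step hdom hl
            (fun j hj => by
              have : j = (l.length - 2) / 3 := by omega
              rwa [this]) (mex_not_mem (l.map Prod.snd))
          exact ⟨(w, mex (l.map Prod.snd)), hw, fun h0 => absurd h0 (by omega),
            fun h1 => absurd h1 (by omega)⟩)
  have hcS' : ∀ n, ∃ p, c (n + 1) = c n ++ [p] := fun n => (hcS n).imp (fun p h => h.1)
  have hlen : ∀ n, (c n).length = n + 2 := by
    intro n
    have := chain_length hcS' n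
    rw [hc0] at this
    simp at this
    omega
  have tot1 : ∀ u : V, ∃ n, u ∈ (c n).map Prod.fst := by
    intro u
    obtain ⟨p, hp, hq⟩ := hcS (3 * eV u)
    have h0 : ((c (3 * eV u)).length - 2) % 3 = 0 := by rw [hlen]; omega
    have h1 : ((c (3 * eV u)).length - 2) / 3 = eV u := by rw [hlen]; omega
    have h2 := hq.1 h0
    rw [h1, Equiv.symm_apply_apply] at h2
    exact ⟨3 * eV u + 1, by rw [hp]; exact h2⟩
  have tot2 : ∀ m : ℕ, ∃ n, m ∈ (c n).map Prod.snd := by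
    refine coverage (c := fun n => (c n).map Prod.snd) ?_ ?_
    · intro m n hmn z hz
      obtain ⟨p, hp, rfl⟩ := List.mem_map.1 hz
      exact List.mem_map.2 ⟨p, chain_mem_mono hcS' hmn hp, rfl⟩
    · intro n
      refine ⟨3 * n + 1, by omega, ?_⟩
      intro m hm hmin
      obtain ⟨p, hp, hq⟩ := hcS (3 * n + 1)
      have hpar : ((c (3 * n + 1)).length - 2) % 3 = 1 := by rw [hlen]; omega
      have hp2 : p.2 = mex ((c (3 * n + 1)).map Prod.snd) := hq.2 hpar
      have hmx : mex ((c (3 * n + 1)).map Prod.snd) = m := mex_eq_of _ hm hmin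
      show m ∈ (c (3 * n + 1 + 1)).map Prod.snd
      rw [hp, List.map_append]
      exact List.mem_append.2 (Or.inr (by simp [hp2, hmx]))
  set S : V → ℕ → Prop := fun u m => ∃ n, (u, m) ∈ c n with hSdef
  have hboth : ∀ {u m u' m'}, S u m → S u' m' → ∃ n, (u, m) ∈ c n ∧ (u', m') ∈ c n := by
    rintro u m u' m' ⟨n1, h1⟩ ⟨n2, h2⟩
    exact ⟨max n1 n2, chain_mem_mono hcS' (le_max_left _ _) h1,
      chain_mem_mono hcS' (le_max_right _ _) h2⟩
  obtain ⟨e, he⟩ := equiv_of_rel S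
    (fun u => by
      obtain ⟨n, hn⟩ := tot1 u
      obtain ⟨⟨a, b⟩, hp, rfl⟩ := List.mem_map.1 hn
      exact ⟨b, n, hp⟩)
    (fun m => by
      obtain ⟨n, hn⟩ := tot2 m
      obtain ⟨⟨a, b⟩, hp, rfl⟩ := List.mem_map.1 hn
      exact ⟨a, n, hp⟩)
    (by
      rintro u m m' h1 h2
      obtain ⟨n, hn1, hn2⟩ := hboth h1 h2
      exact congrArg Prod.snd (List.inj_on_of_nodup_map (hcP n).2.2.2.1 hn1 hn2 rfl))
    (by
      rintro u u' m h1 h2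
      obtain ⟨n, hn1, hn2⟩ := hboth h1 h2
      exact congrArg Prod.fst (List.inj_on_of_nodup_map (hcP n).2.2.2.2.1 hn1 hn2 rfl))
  have hsymmS : ∀ m : ℕ, S (e.symm m) m := fun m => (he _ m).2 (e.apply_symm_apply m)
  refine ⟨SimpleGraph.comap (⇑e.symm) F, ?_, ?_, ?_, ?_⟩
  · intro m m' hadj
    rw [SimpleGraph.comap_adj] at hadj
    obtain ⟨n, hn1, hn2⟩ := hboth (hsymmS m) (hsymmS m')
    exact (hcP n).2.2.2.2.2.1 _ hn1 _ hn2 hadj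
  · exact ⟨⟨e, fun {a b} => by
      rw [SimpleGraph.comap_adj, Equiv.symm_apply_apply, Equiv.symm_apply_apply]⟩⟩
  · rw [SimpleGraph.comap_adj]
    have hx0 : e u₀ = x := (he u₀ x).1 ⟨0, by rw [hc0]; simp⟩
    have hy0 : e w₀ = y := (he w₀ y).1 ⟨0, by rw [hc0]; simp⟩
    rw [← hx0, ← hy0, Equiv.symm_apply_apply, Equiv.symm_apply_apply]
    exact huw
  · intro A B hdisj
    set k := @Encodable.encode (Finset ℕ × Finset ℕ) Denumerable.toEncodable (A, B) with hkenc
    have hreq : reqq k = (A, B) := by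
      rw [hkenc]
      exact Denumerable.ofNat_encode (A, B)
    have hk4 : 3 * k + 4 < (c (3 * k + 3)).length := by rw [hlen]; omega
    obtain ⟨p, hp, hr1, hr2, hr3, hr4, hr5⟩ :=
      (hcP (3 * k + 3)).2.2.2.2.2.2 k hk4 (by rw [hreq]; exact hdisj)
    rw [hreq] at hr1 hr2 hr3 hr4 hr5
    refine ⟨p.2, hr3, hr4, ?_, ?_⟩
    · intro a ha
      rw [SimpleGraph.sdiff_adj]
      refine ⟨hr1 a ha, ?_⟩
      rw [SimpleGraph.comap_adj]
      have hpS : e p.1 = p.2 := (he _ _).1 ⟨3 * k + 3, mem_of_getElem?' hp⟩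
      have hp1 : e.symm p.2 = p.1 := by rw [← hpS, Equiv.symm_apply_apply]
      obtain ⟨n2, hn2⟩ := hsymmS a
      have hN1 : 3 * k + 3 ≤ max (3 * k + 3) n2 := le_max_left _ _
      have hpN : (c (max (3 * k + 3) n2))[3 * k + 4]? = some p :=
        chain_getElem? hcS' hN1 hp
      obtain ⟨p', hp', -, -, -, -, hr5'⟩ :=
        (hcP (max (3 * k + 3) n2)).2.2.2.2.2.2 k
          (by rw [hlen]; omega) (by rw [hreq]; exact hdisj)
      have hpp : p' = p := Option.some.inj (hp'.symm.trans hpN)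
      rw [hreq] at hr5'
      have hnadj := hr5' (e.symm a, a)
        (chain_mem_mono hcS' (le_max_right _ _) hn2) ha
      rw [hpp] at hnadj
      rw [hp1]
      exact fun h => hnadj h.symm
    · intro b hb hadj
      rw [SimpleGraph.sdiff_adj] at hadj
      exact hr2 b hb hadj.1

end Main

end Stmt5


/-- if `F` is a countable (non-empty) graph with no finite dominating
set, then for every edge `e` of the Rado graph `R` there is an embedding of `F`
onto a spanning subgraph `Γ` of `R` containing `e`, such that `R \ Γ` is
isomorphic to `R`. -/
theorem stmt_5 {V : Type*} [Countable V] (F : SimpleGraph V)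
    (hdom : ∀ D : Set V, IsDominatingSet F D → D.Infinite)
    (hne : F.edgeSet.Nonempty) :
    ∀ e ∈ Rado.edgeSet, ∃ Γ : SimpleGraph ℕ,
      Γ ≤ Rado ∧ Nonempty (F ≃g Γ) ∧ e ∈ Γ.edgeSet ∧
        Nonempty ((Rado \ Γ) ≃g Rado) := by
  obtain ⟨ef, hef⟩ := hne
  intro e he
  induction ef using Sym2.ind with
  | _ uu ww =>
    induction e using Sym2.ind with
    | _ xx yy =>
      rw [SimpleGraph.mem_edgeSet] at hef he
      obtain ⟨Γ, hle, hiso, hadj, hEP⟩ := Stmt5.main_construct (F := F) hdom hef he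
      exact ⟨Γ, hle, hiso, (SimpleGraph.mem_edgeSet Γ).2 hadj,
        Stmt5.iso_of_EP hEP Stmt5.rado_EP⟩
end

section
/- Let F be a finite family of countable graphs such that (1) at least one graph of F is isomorphic to the Rado graph R, and (2) every graph in F has infinite domination number. Then FP(F, R) has a solution. -/
set_option linter.unusedSectionVars false

lemma testBit_sum_pow {N : ℕ} : ∀ {S : Finset ℕ}, (∀ s ∈ S, s < N) →
    (∑ s ∈ S, 2^s) < 2^N ∧ ∀ k, ((∑ s ∈ S, 2^s).testBit k = true ↔ k ∈ S) := by
  induction N with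
  | zero =>
    intro S hS
    have : S = ∅ := by
      ext s; simp only [Finset.notMem_empty, iff_false]
      intro h; exact absurd (hS s h) (by omega)
    subst this; simp
  | succ N ih =>
    intro S hS
    by_cases hN : N ∈ S
    · have hsub : ∀ s ∈ S.erase N, s < N := by
        intro s hs
        have := hS s (Finset.mem_of_mem_erase hs)
        have := Finset.ne_of_mem_erase hs
        omega
      obtain ⟨hlt, hbit⟩ := ih hsub
      have hsum : (∑ s ∈ S, 2^s) = 2^N + ∑ s ∈ S.erase N, 2^s := by
        rw [← Finset.add_sum_erase _ _ hN]
      constructor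
      · rw [hsum, pow_succ]; omega
      · intro k
        rw [hsum]
        rcases lt_trichotomy k N with h | h | h
        · rw [Nat.testBit_two_pow_add_gt h]
          rw [hbit k]
          constructor
          · intro hk; exact Finset.mem_of_mem_erase hk
          · intro hk; exact Finset.mem_erase.2 ⟨by omega, hk⟩
        · rw [h, Nat.testBit_two_pow_add_eq, Nat.testBit_lt_two_pow hlt]
          exact iff_of_true rfl hN
        · have : 2^N + (∑ s ∈ S.erase N, 2^s) < 2^k := by
            have h2 : 2^(N+1) ≤ 2^k := Nat.pow_le_pow_right (by norm_num) h
            rw [pow_succ] at h2; omega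
          rw [Nat.testBit_lt_two_pow this]
          exact iff_of_false (by simp) (fun hk => absurd (hS k hk) (by omega))
    · have hsub : ∀ s ∈ S, s < N := by
        intro s hs
        have := hS s hs
        rcases Nat.lt_succ_iff_lt_or_eq.1 this with h | h
        · exact h
        · exact absurd (h ▸ hs) hN
      obtain ⟨hlt, hbit⟩ := ih hsub
      exact ⟨hlt.trans (Nat.pow_lt_pow_right (by norm_num) (by omega)), hbit⟩

lemma rado_adj_of_lt {m n : ℕ} (h : n < m) : Rado.Adj m n ↔ m.testBit n := by
  unfold Rado
  rw [SimpleGraph.fromRel_adj]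
  constructor
  · rintro ⟨hne, (⟨h1, _⟩ | ⟨_, h2⟩)⟩
    · omega
    · exact h2
  · intro hb; exact ⟨by omega, Or.inr ⟨h, hb⟩⟩

/-- The standard Rado witness: `2^N + ∑_{s ∈ S} 2^s`. -/
def radoWit (S : Finset ℕ) (N : ℕ) : ℕ := 2^N + ∑ s ∈ S, 2^s

lemma radoWit_spec {S : Finset ℕ} {N : ℕ} (hS : ∀ s ∈ S, s < N) :
    N < radoWit S N ∧ (∀ s ∈ S, Rado.Adj (radoWit S N) s) ∧
      (∀ k < N, k ∉ S → ¬ Rado.Adj (radoWit S N) k) := by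
  obtain ⟨hlt, hbit⟩ := testBit_sum_pow hS
  have hsum : radoWit S N = ∑ s ∈ insert N S, 2^s := by
    rw [radoWit, Finset.sum_insert (fun h => absurd (hS N h) (by omega))]
  have hNS : ∀ s ∈ insert N S, s < N + 1 := by
    intro s hs
    rcases Finset.mem_insert.1 hs with h | h
    · omega
    · have := hS s h; omega
  obtain ⟨_, hbit'⟩ := testBit_sum_pow hNS
  have hbig : N < radoWit S N := by
    have : N < 2 ^ N := Nat.lt_two_pow_self
    rw [radoWit]; omega
  refine ⟨hbig, ?_, ?_⟩
  · intro s hs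
    have hslt : s < radoWit S N := by have := hS s hs; omega
    rw [rado_adj_of_lt hslt, hsum, hbit']
    exact Finset.mem_insert_of_mem hs
  · intro k hk hkS
    have hklt : k < radoWit S N := by omega
    rw [rado_adj_of_lt hklt, hsum, hbit']
    simp only [Finset.mem_insert]
    push_neg
    exact ⟨by omega, hkS⟩

/-- The extension property for a graph on `ℕ`. -/
def EP (Γ : SimpleGraph ℕ) : Prop :=
  ∀ U W : Finset ℕ, Disjoint U W →
    ∃ v, v ∉ U ∧ v ∉ W ∧ (∀ u ∈ U, Γ.Adj v u) ∧ ∀ w ∈ W, ¬Γ.Adj v w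

lemma EP_Rado : EP Rado := by
  intro U W hUW
  set N := (U ∪ W).sup id + 1 with hN
  have hmem : ∀ s ∈ U ∪ W, s < N := by
    intro s hs
    have := Finset.le_sup (f := id) hs
    simp only [id] at this
    omega
  obtain ⟨hbig, hadj, hnadj⟩ := radoWit_spec (S := U) (N := N)
    (fun s hs => hmem s (Finset.mem_union_left _ hs))
  refine ⟨radoWit U N, ?_, ?_, hadj, ?_⟩
  · intro h; have := hmem _ (Finset.mem_union_left _ h); omega
  · intro h; have := hmem _ (Finset.mem_union_right _ h); omega
  · intro w hw
    exact hnadj w (hmem _ (Finset.mem_union_right _ hw))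
      (fun hwU => (Finset.disjoint_left.1 hUW hwU) hw)

section BackForth

variable (Γ Δ : SimpleGraph ℕ)

def BFInv (L : List (ℕ × ℕ)) : Prop :=
  ∀ p ∈ L, ∀ q ∈ L, (p.1 = q.1 ↔ p.2 = q.2) ∧ (Γ.Adj p.1 q.1 ↔ Δ.Adj p.2 q.2)

variable {Γ Δ}

lemma bf_extendL (hΔ : EP Δ) {L : List (ℕ × ℕ)} (hL : BFInv Γ Δ L) {n : ℕ}
    (hn : ∀ p ∈ L, p.1 ≠ n) :
    ∃ v, BFInv Γ Δ ((n, v) :: L) := by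
  classical
  set U : Finset ℕ := ((L.filter (fun p => decide (Γ.Adj n p.1))).map Prod.snd).toFinset with hU
  set W : Finset ℕ := ((L.filter (fun p => !decide (Γ.Adj n p.1))).map Prod.snd).toFinset with hW
  have hUmem : ∀ u, u ∈ U ↔ ∃ p ∈ L, Γ.Adj n p.1 ∧ p.2 = u := by
    intro u
    simp only [hU, List.mem_toFinset, List.mem_map, List.mem_filter, decide_eq_true_eq]
    constructor
    · rintro ⟨p, ⟨hp, ha⟩, hu⟩; exact ⟨p, hp, ha, hu⟩
    · rintro ⟨p, hp, ha, hu⟩; exact ⟨p, ⟨hp, ha⟩, hu⟩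
  have hWmem : ∀ u, u ∈ W ↔ ∃ p ∈ L, ¬Γ.Adj n p.1 ∧ p.2 = u := by
    intro u
    simp only [hW, List.mem_toFinset, List.mem_map, List.mem_filter, Bool.not_eq_true',
      decide_eq_false_iff_not]
    constructor
    · rintro ⟨p, ⟨hp, ha⟩, hu⟩; exact ⟨p, hp, ha, hu⟩
    · rintro ⟨p, hp, ha, hu⟩; exact ⟨p, ⟨hp, ha⟩, hu⟩
  have hdisj : Disjoint U W := by
    rw [Finset.disjoint_left]
    intro u hu hw
    obtain ⟨p, hp, hap, hpu⟩ := (hUmem u).1 hu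
    obtain ⟨q, hq, haq, hqu⟩ := (hWmem u).1 hw
    have := ((hL p hp q hq).1).2 (hpu.trans hqu.symm)
    exact haq (this ▸ hap)
  obtain ⟨v, hvU, hvW, hadj, hnadj⟩ := hΔ U W hdisj
  have hvran : ∀ p ∈ L, p.2 ≠ v := by
    intro p hp heq
    by_cases ha : Γ.Adj n p.1
    · exact hvU (heq ▸ (hUmem p.2).2 ⟨p, hp, ha, rfl⟩)
    · exact hvW (heq ▸ (hWmem p.2).2 ⟨p, hp, ha, rfl⟩)
  refine ⟨v, ?_⟩
  intro p hp q hq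
  rcases List.mem_cons.1 hp with hp1 | hp1 <;> rcases List.mem_cons.1 hq with hq1 | hq1
  · subst hp1; subst hq1
    exact ⟨by simp, by simp⟩
  · subst hp1
    refine ⟨⟨fun h => absurd h.symm (hn q hq1), fun h => absurd h.symm (hvran q hq1)⟩, ?_⟩
    constructor
    · intro h
      exact hadj q.2 ((hUmem q.2).2 ⟨q, hq1, h, rfl⟩)
    · intro h
      by_contra hna
      exact hnadj q.2 ((hWmem q.2).2 ⟨q, hq1, hna, rfl⟩) h
  · subst hq1
    refine ⟨⟨fun h => absurd h (hn p hp1), fun h => absurd h (hvran p hp1)⟩, ?_⟩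
    constructor
    · intro h
      exact (hadj p.2 ((hUmem p.2).2 ⟨p, hp1, h.symm, rfl⟩)).symm
    · intro h
      by_contra hna
      exact hnadj p.2 ((hWmem p.2).2 ⟨p, hp1, fun h' => hna h'.symm, rfl⟩) h.symm
  · exact hL p hp1 q hq1

lemma BFInv_swap {L : List (ℕ × ℕ)} (hL : BFInv Γ Δ L) : BFInv Δ Γ (L.map Prod.swap) := by
  intro p hp q hq
  obtain ⟨p', hp', rfl⟩ := List.mem_map.1 hp
  obtain ⟨q', hq', rfl⟩ := List.mem_map.1 hq
  obtain ⟨h1, h2⟩ := hL p' hp' q' hq'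
  exact ⟨⟨fun h => h1.2 h, fun h => h1.1 h⟩, ⟨fun h => h2.2 h, fun h => h2.1 h⟩⟩

lemma bf_extendR (hΓ : EP Γ) {L : List (ℕ × ℕ)} (hL : BFInv Γ Δ L) {n : ℕ}
    (hn : ∀ p ∈ L, p.2 ≠ n) :
    ∃ v, BFInv Γ Δ ((v, n) :: L) := by
  have hswap := BFInv_swap hL
  have hn' : ∀ p ∈ L.map Prod.swap, p.1 ≠ n := by
    intro p hp
    obtain ⟨p', hp', rfl⟩ := List.mem_map.1 hp
    exact hn p' hp'
  obtain ⟨v, hv⟩ := bf_extendL hΓ hswap hn'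
  refine ⟨v, ?_⟩
  have : ((v, n) :: L) = ((n, v) :: L.map Prod.swap).map Prod.swap := by
    simp [List.map_map, Prod.swap]
  rw [this]
  exact BFInv_swap hv

variable (Γ Δ)

noncomputable def bfStepL (hΔ : EP Δ) (L : {L : List (ℕ × ℕ) // BFInv Γ Δ L}) (n : ℕ) :
    {L : List (ℕ × ℕ) // BFInv Γ Δ L} :=
  if h : ∀ p ∈ L.1, p.1 ≠ n then
    ⟨(n, Classical.choose (bf_extendL hΔ L.2 h)) :: L.1,
      Classical.choose_spec (bf_extendL hΔ L.2 h)⟩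
  else L

noncomputable def bfStepR (hΓ : EP Γ) (L : {L : List (ℕ × ℕ) // BFInv Γ Δ L}) (n : ℕ) :
    {L : List (ℕ × ℕ) // BFInv Γ Δ L} :=
  if h : ∀ p ∈ L.1, p.2 ≠ n then
    ⟨(Classical.choose (bf_extendR hΓ L.2 h), n) :: L.1,
      Classical.choose_spec (bf_extendR hΓ L.2 h)⟩
  else L

noncomputable def bfSeq (hΓ : EP Γ) (hΔ : EP Δ) : ℕ → {L : List (ℕ × ℕ) // BFInv Γ Δ L}
  | 0 => ⟨[], by intro p hp; simp at hp⟩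
  | (k+1) => bfStepR Γ Δ hΓ (bfStepL Γ Δ hΔ (bfSeq hΓ hΔ k) k) k

variable (hΓ : EP Γ) (hΔ : EP Δ)

lemma bfStepL_sub (L n) : ∀ p ∈ L.1, p ∈ (bfStepL Γ Δ hΔ L n).1 := by
  intro p hp
  unfold bfStepL
  split <;> simp [hp]

lemma bfStepR_sub (L n) : ∀ p ∈ L.1, p ∈ (bfStepR Γ Δ hΓ L n).1 := by
  intro p hp
  unfold bfStepR
  split <;> simp [hp]

lemma bfSeq_mono {k l : ℕ} (hkl : k ≤ l) :
    ∀ p ∈ (bfSeq Γ Δ hΓ hΔ k).1, p ∈ (bfSeq Γ Δ hΓ hΔ l).1 := by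
  induction l, hkl using Nat.le_induction with
  | base => exact fun p hp => hp
  | succ l hl ih =>
    intro p hp
    exact bfStepR_sub Γ Δ hΓ _ _ _ (bfStepL_sub Γ Δ hΔ _ _ _ (ih p hp))

lemma bfSeq_dom (n : ℕ) : ∃ p ∈ (bfSeq Γ Δ hΓ hΔ (n+1)).1, p.1 = n := by
  show ∃ p ∈ (bfStepR Γ Δ hΓ (bfStepL Γ Δ hΔ (bfSeq Γ Δ hΓ hΔ n) n) n).1, p.1 = n
  have h1 : ∃ p ∈ (bfStepL Γ Δ hΔ (bfSeq Γ Δ hΓ hΔ n) n).1, p.1 = n := by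
    unfold bfStepL
    split
    · exact ⟨_, List.mem_cons_self, rfl⟩
    · next h =>
      push_neg at h
      obtain ⟨p, hp, hpn⟩ := h
      exact ⟨p, hp, hpn⟩
  obtain ⟨p, hp, hpn⟩ := h1
  exact ⟨p, bfStepR_sub Γ Δ hΓ _ _ _ hp, hpn⟩

lemma bfSeq_ran (n : ℕ) : ∃ p ∈ (bfSeq Γ Δ hΓ hΔ (n+1)).1, p.2 = n := by
  show ∃ p ∈ (bfStepR Γ Δ hΓ (bfStepL Γ Δ hΔ (bfSeq Γ Δ hΓ hΔ n) n) n).1, p.2 = n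
  unfold bfStepR
  split
  · exact ⟨_, List.mem_cons_self, rfl⟩
  · next h =>
    push_neg at h
    obtain ⟨p, hp, hpn⟩ := h
    exact ⟨p, hp, hpn⟩

theorem iso_of_EP (hΓ : EP Γ) (hΔ : EP Δ) : Nonempty (Γ ≃g Δ) := by
  have hex : ∀ n : ℕ, ∃ v, ∃ k, (n, v) ∈ (bfSeq Γ Δ hΓ hΔ k).1 := by
    intro n
    obtain ⟨⟨p1, p2⟩, hp, hpn⟩ := bfSeq_dom Γ Δ hΓ hΔ n
    subst hpn
    exact ⟨p2, p1+1, hp⟩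
  let f : ℕ → ℕ := fun n => (hex n).choose
  have hf : ∀ n, ∃ k, (n, f n) ∈ (bfSeq Γ Δ hΓ hΔ k).1 := fun n => (hex n).choose_spec
  -- common stage
  have hpair : ∀ a b : ℕ, ∃ k, (a, f a) ∈ (bfSeq Γ Δ hΓ hΔ k).1 ∧
      (b, f b) ∈ (bfSeq Γ Δ hΓ hΔ k).1 := by
    intro a b
    obtain ⟨k1, h1⟩ := hf a
    obtain ⟨k2, h2⟩ := hf b
    exact ⟨max k1 k2, bfSeq_mono Γ Δ hΓ hΔ (le_max_left _ _) _ h1,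
      bfSeq_mono Γ Δ hΓ hΔ (le_max_right _ _) _ h2⟩
  have hinj : Function.Injective f := by
    intro a b hab
    obtain ⟨k, h1, h2⟩ := hpair a b
    exact ((bfSeq Γ Δ hΓ hΔ k).2 _ h1 _ h2).1.2 hab
  have hsurj : Function.Surjective f := by
    intro m
    obtain ⟨p, hp, hpm⟩ := bfSeq_ran Γ Δ hΓ hΔ m
    refine ⟨p.1, ?_⟩
    obtain ⟨k, h1⟩ := hf p.1
    obtain ⟨k2, h2, h3⟩ : ∃ k2, (p.1, f p.1) ∈ (bfSeq Γ Δ hΓ hΔ k2).1 ∧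
        p ∈ (bfSeq Γ Δ hΓ hΔ k2).1 :=
      ⟨max k (m+1), bfSeq_mono Γ Δ hΓ hΔ (le_max_left _ _) _ h1,
        bfSeq_mono Γ Δ hΓ hΔ (le_max_right _ _) _ hp⟩
    have := ((bfSeq Γ Δ hΓ hΔ k2).2 _ h2 p h3).1.1 rfl
    exact this.trans hpm
  have hadj : ∀ a b : ℕ, Γ.Adj a b ↔ Δ.Adj (f a) (f b) := by
    intro a b
    obtain ⟨k, h1, h2⟩ := hpair a b
    exact ((bfSeq Γ Δ hΓ hΔ k).2 _ h1 _ h2).2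
  exact ⟨⟨Equiv.ofBijective f ⟨hinj, hsurj⟩, fun {a b} => (hadj a b).symm⟩⟩

end BackForth

section Main

variable {B : Type*} (V : B → Type*) (F : ∀ b, SimpleGraph (V b))

/-- The state of the recursive construction. -/
structure St where
  L : ∀ b, List (V b × ℕ)
  P : List (ℕ × ℕ)
  bd : ℕ

variable {V}

/-- The invariant maintained through the construction. -/
structure CInv (s : St V) : Prop where
  i0L : ∀ b, ∀ p ∈ s.L b, p.2 < s.bd
  i0P : ∀ e ∈ s.P, e.1 < s.bd ∧ e.2 < s.bd
  i1 : ∀ b, ∀ p ∈ s.L b, ∀ q ∈ s.L b, (p.1 = q.1 ↔ p.2 = q.2)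
  i2 : ∀ b, ∀ p ∈ s.L b, ∀ q ∈ s.L b, (F b).Adj p.1 q.1 → Rado.Adj p.2 q.2
  i3 : ∀ b b', b ≠ b' → ∀ p ∈ s.L b, ∀ q ∈ s.L b, ∀ p' ∈ s.L b', ∀ q' ∈ s.L b',
        (F b).Adj p.1 q.1 → (F b').Adj p'.1 q'.1 → ¬(p.2 = p'.2 ∧ q.2 = q'.2)
  i4 : ∀ e ∈ s.P, ∀ b, ∀ p ∈ s.L b, ∀ q ∈ s.L b,
        (F b).Adj p.1 q.1 → ¬(p.2 = e.1 ∧ q.2 = e.2)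
  i5 : ∀ e ∈ s.P, Rado.Adj e.1 e.2

lemma dom_finite {α : Type*} (l : List (α × ℕ)) : {y : α | ∃ p ∈ l, p.1 = y}.Finite := by
  apply Set.Finite.subset (l.map Prod.fst).finite_toSet
  intro y hy
  obtain ⟨p, hp, hpy⟩ := hy
  simp only [List.coe_toFinset, Set.mem_setOf_eq, List.mem_map]
  exact ⟨p, hp, hpy⟩

variable [DecidableEq B] [∀ b, DecidableEq (V b)] [∀ b, DecidableRel fun x y => (F b).Adj x y]

variable (hdom : ∀ b (D : Set (V b)), D.Finite → ∃ x, x ∉ D ∧ ∀ d ∈ D, ¬(F b).Adj x d)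

/-- The fresh image used in task 1. -/
def nbrS (s : St V) (b : B) (x : V b) : Finset ℕ :=
  (((s.L b).filter (fun p => decide ((F b).Adj x p.1))).map Prod.snd).toFinset

def wit1 (s : St V) (b : B) (x : V b) : ℕ := radoWit (nbrS F s b x) s.bd

/-- Task 1: put `x` into the domain of the `b`-th partial map. -/
def step1 (s : St V) (b : B) (x : V b) : St V :=
  if ∃ p ∈ s.L b, p.1 = x then s else
    { L := Function.update s.L b ((x, wit1 F s b x) :: s.L b), P := s.P,
      bd := wit1 F s b x + 1 }

/-- The fresh preimage used in task 2. -/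
noncomputable def wit2 (s : St V) (b : B) : V b :=
  Classical.choose (hdom b _ (dom_finite (s.L b)))

/-- Task 2: put `n` into the range of the `b`-th partial map. -/
noncomputable def step2 (s : St V) (b : B) (n : ℕ) : St V :=
  if ∃ p ∈ s.L b, p.2 = n then s else
    { L := Function.update s.L b ((wit2 F hdom s b, n) :: s.L b), P := s.P,
      bd := max s.bd (n + 1) }

/-- The fresh witness used in task 3. -/
def wit3 (s : St V) (U W : Finset ℕ) : ℕ := radoWit U (max s.bd ((U ∪ W).sup id + 1))

/-- Task 3: create a witness for the extension property of the leftover graph. -/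
noncomputable def step3 (s : St V) (U W : Finset ℕ) : St V :=
  if Disjoint U W then
    { L := s.L, P := (U.toList.map (fun u => (wit3 s U W, u))) ++ s.P, bd := wit3 s U W + 1 }
  else s

/-- The type of tasks. -/
def MTask (B : Type*) (V : B → Type*) : Type _ :=
  (Σ b : B, V b) ⊕ (B × ℕ) ⊕ (Finset ℕ × Finset ℕ)

noncomputable def mstep (s : St V) : MTask B V → St V
  | Sum.inl ⟨b, x⟩ => step1 F s b x
  | Sum.inr (Sum.inl (b, n)) => step2 F hdom s b n
  | Sum.inr (Sum.inr (U, W)) => step3 s U W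

section StepLemmas

variable {F} {s : St V} {b : B} {x : V b}

lemma nbrS_lt (hs : CInv F s) : ∀ t ∈ nbrS F s b x, t < s.bd := by
  intro t ht
  simp only [nbrS, List.mem_toFinset, List.mem_map, List.mem_filter] at ht
  obtain ⟨q, ⟨hq, _⟩, hqt⟩ := ht
  exact hqt ▸ hs.i0L b q hq

lemma nbrS_mem {q : V b × ℕ} (hq : q ∈ s.L b) (hadj : (F b).Adj x q.1) :
    q.2 ∈ nbrS F s b x := by
  simp only [nbrS, List.mem_toFinset, List.mem_map, List.mem_filter]
  exact ⟨q, ⟨hq, by simp [hadj]⟩, rfl⟩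

lemma wit1_gt (hs : CInv F s) : s.bd < wit1 F s b x :=
  (radoWit_spec (nbrS_lt hs)).1

lemma wit1_adj (hs : CInv F s) {q : V b × ℕ} (hq : q ∈ s.L b) (hadj : (F b).Adj x q.1) :
    Rado.Adj (wit1 F s b x) q.2 :=
  (radoWit_spec (nbrS_lt hs)).2.1 _ (nbrS_mem hq hadj)

lemma step1_inv (hs : CInv F s) : CInv F (step1 F s b x) := by
  unfold step1
  split_ifs with h
  · exact hs
  set m := wit1 F s b x with hm
  have hmbd : s.bd < m := wit1_gt hs
  -- freshness
  have hfresh : ∀ b'' , ∀ q ∈ s.L b'', q.2 ≠ m := by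
    intro b'' q hq
    have := hs.i0L b'' q hq
    omega
  have hfreshP : ∀ e ∈ s.P, e.1 ≠ m ∧ e.2 ≠ m := by
    intro e he
    have := hs.i0P e he
    omega
  -- membership in the updated family
  have hmem : ∀ (b'' : B) (p : V b'' × ℕ),
      p ∈ (Function.update s.L b ((x, m) :: s.L b)) b'' →
      p ∈ s.L b'' ∨ ∃ hb : b'' = b, HEq p (x, m) := by
    intro b'' p hp
    by_cases hb : b'' = b
    · subst hb
      rw [Function.update_self] at hp
      rcases List.mem_cons.1 hp with h1 | h1
      · exact Or.inr ⟨rfl, by rw [h1]⟩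
      · exact Or.inl h1
    · rw [Function.update_of_ne hb] at hp
      exact Or.inl hp
  refine CInv.mk ?i0L ?i0P ?i1 ?i2 ?i3 ?i4 ?i5
  case i0L =>
    intro b'' p hp
    rcases hmem b'' p hp with h1 | ⟨hb, hpe⟩
    · have := hs.i0L b'' p h1; simp only; omega
    · subst hb
      have : p = (x, m) := eq_of_heq hpe
      subst this
      simp only
      omega
  case i0P =>
    intro e he
    have := hs.i0P e he
    simp only; omega
  case i1 =>
    intro b'' p hp q hq
    dsimp only at hp hq
    by_cases hb : b'' = b
    · subst hb
      rw [Function.update_self] at hp hq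
      rcases List.mem_cons.1 hp with h1 | h1 <;> rcases List.mem_cons.1 hq with h2 | h2
      · rw [h1, h2]
        simp
      · rw [h1]
        simp only
        constructor
        · intro hxq; exact absurd ⟨q, h2, hxq.symm⟩ h
        · intro hmq; exact absurd hmq.symm (hfresh _ q h2)
      · rw [h2]
        simp only
        constructor
        · intro hxq; exact absurd ⟨p, h1, hxq⟩ h
        · intro hmq; exact absurd hmq (hfresh _ p h1)
      · exact hs.i1 _ p h1 q h2
    · rw [Function.update_of_ne hb] at hp hq
      exact hs.i1 b'' p hp q hq
  case i2 =>
    intro b'' p hp q hq hadj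
    dsimp only at hp hq
    by_cases hb : b'' = b
    · subst hb
      rw [Function.update_self] at hp hq
      rcases List.mem_cons.1 hp with h1 | h1 <;> rcases List.mem_cons.1 hq with h2 | h2
      · rw [h1, h2] at hadj
        exact absurd hadj (F _).irrefl
      · rw [h1] at hadj ⊢
        exact wit1_adj hs h2 hadj
      · rw [h2] at hadj ⊢
        exact (wit1_adj hs h1 hadj.symm).symm
      · exact hs.i2 _ p h1 q h2 hadj
    · rw [Function.update_of_ne hb] at hp hq
      exact hs.i2 b'' p hp q hq hadj
  case i3 =>
    intro b1 b2 hb12 p hp q hq p' hp' q' hq' hadj hadj'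
    rintro ⟨he1, he2⟩
    dsimp only at hp hq hp' hq'
    by_cases hb2 : b2 = b
    · subst hb2
      have hb1 : b1 ≠ b2 := hb12
      rw [Function.update_of_ne hb1] at hp hq
      rw [Function.update_self] at hp' hq'
      rcases List.mem_cons.1 hp' with h1 | h1
      · have : p'.2 = m := by rw [h1]
        exact hfresh b1 p hp (he1.trans this)
      · rcases List.mem_cons.1 hq' with h2 | h2
        · have : q'.2 = m := by rw [h2]
          exact hfresh b1 q hq (he2.trans this)
        · exact hs.i3 b1 b2 hb12 p hp q hq p' h1 q' h2 hadj hadj' ⟨he1, he2⟩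
    · rw [Function.update_of_ne hb2] at hp' hq'
      by_cases hb1 : b1 = b
      · subst hb1
        rw [Function.update_self] at hp hq
        rcases List.mem_cons.1 hp with h1 | h1
        · have : p.2 = m := by rw [h1]
          exact hfresh b2 p' hp' (he1.symm.trans this)
        · rcases List.mem_cons.1 hq with h2 | h2
          · have : q.2 = m := by rw [h2]
            exact hfresh b2 q' hq' (he2.symm.trans this)
          · exact hs.i3 b1 b2 hb12 p h1 q h2 p' hp' q' hq' hadj hadj' ⟨he1, he2⟩
      · rw [Function.update_of_ne hb1] at hp hq
        exact hs.i3 b1 b2 hb12 p hp q hq p' hp' q' hq' hadj hadj' ⟨he1, he2⟩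
  case i4 =>
    intro e he b'' p hp q hq hadj
    rintro ⟨he1, he2⟩
    dsimp only at hp hq he
    by_cases hb : b'' = b
    · subst hb
      rw [Function.update_self] at hp hq
      rcases List.mem_cons.1 hp with h1 | h1
      · have : p.2 = m := by rw [h1]
        exact (hfreshP e he).1 (this ▸ he1).symm
      · rcases List.mem_cons.1 hq with h2 | h2
        · have : q.2 = m := by rw [h2]
          exact (hfreshP e he).2 (this ▸ he2).symm
        · exact hs.i4 e he _ p h1 q h2 hadj ⟨he1, he2⟩
    · rw [Function.update_of_ne hb] at hp hq
      exact hs.i4 e he b'' p hp q hq hadj ⟨he1, he2⟩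
  case i5 => exact hs.i5

variable {hdom : ∀ b (D : Set (V b)), D.Finite → ∃ x, x ∉ D ∧ ∀ d ∈ D, ¬(F b).Adj x d}

lemma wit2_dom : ∀ p ∈ s.L b, p.1 ≠ wit2 F hdom s b := by
  intro p hp hne
  have hspec := Classical.choose_spec (hdom b _ (dom_finite (s.L b)))
  exact hspec.1 ⟨p, hp, hne⟩

lemma wit2_nadj : ∀ p ∈ s.L b, ¬(F b).Adj (wit2 F hdom s b) p.1 := by
  intro p hp
  have hspec := Classical.choose_spec (hdom b _ (dom_finite (s.L b)))
  exact hspec.2 p.1 ⟨p, hp, rfl⟩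

lemma step2_inv {n : ℕ} (hs : CInv F s) : CInv F (step2 F hdom s b n) := by
  unfold step2
  split_ifs with h
  · exact hs
  set x := wit2 F hdom s b with hxdef
  have hnadj : ∀ q ∈ s.L b, ¬(F b).Adj x q.1 := wit2_nadj
  have hdomx : ∀ q ∈ s.L b, q.1 ≠ x := wit2_dom
  refine CInv.mk ?i0L ?i0P ?i1 ?i2 ?i3 ?i4 ?i5
  case i0L =>
    intro b'' p hp
    dsimp only at hp ⊢
    by_cases hb : b'' = b
    · subst hb
      rw [Function.update_self] at hp
      rcases List.mem_cons.1 hp with h1 | h1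
      · rw [h1]; simp only; omega
      · have := hs.i0L _ p h1; omega
    · rw [Function.update_of_ne hb] at hp
      have := hs.i0L b'' p hp; omega
  case i0P =>
    intro e he
    dsimp only at he ⊢
    have := hs.i0P e he; omega
  case i1 =>
    intro b'' p hp q hq
    dsimp only at hp hq
    by_cases hb : b'' = b
    · subst hb
      rw [Function.update_self] at hp hq
      rcases List.mem_cons.1 hp with h1 | h1 <;> rcases List.mem_cons.1 hq with h2 | h2
      · rw [h1, h2]; simp
      · rw [h1]
        simp only
        constructor
        · intro hxq; exact absurd hxq.symm (hdomx q h2)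
        · intro hnq; exact absurd ⟨q, h2, hnq.symm⟩ h
      · rw [h2]
        simp only
        constructor
        · intro hxq; exact absurd hxq (hdomx p h1)
        · intro hnq; exact absurd ⟨p, h1, hnq⟩ h
      · exact hs.i1 _ p h1 q h2
    · rw [Function.update_of_ne hb] at hp hq
      exact hs.i1 b'' p hp q hq
  case i2 =>
    intro b'' p hp q hq hadj
    dsimp only at hp hq
    by_cases hb : b'' = b
    · subst hb
      rw [Function.update_self] at hp hq
      rcases List.mem_cons.1 hp with h1 | h1 <;> rcases List.mem_cons.1 hq with h2 | h2
      · rw [h1, h2] at hadj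
        exact absurd hadj (F _).irrefl
      · rw [h1] at hadj
        exact absurd hadj (hnadj q h2)
      · rw [h2] at hadj
        exact absurd hadj.symm (hnadj p h1)
      · exact hs.i2 _ p h1 q h2 hadj
    · rw [Function.update_of_ne hb] at hp hq
      exact hs.i2 b'' p hp q hq hadj
  case i3 =>
    intro b1 b2 hb12 p hp q hq p' hp' q' hq' hadj hadj'
    dsimp only at hp hq hp' hq'
    by_cases hb2 : b2 = b
    · subst hb2
      have hb1 : b1 ≠ b2 := hb12
      rw [Function.update_of_ne hb1] at hp hq
      rw [Function.update_self] at hp' hq'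
      rcases List.mem_cons.1 hp' with h1 | h1 <;> rcases List.mem_cons.1 hq' with h2 | h2
      · rw [h1, h2] at hadj'
        exact absurd hadj' (F _).irrefl
      · rw [h1] at hadj'
        exact absurd hadj' (hnadj q' h2)
      · rw [h2] at hadj'
        exact absurd hadj'.symm (hnadj p' h1)
      · exact hs.i3 b1 b2 hb12 p hp q hq p' h1 q' h2 hadj hadj'
    · rw [Function.update_of_ne hb2] at hp' hq'
      by_cases hb1 : b1 = b
      · subst hb1
        rw [Function.update_self] at hp hq
        rcases List.mem_cons.1 hp with h1 | h1 <;> rcases List.mem_cons.1 hq with h2 | h2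
        · rw [h1, h2] at hadj
          exact absurd hadj (F _).irrefl
        · rw [h1] at hadj
          exact absurd hadj (hnadj q h2)
        · rw [h2] at hadj
          exact absurd hadj.symm (hnadj p h1)
        · exact hs.i3 b1 b2 hb12 p h1 q h2 p' hp' q' hq' hadj hadj'
      · rw [Function.update_of_ne hb1] at hp hq
        exact hs.i3 b1 b2 hb12 p hp q hq p' hp' q' hq' hadj hadj'
  case i4 =>
    intro e he b'' p hp q hq hadj
    dsimp only at hp hq he
    by_cases hb : b'' = b
    · subst hb
      rw [Function.update_self] at hp hq
      rcases List.mem_cons.1 hp with h1 | h1 <;> rcases List.mem_cons.1 hq with h2 | h2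
      · rw [h1, h2] at hadj
        exact absurd hadj (F _).irrefl
      · rw [h1] at hadj
        exact absurd hadj (hnadj q h2)
      · rw [h2] at hadj
        exact absurd hadj.symm (hnadj p h1)
      · exact hs.i4 e he _ p h1 q h2 hadj
    · rw [Function.update_of_ne hb] at hp hq
      exact hs.i4 e he b'' p hp q hq hadj
  case i5 => exact hs.i5

lemma wit3_facts {U W : Finset ℕ} :
    s.bd < wit3 s U W ∧ (∀ u ∈ U, u < wit3 s U W ∧ Rado.Adj (wit3 s U W) u) ∧
      (∀ w ∈ W, w < wit3 s U W ∧ (w ∉ U → ¬Rado.Adj (wit3 s U W) w)) := by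
  unfold wit3
  set N := max s.bd ((U ∪ W).sup id + 1) with hN
  have hmem : ∀ t ∈ U ∪ W, t < N := by
    intro t ht
    have := Finset.le_sup (f := id) ht
    simp only [id] at this
    omega
  obtain ⟨hgt, hadj, hnadj⟩ := radoWit_spec (S := U) (N := N)
    (fun t ht => hmem t (Finset.mem_union_left _ ht))
  refine ⟨by omega, ?_, ?_⟩
  · intro u hu
    have := hmem u (Finset.mem_union_left _ hu)
    exact ⟨by omega, hadj u hu⟩
  · intro w hw
    have := hmem w (Finset.mem_union_right _ hw)
    exact ⟨by omega, fun hwU => hnadj w (by omega) hwU⟩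

lemma step3_inv {U W : Finset ℕ} (hs : CInv F s) : CInv F (step3 (V := V) s U W) := by
  unfold step3
  split_ifs with h
  swap
  · exact hs
  obtain ⟨hgt, hU, hW⟩ := wit3_facts (s := s) (U := U) (W := W)
  set v := wit3 s U W with hv
  have hPmem : ∀ e : ℕ × ℕ, e ∈ (U.toList.map (fun u => (v, u))) ++ s.P →
      (∃ u ∈ U, e = (v, u)) ∨ e ∈ s.P := by
    intro e he
    rcases List.mem_append.1 he with h1 | h1
    · obtain ⟨u, hu, hue⟩ := List.mem_map.1 h1
      exact Or.inl ⟨u, Finset.mem_toList.1 hu, hue.symm⟩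
    · exact Or.inr h1
  refine CInv.mk ?i0L ?i0P ?i1 ?i2 ?i3 ?i4 ?i5
  case i0L =>
    intro b'' p hp
    dsimp only at hp ⊢
    have := hs.i0L b'' p hp; omega
  case i0P =>
    intro e he
    dsimp only at he ⊢
    rcases hPmem e he with ⟨u, hu, rfl⟩ | h1
    · have := (hU u hu).1
      simp only
      omega
    · have := hs.i0P e h1; omega
  case i1 =>
    intro b'' p hp q hq
    exact hs.i1 b'' p hp q hq
  case i2 =>
    intro b'' p hp q hq hadj
    exact hs.i2 b'' p hp q hq hadj
  case i3 =>
    intro b1 b2 hb12 p hp q hq p' hp' q' hq' hadj hadj'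
    exact hs.i3 b1 b2 hb12 p hp q hq p' hp' q' hq' hadj hadj'
  case i4 =>
    intro e he b'' p hp q hq hadj hee
    dsimp only at he hp hq
    rcases hPmem e he with ⟨u, hu, rfl⟩ | h1
    · have := hs.i0L b'' p hp
      have : p.2 ≠ v := by omega
      exact this (by exact hee.1)
    · exact hs.i4 e h1 b'' p hp q hq hadj hee
  case i5 =>
    intro e he
    dsimp only at he
    rcases hPmem e he with ⟨u, hu, rfl⟩ | h1
    · exact (hU u hu).2
    · exact hs.i5 e h1

lemma step1_L_sub {b'' : B} {p : V b'' × ℕ} (hp : p ∈ s.L b'') :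
    p ∈ (step1 F s b x).L b'' := by
  unfold step1
  split_ifs with h
  · exact hp
  dsimp only
  by_cases hb : b'' = b
  · subst hb
    rw [Function.update_self]
    exact List.mem_cons_of_mem _ hp
  · rw [Function.update_of_ne hb]
    exact hp

lemma step2_L_sub {n : ℕ} {b'' : B} {p : V b'' × ℕ} (hp : p ∈ s.L b'') :
    p ∈ (step2 F hdom s b n).L b'' := by
  unfold step2
  split_ifs with h
  · exact hp
  dsimp only
  by_cases hb : b'' = b
  · subst hb
    rw [Function.update_self]
    exact List.mem_cons_of_mem _ hp
  · rw [Function.update_of_ne hb]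
    exact hp

lemma step3_L_sub {U W : Finset ℕ} {b'' : B} {p : V b'' × ℕ} (hp : p ∈ s.L b'') :
    p ∈ (step3 (V := V) s U W).L b'' := by
  unfold step3
  split_ifs with h <;> exact hp

lemma step1_P_sub {e : ℕ × ℕ} (he : e ∈ s.P) : e ∈ (step1 F s b x).P := by
  unfold step1
  split_ifs with h <;> exact he

lemma step2_P_sub {n : ℕ} {e : ℕ × ℕ} (he : e ∈ s.P) : e ∈ (step2 F hdom s b n).P := by
  unfold step2
  split_ifs with h <;> exact he

lemma step3_P_sub {U W : Finset ℕ} {e : ℕ × ℕ} (he : e ∈ s.P) :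
    e ∈ (step3 (V := V) s U W).P := by
  unfold step3
  split_ifs with h
  · exact List.mem_append_right _ he
  · exact he

lemma step1_dom : ∃ p ∈ (step1 F s b x).L b, p.1 = x := by
  unfold step1
  split_ifs with h
  · exact h
  · dsimp only
    rw [Function.update_self]
    exact ⟨(x, wit1 F s b x), List.mem_cons_self, rfl⟩

lemma step2_ran {n : ℕ} : ∃ p ∈ (step2 F hdom s b n).L b, p.2 = n := by
  unfold step2
  split_ifs with h
  · exact h
  · dsimp only
    rw [Function.update_self]
    exact ⟨(wit2 F hdom s b, n), List.mem_cons_self, rfl⟩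

lemma step3_wit {U W : Finset ℕ} (hUW : Disjoint U W) :
    ∃ v, v ∉ U ∧ v ∉ W ∧ (∀ u ∈ U, Rado.Adj v u ∧ (v, u) ∈ (step3 (V := V) s U W).P) ∧
      ∀ w ∈ W, ¬Rado.Adj v w := by
  obtain ⟨hgt, hU, hW⟩ := wit3_facts (s := s) (U := U) (W := W)
  refine ⟨wit3 s U W, fun hv => by have := (hU _ hv).1; omega,
    fun hv => by have := (hW _ hv).1; omega, ?_, ?_⟩
  · intro u hu
    refine ⟨(hU u hu).2, ?_⟩
    unfold step3
    rw [if_pos hUW]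
    dsimp only
    refine List.mem_append_left _ ?_
    exact List.mem_map.2 ⟨u, Finset.mem_toList.2 hu, rfl⟩
  · intro w hw
    exact (hW w hw).2 (Finset.disjoint_right.1 hUW hw)

end StepLemmas

section Sequence

variable [DecidableEq B] [∀ b, DecidableEq (V b)] [∀ b, DecidableRel fun x y => (F b).Adj x y]
variable (hdom : ∀ b (D : Set (V b)), D.Finite → ∃ x, x ∉ D ∧ ∀ d ∈ D, ¬(F b).Adj x d)
variable (g : ℕ → MTask B V)

noncomputable def mseq : ℕ → St V
  | 0 => ⟨fun _ => [], [], 0⟩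
  | (k+1) => mstep F hdom (mseq k) (g k)

lemma mseq_inv (k : ℕ) : CInv F (mseq F hdom g k) := by
  induction k with
  | zero =>
    refine CInv.mk ?_ ?_ ?_ ?_ ?_ ?_ ?_ <;> (intros; exfalso; simp_all [mseq])
  | succ k ih =>
    show CInv F (mstep F hdom (mseq F hdom g k) (g k))
    rcases g k with ⟨b, x⟩ | ⟨b, n⟩ | ⟨U, W⟩
    · exact step1_inv ih
    · exact step2_inv ih
    · exact step3_inv ih

lemma mseq_L_sub (k : ℕ) {b : B} {p : V b × ℕ} (hp : p ∈ (mseq F hdom g k).L b) :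
    p ∈ (mseq F hdom g (k+1)).L b := by
  show p ∈ (mstep F hdom (mseq F hdom g k) (g k)).L b
  rcases g k with ⟨b', x⟩ | ⟨b', n⟩ | ⟨U, W⟩
  · exact step1_L_sub hp
  · exact step2_L_sub hp
  · exact step3_L_sub hp

lemma mseq_P_sub (k : ℕ) {e : ℕ × ℕ} (he : e ∈ (mseq F hdom g k).P) :
    e ∈ (mseq F hdom g (k+1)).P := by
  show e ∈ (mstep F hdom (mseq F hdom g k) (g k)).P
  rcases g k with ⟨b', x⟩ | ⟨b', n⟩ | ⟨U, W⟩
  · exact step1_P_sub he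
  · exact step2_P_sub he
  · exact step3_P_sub he

lemma mseq_L_mono {k l : ℕ} (hkl : k ≤ l) {b : B} {p : V b × ℕ}
    (hp : p ∈ (mseq F hdom g k).L b) : p ∈ (mseq F hdom g l).L b := by
  induction l, hkl using Nat.le_induction with
  | base => exact hp
  | succ l hl ih => exact mseq_L_sub F hdom g l ih

lemma mseq_P_mono {k l : ℕ} (hkl : k ≤ l) {e : ℕ × ℕ}
    (he : e ∈ (mseq F hdom g k).P) : e ∈ (mseq F hdom g l).P := by
  induction l, hkl using Nat.le_induction with
  | base => exact he
  | succ l hl ih => exact mseq_P_sub F hdom g l ih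

end Sequence

theorem mmaster [DecidableEq B] [∀ b, DecidableEq (V b)]
    [∀ b, DecidableRel fun x y => (F b).Adj x y]
    (hdom : ∀ b (D : Set (V b)), D.Finite → ∃ x, x ∉ D ∧ ∀ d ∈ D, ¬(F b).Adj x d)
    (hg : ∃ g : ℕ → MTask B V, Function.Surjective g) :
    ∃ Φ : ∀ b, V b → ℕ,
      (∀ b, Function.Bijective (Φ b)) ∧
      (∀ b, ∀ x y, (F b).Adj x y → Rado.Adj (Φ b x) (Φ b y)) ∧
      (∀ b b', b ≠ b' → ∀ x y x' y', (F b).Adj x y → (F b').Adj x' y' →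
        ¬(Φ b x = Φ b' x' ∧ Φ b y = Φ b' y')) ∧
      (∀ U W : Finset ℕ, Disjoint U W → ∃ v, v ∉ U ∧ v ∉ W ∧
        (∀ u ∈ U, Rado.Adj v u ∧ ∀ b, ∀ x y, (F b).Adj x y → ¬(Φ b x = v ∧ Φ b y = u)) ∧
        (∀ w ∈ W, ¬Rado.Adj v w)) := by
  obtain ⟨g, hgsurj⟩ := hg
  have hex : ∀ b (x : V b), ∃ m, ∃ k, (x, m) ∈ (mseq F hdom g k).L b := by
    intro b x
    obtain ⟨k, hk⟩ := hgsurj (Sum.inl ⟨b, x⟩)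
    have : ∃ p ∈ (mseq F hdom g (k+1)).L b, p.1 = x := by
      show ∃ p ∈ (mstep F hdom (mseq F hdom g k) (g k)).L b, p.1 = x
      rw [hk]
      exact step1_dom
    obtain ⟨⟨x', m⟩, hp, hx⟩ := this
    dsimp only at hx
    subst hx
    exact ⟨m, k+1, hp⟩
  set Φ : ∀ b, V b → ℕ := fun b x => (hex b x).choose with hΦdef
  have hΦ : ∀ b (x : V b), ∃ k, (x, Φ b x) ∈ (mseq F hdom g k).L b :=
    fun b x => (hex b x).choose_spec
  have hinj : ∀ b, Function.Injective (Φ b) := by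
    intro b x y hxy
    obtain ⟨k1, h1⟩ := hΦ b x
    obtain ⟨k2, h2⟩ := hΦ b y
    have h1' := mseq_L_mono F hdom g (le_max_left k1 k2) h1
    have h2' := mseq_L_mono F hdom g (le_max_right k1 k2) h2
    exact ((mseq_inv F hdom g (max k1 k2)).i1 b _ h1' _ h2').2 hxy
  have hsurj : ∀ b, Function.Surjective (Φ b) := by
    intro b n
    obtain ⟨k, hk⟩ := hgsurj (Sum.inr (Sum.inl (b, n)))
    have : ∃ p ∈ (mseq F hdom g (k+1)).L b, p.2 = n := by
      show ∃ p ∈ (mstep F hdom (mseq F hdom g k) (g k)).L b, p.2 = n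
      rw [hk]
      exact step2_ran
    obtain ⟨p, hp, hpn⟩ := this
    refine ⟨p.1, ?_⟩
    obtain ⟨k1, h1⟩ := hΦ b p.1
    have h1' := mseq_L_mono F hdom g (le_max_left k1 (k+1)) h1
    have h2' := mseq_L_mono F hdom g (le_max_right k1 (k+1)) hp
    have := ((mseq_inv F hdom g (max k1 (k+1))).i1 b _ h1' p h2').1 rfl
    exact this.trans hpn
  refine ⟨Φ, fun b => ⟨hinj b, hsurj b⟩, ?_, ?_, ?_⟩
  · intro b x y hadj
    obtain ⟨k1, h1⟩ := hΦ b x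
    obtain ⟨k2, h2⟩ := hΦ b y
    have h1' := mseq_L_mono F hdom g (le_max_left k1 k2) h1
    have h2' := mseq_L_mono F hdom g (le_max_right k1 k2) h2
    exact (mseq_inv F hdom g (max k1 k2)).i2 b _ h1' _ h2' hadj
  · intro b b' hbb' x y x' y' hadj hadj'
    obtain ⟨k1, h1⟩ := hΦ b x
    obtain ⟨k2, h2⟩ := hΦ b y
    obtain ⟨k3, h3⟩ := hΦ b' x'
    obtain ⟨k4, h4⟩ := hΦ b' y'
    have h1' := mseq_L_mono F hdom g
      (le_sup_of_le_left (le_sup_left : k1 ≤ k1 ⊔ k2) : k1 ≤ (k1 ⊔ k2) ⊔ (k3 ⊔ k4)) h1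
    have h2' := mseq_L_mono F hdom g
      (le_sup_of_le_left (le_sup_right : k2 ≤ k1 ⊔ k2) : k2 ≤ (k1 ⊔ k2) ⊔ (k3 ⊔ k4)) h2
    have h3' := mseq_L_mono F hdom g
      (le_sup_of_le_right (le_sup_left : k3 ≤ k3 ⊔ k4) : k3 ≤ (k1 ⊔ k2) ⊔ (k3 ⊔ k4)) h3
    have h4' := mseq_L_mono F hdom g
      (le_sup_of_le_right (le_sup_right : k4 ≤ k3 ⊔ k4) : k4 ≤ (k1 ⊔ k2) ⊔ (k3 ⊔ k4)) h4
    exact (mseq_inv F hdom g ((k1 ⊔ k2) ⊔ (k3 ⊔ k4))).i3 b b' hbb' _ h1' _ h2' _ h3' _ h4'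
      hadj hadj'
  · intro U W hUW
    obtain ⟨k, hk⟩ := hgsurj (Sum.inr (Sum.inr (U, W)))
    have hstep : ∃ v, v ∉ U ∧ v ∉ W ∧
        (∀ u ∈ U, Rado.Adj v u ∧ (v, u) ∈ (mseq F hdom g (k+1)).P) ∧
        ∀ w ∈ W, ¬Rado.Adj v w := by
      show ∃ v, v ∉ U ∧ v ∉ W ∧
        (∀ u ∈ U, Rado.Adj v u ∧ (v, u) ∈ (mstep F hdom (mseq F hdom g k) (g k)).P) ∧
        ∀ w ∈ W, ¬Rado.Adj v w
      rw [hk]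
      exact step3_wit hUW
    obtain ⟨v, hvU, hvW, hU, hW⟩ := hstep
    refine ⟨v, hvU, hvW, ?_, hW⟩
    intro u hu
    refine ⟨(hU u hu).1, ?_⟩
    intro b x y hadj
    rintro ⟨hx, hy⟩
    obtain ⟨k1, h1⟩ := hΦ b x
    obtain ⟨k2, h2⟩ := hΦ b y
    have h1' := mseq_L_mono F hdom g
      (le_sup_of_le_left (le_sup_left : k1 ≤ k1 ⊔ k2) : k1 ≤ (k1 ⊔ k2) ⊔ (k+1)) h1
    have h2' := mseq_L_mono F hdom g
      (le_sup_of_le_left (le_sup_right : k2 ≤ k1 ⊔ k2) : k2 ≤ (k1 ⊔ k2) ⊔ (k+1)) h2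
    have hP := mseq_P_mono F hdom g (le_sup_right : k+1 ≤ (k1 ⊔ k2) ⊔ (k+1)) (hU u hu).2
    exact (mseq_inv F hdom g ((k1 ⊔ k2) ⊔ (k+1))).i4 (v, u) hP b _ h1' _ h2' hadj ⟨hx, hy⟩

end Main

/-- if `𝓕` is a finite family of countable graphs such that at least
one member is isomorphic to the Rado graph and every member has infinite
domination number, then `FP(𝓕, R)` has a solution. -/
theorem stmt_6 {A : Type*} [Finite A] (V : A → Type*) [∀ a, Countable (V a)]
    (F : ∀ a, SimpleGraph (V a))
    (h1 : ∃ a, Nonempty (F a ≃g Rado))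
    (h2 : ∀ a (D : Set (V a)), IsDominatingSet (F a) D → D.Infinite) :
    ∃ G : A → SimpleGraph ℕ, IsFactorization Rado G ∧ ∀ a, Nonempty (F a ≃g G a) := by
  classical
  obtain ⟨a₀, ⟨iso₀⟩⟩ := h1
  set Bt := {a : A // a ≠ a₀} with hBt
  set Vb : Bt → Type _ := fun b => V b.1 with hVb
  set Fb : ∀ b : Bt, SimpleGraph (Vb b) := fun b => F b.1 with hFb
  have hdom : ∀ b (D : Set (Vb b)), D.Finite → ∃ x, x ∉ D ∧ ∀ d ∈ D, ¬(Fb b).Adj x d := by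
    intro b D hfin
    by_contra h
    push_neg at h
    have hdomset : IsDominatingSet (Fb b) D := by
      intro v hv
      obtain ⟨d, hd, hadj⟩ := h v hv
      exact ⟨d, hd, hadj⟩
    exact hfin.not_infinite (h2 b.1 D hdomset)
  haveI : Countable Bt := Subtype.countable
  haveI : ∀ b : Bt, Countable (Vb b) := fun b => inferInstanceAs (Countable (V b.1))
  have hg : ∃ g : ℕ → MTask Bt Vb, Function.Surjective g := by
    haveI : Countable (MTask Bt Vb) := by
      unfold MTask
      infer_instance
    haveI : Nonempty (MTask Bt Vb) := ⟨Sum.inr (Sum.inr (∅, ∅))⟩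
    exact exists_surjective_nat _
  obtain ⟨Φ, hbij, hedge, hdisj, hEPd⟩ := mmaster Fb hdom hg
  -- the factors indexed by Bt
  set Gb : Bt → SimpleGraph ℕ := fun b =>
    { Adj := fun m n => ∃ x y, (Fb b).Adj x y ∧ Φ b x = m ∧ Φ b y = n
      symm := by
        constructor
        rintro m n ⟨x, y, hadj, hx, hy⟩
        exact ⟨y, x, hadj.symm, hy, hx⟩
      loopless := by
        constructor
        rintro m ⟨x, y, hadj, hx, hy⟩
        have : x = y := (hbij b).1 (hx.trans hy.symm)
        exact (Fb b).irrefl (this ▸ hadj) } with hGb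
  -- the leftover factor
  set L0 : SimpleGraph ℕ :=
    { Adj := fun m n => Rado.Adj m n ∧ ∀ b, ¬(Gb b).Adj m n
      symm := by
        constructor
        rintro m n ⟨hR, hG⟩
        exact ⟨hR.symm, fun b hb => hG b hb.symm⟩
      loopless := ⟨fun m h => Rado.irrefl h.1⟩ } with hL0
  have hEPL0 : EP L0 := by
    intro U W hUW
    obtain ⟨v, hvU, hvW, hU, hW⟩ := hEPd U W hUW
    refine ⟨v, hvU, hvW, ?_, ?_⟩
    · intro u hu
      refine ⟨(hU u hu).1, ?_⟩
      rintro b ⟨x, y, hadj, hx, hy⟩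
      exact (hU u hu).2 b x y hadj ⟨hx, hy⟩
    · intro w hw hL
      exact hW w hw hL.1
  obtain ⟨isoRL⟩ := iso_of_EP Rado L0 EP_Rado hEPL0
  set G : A → SimpleGraph ℕ := fun a => if h : a = a₀ then L0 else Gb ⟨a, h⟩ with hG
  have hGa₀ : G a₀ = L0 := dif_pos rfl
  have hGa : ∀ b : Bt, G b.1 = Gb b := by
    intro b
    have : G b.1 = Gb ⟨b.1, b.2⟩ := dif_neg b.2
    rwa [Subtype.coe_eta] at this
  refine ⟨G, ⟨?_, ?_⟩, ?_⟩
  · -- each factor is a subgraph of Rado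
    intro a m n hmn
    by_cases h : a = a₀
    · subst h
      rw [hGa₀] at hmn
      exact hmn.1
    · have := hGa ⟨a, h⟩
      rw [this] at hmn
      obtain ⟨x, y, hadj, hx, hy⟩ := hmn
      rw [← hx, ← hy]
      exact hedge _ x y hadj
  · -- the edge sets partition the edges of Rado
    intro e he
    induction e using Sym2.ind with
    | _ m n =>
    rw [SimpleGraph.mem_edgeSet] at he
    by_cases hb : ∃ b : Bt, (Gb b).Adj m n
    · obtain ⟨b, hGbadj⟩ := hb
      refine ⟨b.1, ?_, ?_⟩
      · show s(m, n) ∈ (G b.1).edgeSet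
        rw [SimpleGraph.mem_edgeSet, hGa b]
        exact hGbadj
      · intro a' ha'
        rw [SimpleGraph.mem_edgeSet] at ha'
        by_cases h' : a' = a₀
        · subst h'
          rw [hGa₀] at ha'
          exact absurd hGbadj (ha'.2 b)
        · rw [hGa ⟨a', h'⟩] at ha'
          by_contra hne
          have hbne : (⟨a', h'⟩ : Bt) ≠ b := fun hh => hne (congrArg Subtype.val hh)
          obtain ⟨x', y', hadj', hx', hy'⟩ := ha'
          obtain ⟨x, y, hadj, hx, hy⟩ := hGbadj
          exact hdisj ⟨a', h'⟩ b hbne x' y' x y hadj' hadj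
            ⟨hx'.trans hx.symm, hy'.trans hy.symm⟩
    · refine ⟨a₀, ?_, ?_⟩
      · show s(m, n) ∈ (G a₀).edgeSet
        rw [SimpleGraph.mem_edgeSet, hGa₀]
        exact ⟨he, fun b hGbadj => hb ⟨b, hGbadj⟩⟩
      · intro a' ha'
        rw [SimpleGraph.mem_edgeSet] at ha'
        by_contra h'
        rw [hGa ⟨a', h'⟩] at ha'
        exact hb ⟨⟨a', h'⟩, ha'⟩
  · -- each factor is isomorphic to the corresponding member of the family
    intro a
    by_cases h : a = a₀
    · subst h
      rw [hGa₀]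
      exact ⟨iso₀.trans isoRL⟩
    · rw [show G a = Gb ⟨a, h⟩ from hGa ⟨a, h⟩]
      refine ⟨⟨Equiv.ofBijective (Φ ⟨a, h⟩) (hbij ⟨a, h⟩), ?_⟩⟩
      intro x y
      simp only [Equiv.ofBijective_apply]
      constructor
      · rintro ⟨x', y', hadj, hx, hy⟩
        have hxx : x' = x := (hbij ⟨a, h⟩).1 hx
        have hyy : y' = y := (hbij ⟨a, h⟩).1 hy
        exact hxx ▸ hyy ▸ hadj
      · intro hadj
        exact ⟨x, y, hadj, rfl, rfl⟩
end
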